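/- arXiv:2202.06718 — 8 statements merged into one kernel-verified Lean document; each statement's English description precedes it below -/
import Mathlib

section
/- Let a, b > 0 and define c_{a,b} := (a+b)/(a+1) and, for x ∈ [0,1), Q_{a,b}^{[S,1]}(x) := (1−x)^b (1 + c_{a,b} x/(1−x)). Then for all x ∈ [0,1): if b ≤ 1 then Q_{a,b}(x) ≤ Q_{a,b}^{[S,1]}(x), and if b ≥ 1 then Q_{a,b}(x) ≥ Q_{a,b}^{[S,1]}(x). -/
open MeasureTheory

/-- The auxiliary function `Q_{a,b}(x) = a ∫₀¹ y^(a-1) (1-xy)^(b-1) dy`. -/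
noncomputable def Q (a b x : ℝ) : ℝ :=
  a * ∫ y in (0:ℝ)..1, y ^ (a - 1) * (1 - x * y) ^ (b - 1)

/-- Pointwise bound for `b ≤ 1`. -/
lemma pt_le_aux (b s z : ℝ) (hb : 0 < b) (hb1 : b ≤ 1) (hs : 0 < s)
    (hsz : s ≤ z) (hz : z ≤ 1) :
    z ^ (b - 1) ≤ s ^ (b - 1) * (1 + (b - 1) * (z - s)) := by
  have hz0 : 0 < z := lt_of_lt_of_le hs hsz
  set c : ℝ := 1 - b with hc
  have hc0 : 0 ≤ c := by simp [hc]; linarith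
  have key : (s / z) ^ c ≤ 1 - c * (z - s) := by
    have amgm := Real.geom_mean_le_arith_mean2_weighted hc0 hb.le
      (div_nonneg hs.le hz0.le) (zero_le_one) (by ring)
    rw [Real.one_rpow, mul_one] at amgm
    have h2 : s / z ≤ 1 + s - z := by
      rw [div_le_iff₀ hz0]
      nlinarith
    nlinarith [mul_le_mul_of_nonneg_left h2 hc0]
  have hsc : (0:ℝ) < s ^ c := Real.rpow_pos_of_pos hs c
  have e1 : (s / z) ^ c = s ^ c * (z ^ c)⁻¹ := by
    rw [Real.div_rpow hs.le hz0.le, div_eq_mul_inv]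
  have e2 : z ^ (b - 1) = (z ^ c)⁻¹ := by
    rw [show b - 1 = -c by rw [hc]; ring, Real.rpow_neg hz0.le]
  have e3 : s ^ (b - 1) = (s ^ c)⁻¹ := by
    rw [show b - 1 = -c by rw [hc]; ring, Real.rpow_neg hs.le]
  rw [e2, e3]
  have := mul_le_mul_of_nonneg_left key (le_of_lt (inv_pos.mpr hsc))
  rw [e1] at this
  calc (z ^ c)⁻¹ = (s ^ c)⁻¹ * (s ^ c * (z ^ c)⁻¹) := by
        field_simp
    _ ≤ (s ^ c)⁻¹ * (1 - c * (z - s)) := this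
    _ = (s ^ c)⁻¹ * (1 + (b - 1) * (z - s)) := by rw [hc]; ring_nf

/-- Pointwise bound for `1 ≤ b`. -/
lemma pt_ge_aux (b s z : ℝ) (hb1 : 1 ≤ b) (hs : 0 < s)
    (hsz : s ≤ z) (hz : z ≤ 1) :
    s ^ (b - 1) * (1 + (b - 1) * (z - s)) ≤ z ^ (b - 1) := by
  have hz0 : 0 < z := lt_of_lt_of_le hs hsz
  set c : ℝ := b - 1 with hc
  have hc0 : 0 ≤ c := by simp [hc]; linarith
  have hlog : z - s ≤ Real.log z - Real.log s := by
    have h1 : Real.log (s / z) ≤ s / z - 1 := Real.log_le_sub_one_of_pos (div_pos hs hz0)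
    rw [Real.log_div hs.ne' hz0.ne'] at h1
    have h2 : s / z - 1 = -((z - s) / z) := by field_simp; ring
    have h3 : z - s ≤ (z - s) / z := by
      rw [le_div_iff₀ hz0]
      nlinarith
    nlinarith
  have key : 1 + c * (z - s) ≤ (z / s) ^ c := by
    rw [Real.rpow_def_of_pos (div_pos hz0 hs), Real.log_div hz0.ne' hs.ne']
    have h4 : c * (z - s) + 1 ≤ (Real.log z - Real.log s) * c + 1 := by
      nlinarith [mul_le_mul_of_nonneg_left hlog hc0]
    calc 1 + c * (z - s) = c * (z - s) + 1 := by ring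
      _ ≤ (Real.log z - Real.log s) * c + 1 := h4
      _ ≤ Real.exp ((Real.log z - Real.log s) * c) := Real.add_one_le_exp _
  have hsc : (0:ℝ) ≤ s ^ c := (Real.rpow_pos_of_pos hs c).le
  have := mul_le_mul_of_nonneg_left key hsc
  have e1 : s ^ c * (z / s) ^ c = z ^ c := by
    rw [← Real.mul_rpow hs.le (div_nonneg hz0.le hs.le), mul_div_cancel₀ _ hs.ne']
  rw [e1] at this
  calc s ^ (b - 1) * (1 + (b - 1) * (z - s)) = s ^ c * (1 + c * (z - s)) := by rw [hc]
    _ ≤ z ^ c := this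
    _ = z ^ (b - 1) := by rw [hc]

/-- Integrability of the majorant. -/
lemma intg_g (a b x : ℝ) (ha : 0 < a) :
    IntervalIntegrable (fun y => y ^ (a - 1) * ((1 - x) ^ (b - 1) * (1 + (b - 1) * x * (1 - y))))
      volume 0 1 := by
  apply (intervalIntegral.intervalIntegrable_rpow' (by linarith : (-1:ℝ) < a - 1)).mul_continuousOn
  exact (Continuous.continuousOn (by continuity))

/-- Integrability of the integrand of Q. -/
lemma intg_f (a b x : ℝ) (ha : 0 < a) (hx0 : 0 ≤ x) (hx1 : x < 1) :
    IntervalIntegrable (fun y => y ^ (a - 1) * (1 - x * y) ^ (b - 1)) volume 0 1 := by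
  apply (intervalIntegral.intervalIntegrable_rpow' (by linarith : (-1:ℝ) < a - 1)).mul_continuousOn
  apply ContinuousOn.rpow_const (Continuous.continuousOn (by continuity))
  intro y hy
  rw [Set.uIcc_of_le (zero_le_one)] at hy
  left
  have : x * y ≤ x := by nlinarith [hy.1, hy.2]
  nlinarith

lemma int_rpow_simple (r : ℝ) (hr : -1 < r) :
    ∫ y in (0:ℝ)..1, y ^ r = 1 / (r + 1) := by
  rw [integral_rpow (Or.inl hr)]
  rw [Real.one_rpow, Real.zero_rpow (by linarith : r + 1 ≠ 0)]
  norm_num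

/-- Exact value of the integral of the majorant. -/
lemma aux_eq (a b x : ℝ) (ha : 0 < a) (hx0 : 0 ≤ x) (hx1 : x < 1) :
    a * ∫ y in (0:ℝ)..1, y ^ (a - 1) * ((1 - x) ^ (b - 1) * (1 + (b - 1) * x * (1 - y)))
      = (1 - x) ^ b * (1 + (a + b) / (a + 1) * x / (1 - x)) := by
  set K : ℝ := (1 - x) ^ (b - 1) with hK
  have hcong : Set.EqOn
      (fun y : ℝ => y ^ (a - 1) * (K * (1 + (b - 1) * x * (1 - y))))
      (fun y : ℝ => (K * (1 + (b - 1) * x)) * y ^ (a - 1) - (K * ((b - 1) * x)) * y ^ a)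
      (Set.uIcc (0:ℝ) 1) := by
    intro y _
    rcases eq_or_ne y 0 with rfl | hy
    · simp [Real.zero_rpow ha.ne', mul_comm]
    · have : y ^ a = y ^ (a - 1) * y := by
        rw [← Real.rpow_add_one hy (a - 1)]; ring_nf
      simp only [this]
      ring
  rw [intervalIntegral.integral_congr hcong]
  rw [intervalIntegral.integral_sub
      ((intervalIntegral.intervalIntegrable_rpow' (by linarith : (-1:ℝ) < a - 1)).const_mul _)
      ((intervalIntegral.intervalIntegrable_rpow' (by linarith : (-1:ℝ) < a)).const_mul _),
    intervalIntegral.integral_const_mul, intervalIntegral.integral_const_mul,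
    int_rpow_simple (a - 1) (by linarith), int_rpow_simple a (by linarith)]
  have hxne : (1 : ℝ) - x ≠ 0 := by linarith
  have hane : a + 1 ≠ 0 := by linarith
  have hKb : (1 - x) ^ b = K * (1 - x) := by
    rw [hK, ← Real.rpow_add_one hxne (b - 1)]; ring_nf
  rw [hKb]
  have : a - 1 + 1 = a := by ring
  rw [this]
  field_simp
  ring

theorem beta_QS1_bounds (a b : ℝ) (ha : 0 < a) (hb : 0 < b)
    (x : ℝ) (hx : x ∈ Set.Ico (0:ℝ) 1) :
    (b ≤ 1 → Q a b x ≤ (1 - x) ^ b * (1 + (a + b) / (a + 1) * x / (1 - x))) ∧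
    (1 ≤ b → (1 - x) ^ b * (1 + (a + b) / (a + 1) * x / (1 - x)) ≤ Q a b x) := by
  obtain ⟨hx0, hx1⟩ := hx
  have hz : ∀ y ∈ Set.Icc (0:ℝ) 1, 0 < 1 - x ∧ 1 - x ≤ 1 - x * y ∧ 1 - x * y ≤ 1 := by
    intro y hy
    obtain ⟨hy0, hy1⟩ := hy
    refine ⟨by linarith, ?_, ?_⟩
    · nlinarith
    · nlinarith
  have hrw : ∀ y : ℝ, (1:ℝ) + (b - 1) * x * (1 - y) = 1 + (b - 1) * ((1 - x * y) - (1 - x)) := by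
    intro y; ring
  constructor
  · intro hb1
    rw [Q, ← aux_eq a b x ha hx0 hx1]
    apply mul_le_mul_of_nonneg_left _ ha.le
    apply intervalIntegral.integral_mono_on zero_le_one (intg_f a b x ha hx0 hx1) (intg_g a b x ha)
    intro y hy
    obtain ⟨h1, h2, h3⟩ := hz y hy
    have := pt_le_aux b (1 - x) (1 - x * y) hb hb1 h1 h2 h3
    have hyn : (0:ℝ) ≤ y ^ (a - 1) := Real.rpow_nonneg hy.1 _
    calc y ^ (a - 1) * (1 - x * y) ^ (b - 1)
        ≤ y ^ (a - 1) * ((1 - x) ^ (b - 1) * (1 + (b - 1) * ((1 - x * y) - (1 - x)))) :=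
          mul_le_mul_of_nonneg_left this hyn
      _ = y ^ (a - 1) * ((1 - x) ^ (b - 1) * (1 + (b - 1) * x * (1 - y))) := by
          rw [hrw y]
  · intro hb1
    rw [Q, ← aux_eq a b x ha hx0 hx1]
    apply mul_le_mul_of_nonneg_left _ ha.le
    apply intervalIntegral.integral_mono_on zero_le_one (intg_g a b x ha) (intg_f a b x ha hx0 hx1)
    intro y hy
    obtain ⟨h1, h2, h3⟩ := hz y hy
    have := pt_ge_aux b (1 - x) (1 - x * y) hb1 h1 h2 h3
    have hyn : (0:ℝ) ≤ y ^ (a - 1) := Real.rpow_nonneg hy.1 _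
    calc y ^ (a - 1) * ((1 - x) ^ (b - 1) * (1 + (b - 1) * x * (1 - y)))
        = y ^ (a - 1) * ((1 - x) ^ (b - 1) * (1 + (b - 1) * ((1 - x * y) - (1 - x)))) := by
          rw [hrw y]
      _ ≤ y ^ (a - 1) * (1 - x * y) ^ (b - 1) := mul_le_mul_of_nonneg_left this hyn
end

section
/- Let a, b > 0, p := a/(a+b), c_{a,b} := (a+b)/(a+1), and define for x ∈ [0,1): Q_{a,b}^{[S,2]}(x) := (1−x)^b/(1 − c_{a,b} x) if x ∈ [0,p], and Q_{a,b}^{[S,2]}(x) := (a+1)(1−p)^b if x ∈ [p,1). Then for all x ∈ [0,1): if b ≤ 1 then Q_{a,b}(x) ≥ Q_{a,b}^{[S,2]}(x), and if b ≥ 1 then Q_{a,b}(x) ≤ Q_{a,b}^{[S,2]}(x). -/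
open MeasureTheory

namespace BetaAux

variable {a b x : ℝ}

lemma base_pos (hx0 : 0 ≤ x) (hx1 : x < 1) {y : ℝ} (hy : y ∈ Set.Icc (0:ℝ) 1) :
    0 < 1 - x * y := by nlinarith [hy.1, hy.2]

lemma contOn (hx0 : 0 ≤ x) (hx1 : x < 1) (d : ℝ) :
    ContinuousOn (fun y : ℝ => (1 - x * y) ^ d) (Set.uIcc (0:ℝ) 1) := by
  rw [Set.uIcc_of_le (by norm_num : (0:ℝ) ≤ 1)]
  apply ContinuousOn.rpow_const (by fun_prop)
  intro y hy
  exact Or.inl (ne_of_gt (base_pos hx0 hx1 hy))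

lemma intble (hx0 : 0 ≤ x) (hx1 : x < 1) {c : ℝ} (hc : -1 < c) (d : ℝ) :
    IntervalIntegrable (fun y : ℝ => y ^ c * (1 - x * y) ^ d) volume 0 1 :=
  (intervalIntegral.intervalIntegrable_rpow' hc).mul_continuousOn (contOn hx0 hx1 d)

lemma ftc (ha : 0 < a) (hx0 : 0 ≤ x) (hx1 : x < 1) :
    (∫ y in (0:ℝ)..1, (a * (y ^ (a-1) * (1 - x * y) ^ b)
        - b * x * (y ^ a * (1 - x * y) ^ (b-1)))) = (1 - x) ^ b := by
  have h := intervalIntegral.integral_eq_sub_of_hasDeriv_right_of_le (a := (0:ℝ)) (b := (1:ℝ))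
    (f := fun y => y ^ a * (1 - x * y) ^ b)
    (f' := fun y => a * (y ^ (a-1) * (1 - x * y) ^ b) - b * x * (y ^ a * (1 - x * y) ^ (b-1)))
    (by norm_num)
    ?_ ?_ ?_
  · rw [h]
    norm_num [Real.zero_rpow ha.ne', Real.one_rpow]
  · have h1 : ContinuousOn (fun y : ℝ => y ^ a) (Set.Icc (0:ℝ) 1) :=
      ContinuousOn.rpow_const (by fun_prop) (fun y _ => Or.inr ha.le)
    have h2 := contOn hx0 hx1 b
    rw [Set.uIcc_of_le (by norm_num : (0:ℝ) ≤ 1)] at h2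
    exact h1.mul h2
  · intro y hy
    have hy0 : (0:ℝ) < y := hy.1
    have hbase : 0 < 1 - x * y := base_pos hx0 hx1 ⟨hy.1.le, hy.2.le⟩
    have d1 : HasDerivAt (fun y : ℝ => y ^ a) (a * y ^ (a-1)) y :=
      Real.hasDerivAt_rpow_const (Or.inl hy0.ne')
    have d2 : HasDerivAt (fun y : ℝ => 1 - x * y) (-(x * 1)) y :=
      ((hasDerivAt_id y).const_mul x).const_sub 1
    have d3 : HasDerivAt (fun t : ℝ => t ^ b) (b * (1 - x * y) ^ (b-1)) (1 - x * y) :=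
      Real.hasDerivAt_rpow_const (Or.inl hbase.ne')
    have d4 := (d3.comp y d2)
    have d5 := d1.mul d4
    simp only [Function.comp] at d5
    refine (d5.congr_deriv (by ring)).hasDerivWithinAt
  · exact ((intble hx0 hx1 (by linarith) b).const_mul a).sub
      ((intble hx0 hx1 (by linarith) (b-1)).const_mul (b * x))

lemma identity (ha : 0 < a) (hb : 0 < b) (hx0 : 0 ≤ x) (hx1 : x < 1) :
    Q a b x = (1 - x) ^ b
      + (a + b) * x * ∫ y in (0:ℝ)..1, y ^ a * (1 - x * y) ^ (b-1) := by
  have i1 := intble hx0 hx1 (show (-1:ℝ) < a - 1 by linarith) (b-1)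
  have i2 := intble hx0 hx1 (show (-1:ℝ) < a by linarith) (b-1)
  have key : (∫ y in (0:ℝ)..1, (a * (y ^ (a-1) * (1 - x * y) ^ (b-1))
      - (a + b) * x * (y ^ a * (1 - x * y) ^ (b-1)))) = (1 - x) ^ b := by
    rw [← ftc ha hx0 hx1]
    apply intervalIntegral.integral_congr
    intro y hy
    rw [Set.uIcc_of_le (by norm_num : (0:ℝ) ≤ 1)] at hy
    rcases eq_or_lt_of_le hy.1 with h0 | h0
    · simp only [← h0, mul_zero, sub_zero, Real.zero_rpow ha.ne', Real.one_rpow]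
      ring
    · have e1 : y ^ a = y ^ (a-1) * y := by
        rw [← Real.rpow_add_one h0.ne' (a-1)]; ring_nf
      have hbase : 0 < 1 - x * y := base_pos hx0 hx1 ⟨hy.1, hy.2⟩
      have e2 : (1 - x * y) ^ b = (1 - x * y) ^ (b-1) * (1 - x * y) := by
        rw [← Real.rpow_add_one hbase.ne' (b-1)]; ring_nf
      simp only [e1, e2]
      ring
  rw [intervalIntegral.integral_sub (i1.const_mul a) (i2.const_mul ((a+b)*x)),
    intervalIntegral.integral_const_mul, intervalIntegral.integral_const_mul] at key
  unfold Q
  linarith [key]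

lemma w_integral_zero (ha : 0 < a) :
    (∫ y in (0:ℝ)..1, ((a+1) * y ^ a - a * y ^ (a-1))) = 0 := by
  rw [intervalIntegral.integral_sub
      ((intervalIntegral.intervalIntegrable_rpow' (by linarith : (-1:ℝ) < a)).const_mul (a+1))
      ((intervalIntegral.intervalIntegrable_rpow' (by linarith : (-1:ℝ) < a-1)).const_mul a),
    intervalIntegral.integral_const_mul, intervalIntegral.integral_const_mul,
    integral_rpow (Or.inl (by linarith : (-1:ℝ) < a)),
    integral_rpow (Or.inl (by linarith : (-1:ℝ) < a-1)),
    Real.one_rpow, Real.one_rpow,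
    Real.zero_rpow (by linarith : a + 1 ≠ 0), Real.zero_rpow (by linarith : a - 1 + 1 ≠ 0)]
  have h1 : a + 1 ≠ 0 := by linarith
  have h2 : a ≠ 0 := ha.ne'
  field_simp
  simp [h2]

lemma w_mul_sign (ha : 0 < a) (hx0 : 0 ≤ x) (hx1 : x < 1)
    {y : ℝ} (hy : y ∈ Set.Icc (0:ℝ) 1) :
    (b ≤ 1 → 0 ≤ ((a+1) * y ^ a - a * y ^ (a-1))
        * ((1 - x*y)^(b-1) - (1 - x*(a/(a+1)))^(b-1))) ∧
    (1 ≤ b → ((a+1) * y ^ a - a * y ^ (a-1))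
        * ((1 - x*y)^(b-1) - (1 - x*(a/(a+1)))^(b-1)) ≤ 0) := by
  have ha1 : 0 < a + 1 := by linarith
  have hy₀0 : 0 < a/(a+1) := div_pos ha ha1
  have hy₀1 : a/(a+1) < 1 := (div_lt_one ha1).2 (by linarith)
  have hby₀ : 0 < 1 - x * (a/(a+1)) := base_pos hx0 hx1 ⟨hy₀0.le, hy₀1.le⟩
  have hbase : 0 < 1 - x * y := base_pos hx0 hx1 hy
  have hwle : y ≤ a/(a+1) → (a+1) * y ^ a - a * y ^ (a-1) ≤ 0 := by
    intro h
    rcases eq_or_lt_of_le hy.1 with h0 | h0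
    · rw [← h0, Real.zero_rpow ha.ne']
      have h3 : (0:ℝ) ≤ (0:ℝ) ^ (a-1) := Real.rpow_nonneg le_rfl _
      nlinarith
    · have e : y ^ a = y ^ (a-1) * y := by rw [← Real.rpow_add_one h0.ne']; ring_nf
      have hyp : 0 < y ^ (a-1) := Real.rpow_pos_of_pos h0 _
      have h4 : y * (a+1) ≤ a := (le_div_iff₀ ha1).1 h
      nlinarith
  have hwge : a/(a+1) ≤ y → 0 ≤ (a+1) * y ^ a - a * y ^ (a-1) := by
    intro h
    have h0 : 0 < y := lt_of_lt_of_le hy₀0 h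
    have e : y ^ a = y ^ (a-1) * y := by rw [← Real.rpow_add_one h0.ne']; ring_nf
    have hyp : 0 < y ^ (a-1) := Real.rpow_pos_of_pos h0 _
    have h4 : a ≤ y * (a+1) := (div_le_iff₀ ha1).1 h
    nlinarith
  constructor
  · intro hb1
    rcases le_total y (a/(a+1)) with h | h
    · have h1 : 1 - x * (a/(a+1)) ≤ 1 - x * y := by nlinarith [mul_le_mul_of_nonneg_left h hx0]
      have hf : (1 - x*y)^(b-1) ≤ (1 - x*(a/(a+1)))^(b-1) :=
        Real.rpow_le_rpow_of_nonpos hby₀ h1 (by linarith)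
      exact mul_nonneg_iff.2 (Or.inr ⟨hwle h, by linarith⟩)
    · have h1 : 1 - x * y ≤ 1 - x * (a/(a+1)) := by nlinarith [mul_le_mul_of_nonneg_left h hx0]
      have hf : (1 - x*(a/(a+1)))^(b-1) ≤ (1 - x*y)^(b-1) :=
        Real.rpow_le_rpow_of_nonpos hbase h1 (by linarith)
      exact mul_nonneg (hwge h) (by linarith)
  · intro hb1
    rcases le_total y (a/(a+1)) with h | h
    · have h1 : 1 - x * (a/(a+1)) ≤ 1 - x * y := by nlinarith [mul_le_mul_of_nonneg_left h hx0]
      have hf : (1 - x*(a/(a+1)))^(b-1) ≤ (1 - x*y)^(b-1) :=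
        Real.rpow_le_rpow hby₀.le h1 (by linarith)
      exact mul_nonpos_iff.2 (Or.inr ⟨hwle h, by linarith⟩)
    · have h1 : 1 - x * y ≤ 1 - x * (a/(a+1)) := by nlinarith [mul_le_mul_of_nonneg_left h hx0]
      have hf : (1 - x*y)^(b-1) ≤ (1 - x*(a/(a+1)))^(b-1) :=
        Real.rpow_le_rpow hbase.le h1 (by linarith)
      exact mul_nonpos_iff.2 (Or.inl ⟨hwge h, by linarith⟩)

lemma step (ha : 0 < a) (hb : 0 < b) (hx0 : 0 ≤ x) (hx1 : x < 1) :
    (b ≤ 1 → Q a b x ≤ (a+1) * ∫ y in (0:ℝ)..1, y ^ a * (1 - x * y) ^ (b-1)) ∧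
    (1 ≤ b → (a+1) * (∫ y in (0:ℝ)..1, y ^ a * (1 - x * y) ^ (b-1)) ≤ Q a b x) := by
  set K := (1 - x*(a/(a+1)))^(b-1) with hK
  have i1 := intble hx0 hx1 (show (-1:ℝ) < a - 1 by linarith) (b-1)
  have i2 := intble hx0 hx1 (show (-1:ℝ) < a by linarith) (b-1)
  have iw : IntervalIntegrable (fun y : ℝ => (a+1) * y ^ a - a * y ^ (a-1)) volume 0 1 :=
    ((intervalIntegral.intervalIntegrable_rpow' (by linarith : (-1:ℝ) < a)).const_mul (a+1)).sub
     ((intervalIntegral.intervalIntegrable_rpow' (by linarith : (-1:ℝ) < a-1)).const_mul a)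
  have e : (fun y : ℝ => ((a+1) * y ^ a - a * y ^ (a-1)) * ((1 - x*y)^(b-1) - K))
      = fun y : ℝ => ((a+1) * (y ^ a * (1 - x*y)^(b-1)) - a * (y ^ (a-1) * (1 - x*y)^(b-1)))
          - K * ((a+1) * y ^ a - a * y ^ (a-1)) := by
    funext y; ring
  have hsplit : (∫ y in (0:ℝ)..1, ((a+1) * y ^ a - a * y ^ (a-1)) * ((1 - x*y)^(b-1) - K))
      = (a+1) * (∫ y in (0:ℝ)..1, y ^ a * (1 - x * y) ^ (b-1)) - Q a b x := by
    rw [e, intervalIntegral.integral_sub ((i2.const_mul (a+1)).sub (i1.const_mul a))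
        (iw.const_mul K),
      intervalIntegral.integral_sub (i2.const_mul (a+1)) (i1.const_mul a),
      intervalIntegral.integral_const_mul, intervalIntegral.integral_const_mul,
      intervalIntegral.integral_const_mul, w_integral_zero ha, mul_zero, sub_zero]
    unfold Q
    ring
  constructor
  · intro hb1
    have hpos : 0 ≤ ∫ y in (0:ℝ)..1,
        ((a+1) * y ^ a - a * y ^ (a-1)) * ((1 - x*y)^(b-1) - K) := by
      rw [intervalIntegral.integral_of_le (by norm_num : (0:ℝ) ≤ 1)]
      apply setIntegral_nonneg measurableSet_Ioc
      intro y hy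
      exact (w_mul_sign ha hx0 hx1 ⟨hy.1.le, hy.2⟩).1 hb1
    linarith [hsplit ▸ hpos]
  · intro hb1
    have hneg : (∫ y in (0:ℝ)..1,
        ((a+1) * y ^ a - a * y ^ (a-1)) * ((1 - x*y)^(b-1) - K)) ≤ 0 := by
      rw [intervalIntegral.integral_of_le (by norm_num : (0:ℝ) ≤ 1)]
      apply setIntegral_nonpos measurableSet_Ioc
      intro y hy
      exact (w_mul_sign ha hx0 hx1 ⟨hy.1.le, hy.2⟩).2 hb1
    linarith [hsplit ▸ hneg]

lemma main_bound (ha : 0 < a) (hb : 0 < b) (hx0 : 0 ≤ x) (hx1 : x < 1)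
    (hxp : x ≤ a / (a + b)) :
    (b ≤ 1 → (1 - x) ^ b / (1 - (a + b) / (a + 1) * x) ≤ Q a b x) ∧
    (1 ≤ b → Q a b x ≤ (1 - x) ^ b / (1 - (a + b) / (a + 1) * x)) := by
  have hab : 0 < a + b := by linarith
  have ha1 : 0 < a + 1 := by linarith
  have hxa : x * (a + b) ≤ a := (le_div_iff₀ hab).1 hxp
  have hc : 0 < 1 - (a + b) / (a + 1) * x := by
    rw [sub_pos, div_mul_eq_mul_div, div_lt_one ha1]; nlinarith
  have hcrw : 1 - (a + b) / (a + 1) * x = ((a + 1) - (a + b) * x) / (a + 1) := by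
    field_simp
  have hI := identity ha hb hx0 hx1
  have hstep := step ha hb hx0 hx1
  set I1 := ∫ y in (0:ℝ)..1, y ^ a * (1 - x * y) ^ (b-1) with hI1
  have e2 : Q a b x * ((a + 1) - (a + b) * x)
      = (a + 1) * (Q a b x - (a + b) * x * I1) + (a + b) * x * ((a + 1) * I1 - Q a b x) := by
    ring
  have e3 : Q a b x - (a + b) * x * I1 = (1 - x) ^ b := by linarith
  constructor
  · intro hb1
    have h1 : Q a b x ≤ (a + 1) * I1 := hstep.1 hb1
    have hprod : 0 ≤ (a + b) * x * ((a + 1) * I1 - Q a b x) :=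
      mul_nonneg (mul_nonneg hab.le hx0) (by linarith)
    have key : (a + 1) * (1 - x) ^ b ≤ Q a b x * ((a + 1) - (a + b) * x) := by
      rw [e2, e3]; linarith
    rw [div_le_iff₀ hc, hcrw, ← mul_div_assoc, le_div_iff₀ ha1]
    linarith
  · intro hb1
    have h1 : (a + 1) * I1 ≤ Q a b x := hstep.2 hb1
    have hprod : (a + b) * x * ((a + 1) * I1 - Q a b x) ≤ 0 :=
      mul_nonpos_iff.2 (Or.inl ⟨mul_nonneg hab.le hx0, by linarith⟩)
    have key : Q a b x * ((a + 1) - (a + b) * x) ≤ (a + 1) * (1 - x) ^ b := by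
      rw [e2, e3]; linarith
    rw [le_div_iff₀ hc, hcrw, ← mul_div_assoc, div_le_iff₀ ha1]
    linarith

lemma mono_in_x (ha : 0 < a) {x' : ℝ} (hx0 : 0 ≤ x) (hxx : x ≤ x') (hx1 : x' < 1) :
    (b ≤ 1 → Q a b x ≤ Q a b x') ∧ (1 ≤ b → Q a b x' ≤ Q a b x) := by
  have hx'0 : 0 ≤ x' := le_trans hx0 hxx
  have hx1' : x < 1 := lt_of_le_of_lt hxx hx1
  have ia := intble hx0 hx1' (show (-1:ℝ) < a - 1 by linarith) (b-1)
  have ib := intble hx'0 hx1 (show (-1:ℝ) < a - 1 by linarith) (b-1)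
  constructor
  · intro hb1
    apply mul_le_mul_of_nonneg_left _ ha.le
    apply intervalIntegral.integral_mono_on (by norm_num) ia ib
    intro y hy
    have h1 : 0 < 1 - x' * y := base_pos hx'0 hx1 hy
    have h2 : 1 - x' * y ≤ 1 - x * y := by nlinarith [mul_le_mul_of_nonneg_right hxx hy.1]
    exact mul_le_mul_of_nonneg_left
      (Real.rpow_le_rpow_of_nonpos h1 h2 (by linarith)) (Real.rpow_nonneg hy.1 _)
  · intro hb1
    apply mul_le_mul_of_nonneg_left _ ha.le
    apply intervalIntegral.integral_mono_on (by norm_num) ib ia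
    intro y hy
    have h1 : 0 < 1 - x' * y := base_pos hx'0 hx1 hy
    have h2 : 1 - x' * y ≤ 1 - x * y := by nlinarith [mul_le_mul_of_nonneg_right hxx hy.1]
    exact mul_le_mul_of_nonneg_left
      (Real.rpow_le_rpow h1.le h2 (by linarith)) (Real.rpow_nonneg hy.1 _)

end BetaAux

theorem beta_QS2_bounds (a b : ℝ) (ha : 0 < a) (hb : 0 < b)
    (x : ℝ) (hx : x ∈ Set.Ico (0:ℝ) 1) :
    (b ≤ 1 →
      (if x ≤ a / (a + b) then (1 - x) ^ b / (1 - (a + b) / (a + 1) * x)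
        else (a + 1) * (1 - a / (a + b)) ^ b) ≤ Q a b x) ∧
    (1 ≤ b →
      Q a b x ≤
      (if x ≤ a / (a + b) then (1 - x) ^ b / (1 - (a + b) / (a + 1) * x)
        else (a + 1) * (1 - a / (a + b)) ^ b)) := by
  obtain ⟨hx0, hx1⟩ := hx
  have hab : 0 < a + b := by linarith
  have ha1 : 0 < a + 1 := by linarith
  by_cases hxp : x ≤ a / (a + b)
  · rw [if_pos hxp]
    exact BetaAux.main_bound ha hb hx0 hx1 hxp
  · rw [if_neg hxp]
    push_neg at hxp
    have hp0 : 0 ≤ a / (a + b) := div_nonneg ha.le hab.le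
    have hp1 : a / (a + b) < 1 := (div_lt_one hab).2 (by linarith)
    have hmb := BetaAux.main_bound ha hb hp0 hp1 le_rfl
    have hK : 1 - (a + b) / (a + 1) * (a / (a + b)) = 1 / (a + 1) := by
      field_simp
      ring
    have hEq : (1 - a / (a + b)) ^ b / (1 - (a + b) / (a + 1) * (a / (a + b)))
        = (a + 1) * (1 - a / (a + b)) ^ b := by
      rw [hK, div_div_eq_mul_div, div_one]
      ring
    have hmono := BetaAux.mono_in_x (b := b) ha hp0 hxp.le hx1
    constructor
    · intro h
      calc (a + 1) * (1 - a / (a + b)) ^ b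
          = (1 - a / (a + b)) ^ b / (1 - (a + b) / (a + 1) * (a / (a + b))) := hEq.symm
        _ ≤ Q a b (a / (a + b)) := hmb.1 h
        _ ≤ Q a b x := hmono.1 h
    · intro h
      calc Q a b x ≤ Q a b (a / (a + b)) := hmono.2 h
        _ ≤ (1 - a / (a + b)) ^ b / (1 - (a + b) / (a + 1) * (a / (a + b))) := hmb.2 h
        _ = (a + 1) * (1 - a / (a + b)) ^ b := hEq
end

section
/- Let a, b > 0 and define Q_{a,b}^{[1]}(x) := (1 − a x/(a+1))^{b−1} for x ∈ (0,1). Then for all x ∈ (0,1): if b ∈ (0,1] ∪ [2,∞) then Q_{a,b}(x) ≥ Q_{a,b}^{[1]}(x), and if b ∈ [1,2] then Q_{a,b}(x) ≤ Q_{a,b}^{[1]}(x). -/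
open MeasureTheory
open intervalIntegral

/-- Bernoulli's inequality for nonpositive exponents. -/
lemma bernoulli_nonpos {s p : ℝ} (hs : -1 < s) (hp : p ≤ 0) :
    1 + p * s ≤ (1 + s) ^ p := by
  have hu : (0:ℝ) < 1 + s := by linarith
  rcases le_or_gt (1 + p * s) 0 with h | h
  · exact h.trans (Real.rpow_pos_of_pos hu p).le
  · rw [← Real.exp_log h, ← Real.exp_log (Real.rpow_pos_of_pos hu p)]
    apply Real.exp_le_exp.2
    rw [Real.log_rpow hu]
    have h1 : Real.log (1 + p * s) ≤ p * s := by
      have := Real.log_le_sub_one_of_pos h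
      linarith
    have h2 : Real.log (1 + s) ≤ s := by
      have := Real.log_le_sub_one_of_pos hu
      linarith
    calc Real.log (1 + p * s) ≤ p * s := h1
      _ ≤ p * Real.log (1 + s) := mul_le_mul_of_nonpos_left h2 hp
    
/-- Tangent line inequality for convex rpow. -/
lemma tangent_le {s c p : ℝ} (hs : 0 < s) (hc : 0 < c) (hp : p ≤ 0 ∨ 1 ≤ p) :
    c ^ p + p * c ^ (p - 1) * (s - c) ≤ s ^ p := by
  have hu : (-1:ℝ) < s / c - 1 := by
    have : 0 < s / c := div_pos hs hc
    linarith
  have hber : 1 + p * (s / c - 1) ≤ (1 + (s / c - 1)) ^ p := by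
    rcases hp with hp | hp
    · exact bernoulli_nonpos hu hp
    · exact one_add_mul_self_le_rpow_one_add hu.le hp
  have hcp : (0:ℝ) < c ^ p := Real.rpow_pos_of_pos hc p
  have key := mul_le_mul_of_nonneg_left hber hcp.le
  have h1 : (1 + (s / c - 1)) = s / c := by ring
  have h2 : c ^ p * (s / c) ^ p = s ^ p := by
    rw [Real.div_rpow hs.le hc.le]
    field_simp
  have h3 : c ^ p * (1 + p * (s / c - 1)) = c ^ p + p * c ^ (p - 1) * (s - c) := by
    rw [Real.rpow_sub_one hc.ne']
    field_simp
  rw [h1, h2, h3] at key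
  exact key

/-- Tangent line inequality for concave rpow. -/
lemma tangent_ge {s c p : ℝ} (hs : 0 < s) (hc : 0 < c) (hp0 : 0 ≤ p) (hp1 : p ≤ 1) :
    s ^ p ≤ c ^ p + p * c ^ (p - 1) * (s - c) := by
  have hu : (-1:ℝ) < s / c - 1 := by
    have : 0 < s / c := div_pos hs hc
    linarith
  have hber : (1 + (s / c - 1)) ^ p ≤ 1 + p * (s / c - 1) :=
    rpow_one_add_le_one_add_mul_self hu.le hp0 hp1
  have hcp : (0:ℝ) < c ^ p := Real.rpow_pos_of_pos hc p
  have key := mul_le_mul_of_nonneg_left hber hcp.le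
  have h1 : (1 + (s / c - 1)) = s / c := by ring
  have h2 : c ^ p * (s / c) ^ p = s ^ p := by
    rw [Real.div_rpow hs.le hc.le]
    field_simp
  have h3 : c ^ p * (1 + p * (s / c - 1)) = c ^ p + p * c ^ (p - 1) * (s - c) := by
    rw [Real.rpow_sub_one hc.ne']
    field_simp
  rw [h1, h2, h3] at key
  exact key

/-- Integral of an affine function against `y^(a-1)`. -/
lemma integral_affine (a A B : ℝ) (ha : 0 < a) :
    a * ∫ y in (0:ℝ)..1, y ^ (a - 1) * (A + B * y) = A + B * (a / (a + 1)) := by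
  have hEq : Set.EqOn (fun y : ℝ => y ^ (a - 1) * (A + B * y))
      (fun y : ℝ => A * y ^ (a - 1) + B * y ^ a) (Set.uIcc (0:ℝ) 1) := by
    intro y hy
    rcases eq_or_ne y 0 with rfl | hy0
    · simp [Real.zero_rpow ha.ne', mul_comm]
    · have : y ^ a = y ^ (a - 1) * y := by
        rw [← Real.rpow_add_one hy0]; ring_nf
      simp only [this]; ring
  rw [intervalIntegral.integral_congr hEq]
  have hi1 : IntervalIntegrable (fun y : ℝ => A * y ^ (a - 1)) volume 0 1 :=
    (intervalIntegrable_rpow' (by linarith)).const_mul A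
  have hi2 : IntervalIntegrable (fun y : ℝ => B * y ^ a) volume 0 1 :=
    (intervalIntegrable_rpow' (by linarith)).const_mul B
  rw [intervalIntegral.integral_add hi1 hi2, intervalIntegral.integral_const_mul,
    intervalIntegral.integral_const_mul, integral_rpow (Or.inl (by linarith : (-1:ℝ) < a - 1)),
    integral_rpow (Or.inl (by linarith : (-1:ℝ) < a))]
  have h0a : (0:ℝ) ^ (a - 1 + 1) = 0 := Real.zero_rpow (by linarith)
  have h0b : (0:ℝ) ^ (a + 1) = 0 := Real.zero_rpow (by linarith)
  rw [h0a, h0b, Real.one_rpow, Real.one_rpow]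
  have ha1 : a + 1 ≠ 0 := by linarith
  field_simp
  linear_combination (A + a * A) * (mul_inv_cancel₀ ha.ne')

theorem beta_Q1_bounds (a b : ℝ) (ha : 0 < a) (hb : 0 < b)
    (x : ℝ) (hx : x ∈ Set.Ioo (0:ℝ) 1) :
    ((b ≤ 1 ∨ 2 ≤ b) → (1 - a * x / (a + 1)) ^ (b - 1) ≤ Q a b x) ∧
    ((1 ≤ b ∧ b ≤ 2) → Q a b x ≤ (1 - a * x / (a + 1)) ^ (b - 1)) := by
  obtain ⟨hx0, hx1⟩ := hx
  set m : ℝ := a / (a + 1) with hm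
  set p : ℝ := b - 1 with hp
  have ha1 : (0:ℝ) < a + 1 := by linarith
  have hm0 : 0 < m := div_pos ha ha1
  have hm1 : m < 1 := by
    rw [hm, div_lt_one ha1]; linarith
  set c : ℝ := 1 - x * m with hc
  have hcpos : 0 < c := by
    have : x * m < 1 * 1 := by
      apply mul_lt_mul' hx1.le hm1 hm0.le one_pos
    simp at this
    rw [hc]; linarith
  have hax : 1 - a * x / (a + 1) = c := by
    rw [hc, hm]; ring
  -- positivity of 1 - x*y on [0,1]
  have hsy : ∀ y ∈ Set.Icc (0:ℝ) 1, 0 < 1 - x * y := by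
    intro y hy
    have : x * y ≤ x * 1 := mul_le_mul_of_nonneg_left hy.2 hx0.le
    simp at this
    linarith
  -- integrability
  have hint2 : IntervalIntegrable (fun y : ℝ => y ^ (a - 1) * (1 - x * y) ^ (b - 1))
      volume 0 1 := by
    apply (intervalIntegrable_rpow' (by linarith : (-1:ℝ) < a - 1)).mul_continuousOn
    apply ContinuousOn.rpow_const
    · fun_prop
    · intro y hy
      rw [Set.uIcc_of_le (by norm_num : (0:ℝ) ≤ 1)] at hy
      exact Or.inl (hsy y hy).ne'
  set A : ℝ := c ^ p + p * c ^ (p - 1) * x * m with hA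
  set B : ℝ := -(p * c ^ (p - 1) * x) with hB
  have hint1 : IntervalIntegrable (fun y : ℝ => y ^ (a - 1) * (A + B * y)) volume 0 1 := by
    apply (intervalIntegrable_rpow' (by linarith : (-1:ℝ) < a - 1)).mul_continuousOn
    fun_prop
  have hval : a * ∫ y in (0:ℝ)..1, y ^ (a - 1) * (A + B * y) = c ^ p := by
    rw [integral_affine a A B ha, hA, hB, ← hm]
    ring
  -- pointwise tangent value rewriting
  have haff : ∀ y : ℝ, A + B * y = c ^ p + p * c ^ (p - 1) * ((1 - x * y) - c) := by
    intro y
    rw [hA, hB, hc]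
    ring
  constructor
  · intro hcase
    rw [hax, Q, ← hval]
    apply mul_le_mul_of_nonneg_left _ ha.le
    apply intervalIntegral.integral_mono_on (by norm_num) hint1 hint2
    intro y hy
    have hyp : (0:ℝ) ≤ y ^ (a - 1) := Real.rpow_nonneg hy.1 _
    apply mul_le_mul_of_nonneg_left _ hyp
    rw [haff y]
    apply tangent_le (hsy y hy) hcpos
    rcases hcase with h | h
    · left; show b - 1 ≤ 0; linarith
    · right; show 1 ≤ b - 1; linarith
  · rintro ⟨hb1, hb2⟩
    rw [hax, Q, ← hval]
    apply mul_le_mul_of_nonneg_left _ ha.le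
    apply intervalIntegral.integral_mono_on (by norm_num) hint2 hint1
    intro y hy
    have hyp : (0:ℝ) ≤ y ^ (a - 1) := Real.rpow_nonneg hy.1 _
    apply mul_le_mul_of_nonneg_left _ hyp
    rw [haff y]
    apply tangent_ge (hsy y hy) hcpos (by show (0:ℝ) ≤ b - 1; linarith) (by show b - 1 ≤ 1; linarith)
end

section
/- Let a, b > 0 and define Q_{a,b}^{[3]}(x) := 1/(a+1)² + (a(a+2)/(a+1)²) (1 − (a+1)x/(a+2))^{b−1} for x ∈ (0,1). Then for all x ∈ (0,1): if b ∈ (0,1] ∪ [2,3] then Q_{a,b}(x) ≥ Q_{a,b}^{[3]}(x), and if b ∈ [1,2] ∪ [3,∞) then Q_{a,b}(x) ≤ Q_{a,b}^{[3]}(x). -/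
open MeasureTheory

namespace BetaQ3
open intervalIntegral

noncomputable def II (a t : ℝ) : ℝ :=
  a/(a+2) - 2*a*t/(a+1) + t^2 - 2*t^(a+2)/((a+1)*(a+2))

noncomputable def Ider (a t : ℝ) : ℝ := -2*a/(a+1) + 2*t - 2*t^(a+1)/(a+1)

noncomputable def phi (a t : ℝ) : ℝ :=
  II a t - (a*(a+2)/(a+1)^2) * ((a+1)/(a+2) - t)^2

noncomputable def phi' (a t : ℝ) : ℝ :=
  Ider a t + 2*(a*(a+2)/(a+1)^2) * ((a+1)/(a+2) - t)

noncomputable def phi'' (a t : ℝ) : ℝ := 2 - 2*t^a - 2*(a*(a+2)/(a+1)^2)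

noncomputable def K3 (b x t : ℝ) : ℝ := -(x^3*(b-1)*(b-2)*(b-3)) * (1-x*t)^(b-4)

lemma hd_pow {x t c : ℝ} (hu : (0:ℝ) < 1 - x * t) :
    HasDerivAt (fun t => (1 - x * t) ^ c) (-(x * c * (1 - x * t) ^ (c - 1))) t := by
  have h1 : HasDerivAt (fun t : ℝ => 1 - x * t) (-x) t := by
    simpa using (hasDerivAt_const t (1:ℝ)).fun_sub ((hasDerivAt_id t).const_mul x)
  have h2 := (Real.hasDerivAt_rpow_const (p := c) (Or.inl hu.ne')).comp t h1
  refine h2.congr_deriv ?_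
  ring

lemma taylor_id {b x : ℝ} (hx : x ∈ Set.Ioo (0:ℝ) 1) {y : ℝ} (hy : y ∈ Set.Icc (0:ℝ) 1) :
    (1 - x * y) ^ (b - 1) - (1 + (-(x * (b-1))) * y + (x^2 * (b-1) * (b-2)) * y^2 / 2)
      = ∫ t in (0:ℝ)..y, (-(x^3 * (b-1) * (b-2) * (b-3)) * (1 - x * t) ^ (b-4)) * (y-t)^2 / 2 := by
  obtain ⟨hx0, hx1⟩ := hx
  have hupos : ∀ t ∈ Set.uIcc (0:ℝ) y, (0:ℝ) < 1 - x * t := by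
    intro t ht
    rw [Set.uIcc_of_le hy.1] at ht
    nlinarith [ht.1, ht.2.trans hy.2]
  set H : ℝ → ℝ := fun t =>
    -(x^2 * (b-1) * (b-2)) * ((1 - x * t) ^ (b-3) * (y-t)^2) / 2
      + (x * (b-1)) * ((1 - x * t) ^ (b-2) * (y-t)) - (1 - x * t) ^ (b-1) with hH
  have hderiv : ∀ t ∈ Set.uIcc (0:ℝ) y,
      HasDerivAt H (-((-(x^3 * (b-1) * (b-2) * (b-3)) * (1 - x * t) ^ (b-4)) * (y-t)^2 / 2)) t := by
    intro t ht
    have hu := hupos t ht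
    have hA : HasDerivAt (fun t => (1 - x * t) ^ (b-3)) (-(x * (b-3) * (1 - x * t) ^ (b-4))) t := by
      have := hd_pow (c := b-3) hu
      convert this using 2 <;> ring
    have hC : HasDerivAt (fun t => (1 - x * t) ^ (b-2)) (-(x * (b-2) * (1 - x * t) ^ (b-3))) t := by
      have := hd_pow (c := b-2) hu
      convert this using 2 <;> ring
    have hE : HasDerivAt (fun t => (1 - x * t) ^ (b-1)) (-(x * (b-1) * (1 - x * t) ^ (b-2))) t := by
      have := hd_pow (c := b-1) hu
      convert this using 2 <;> ring
    have hB : HasDerivAt (fun t : ℝ => (y - t)^2) (-(2 * (y - t))) t := by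
      have h1 : HasDerivAt (fun t : ℝ => y - t) (-1) t := by
        simpa using (hasDerivAt_const t y).fun_sub (hasDerivAt_id t)
      have := h1.fun_pow 2
      refine this.congr_deriv ?_
      ring
    have hD : HasDerivAt (fun t : ℝ => y - t) (-1) t := by
      simpa using (hasDerivAt_const t y).fun_sub (hasDerivAt_id t)
    have h := ((((hA.fun_mul hB).const_mul (-(x^2 * (b-1) * (b-2)))).div_const 2).fun_add
        ((hC.fun_mul hD).const_mul (x * (b-1)))).fun_sub hE
    refine h.congr_deriv ?_
    ring
  have hcont : ContinuousOn
      (fun t => (-(x^3 * (b-1) * (b-2) * (b-3)) * (1 - x * t) ^ (b-4)) * (y-t)^2 / 2)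
      (Set.uIcc (0:ℝ) y) := by
    apply ContinuousOn.div_const
    apply ContinuousOn.mul
    · exact continuousOn_const.mul (((continuousOn_const.sub
        (continuousOn_const.mul continuousOn_id)).rpow_const
        (fun t ht => Or.inl (hupos t ht).ne')))
    · fun_prop
  have hint : IntervalIntegrable
      (fun t => -((-(x^3 * (b-1) * (b-2) * (b-3)) * (1 - x * t) ^ (b-4)) * (y-t)^2 / 2))
      volume 0 y := (hcont.neg).intervalIntegrable
  have := intervalIntegral.integral_eq_sub_of_hasDerivAt hderiv hint
  rw [intervalIntegral.integral_neg] at this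
  have h2 : (∫ t in (0:ℝ)..y, (-(x^3 * (b-1) * (b-2) * (b-3)) * (1 - x * t) ^ (b-4)) * (y-t)^2 / 2)
      = -(H y - H 0) := by linarith [this]
  rw [h2, hH]
  simp only [mul_zero, sub_zero, Real.one_rpow]
  ring

lemma mom0 {a : ℝ} (ha : 0 < a) : (∫ y in (0:ℝ)..1, y ^ (a-1)) = 1/a := by
  rw [integral_rpow (Or.inl (by linarith))]
  rw [Real.one_rpow, Real.zero_rpow (by linarith : a - 1 + 1 ≠ 0)]
  have h2 : a - 1 + 1 = a := by ring
  rw [h2]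
  norm_num

lemma mom_gen {a : ℝ} (ha : 0 < a) (k : ℕ) (hk : 0 < k) :
    (∫ y in (0:ℝ)..1, y ^ (a-1) * y ^ k) = 1/(a+k) := by
  have hak : (0:ℝ) < a + k := by positivity
  have hEq : Set.EqOn (fun y : ℝ => y ^ (a-1) * y ^ k) (fun y : ℝ => y ^ (a-1+k))
      (Set.uIcc (0:ℝ) 1) := by
    intro y hy
    rw [Set.uIcc_of_le zero_le_one] at hy
    rcases eq_or_lt_of_le hy.1 with h | h
    · simp only [← h]
      have h1 : (1:ℝ) ≤ (k:ℝ) := Nat.one_le_cast.mpr hk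
      rw [zero_pow hk.ne', mul_zero, Real.zero_rpow (by linarith : a - 1 + (k:ℝ) ≠ 0).symm.symm]
    · simp only
      rw [← Real.rpow_natCast y k, ← Real.rpow_add h]
  rw [intervalIntegral.integral_congr hEq,
    integral_rpow (Or.inl (by push_cast; have := (Nat.cast_nonneg k : (0:ℝ) ≤ k); linarith))]
  have h1 : a - 1 + k + 1 = a + k := by ring
  rw [h1, Real.one_rpow, Real.zero_rpow hak.ne']
  ring

lemma intInt_base {a : ℝ} (ha : 0 < a) {c d : ℝ} (hc : 0 ≤ c) :
    IntervalIntegrable (fun y : ℝ => y ^ (a-1)) volume c d :=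
  intervalIntegrable_rpow' (by linarith)

lemma intInt_mul_cont {a : ℝ} (ha : 0 < a) {g : ℝ → ℝ} (hg : ContinuousOn g (Set.uIcc 0 1)) :
    IntervalIntegrable (fun y : ℝ => y ^ (a-1) * g y) volume 0 1 :=
  (intervalIntegrable_rpow' (by linarith)).mul_continuousOn hg

lemma kerInt {a : ℝ} (ha : 0 < a) {t : ℝ} (ht : t ∈ Set.Icc (0:ℝ) 1) :
    a * ∫ y in (0:ℝ)..1, y ^ (a-1) * (max (y - t) 0)^2 = II a t := by
  obtain ⟨ht0, ht1⟩ := ht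
  have h1 : (∫ y in (0:ℝ)..t, y ^ (a-1) * (max (y - t) 0)^2) = 0 := by
    have hEq : Set.EqOn (fun y : ℝ => y ^ (a-1) * (max (y - t) 0)^2) (fun _ => (0:ℝ))
        (Set.uIcc (0:ℝ) t) := by
      intro y hy
      rw [Set.uIcc_of_le ht0] at hy
      simp only
      rw [max_eq_right (by linarith [hy.2])]
      simp
    rw [intervalIntegral.integral_congr hEq]
    simp
  have hEq2 : Set.EqOn (fun y : ℝ => y ^ (a-1) * (max (y - t) 0)^2)
      (fun y : ℝ => y ^ (a+1) - 2*t*y^a + t^2*y^(a-1)) (Set.uIcc t 1) := by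
    intro y hy
    rw [Set.uIcc_of_le ht1] at hy
    simp only
    rw [max_eq_left (by linarith [hy.1])]
    rcases lt_or_eq_of_le (ht0.trans hy.1) with h | h
    · have e1 : y ^ (a+1) = y ^ (a-1) * y^2 := by
        nth_rewrite 1 [show a + 1 = (a-1) + 2 by ring]
        rw [Real.rpow_add h, show ((2:ℝ)) = ((2:ℕ):ℝ) by norm_num, Real.rpow_natCast]
      have e2 : y ^ a = y ^ (a-1) * y := by
        nth_rewrite 1 [show a = (a-1) + 1 by ring]
        rw [Real.rpow_add h, Real.rpow_one]
      rw [e1, e2]; ring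
    · have ht0' : t = 0 := le_antisymm (by linarith [hy.1]) ht0
      rw [← h, ht0']
      simp [Real.zero_rpow (by linarith : a + 1 ≠ 0)]
  have h2 : (∫ y in t..(1:ℝ), y ^ (a-1) * (max (y - t) 0)^2)
      = (1 - t^(a+2))/(a+2) - 2*t*((1 - t^(a+1))/(a+1)) + t^2*((1 - t^a)/a) := by
    rw [intervalIntegral.integral_congr hEq2]
    have i1 : IntervalIntegrable (fun y : ℝ => y ^ (a+1)) volume t 1 :=
      intervalIntegrable_rpow' (by linarith)
    have i2 : IntervalIntegrable (fun y : ℝ => 2*t*y^a) volume t 1 :=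
      (intervalIntegrable_rpow' (by linarith)).const_mul _
    have i3 : IntervalIntegrable (fun y : ℝ => t^2*y^(a-1)) volume t 1 :=
      (intervalIntegrable_rpow' (by linarith)).const_mul _
    rw [intervalIntegral.integral_add (i1.sub i2) i3, intervalIntegral.integral_sub i1 i2,
      intervalIntegral.integral_const_mul, intervalIntegral.integral_const_mul,
      integral_rpow (Or.inl (by linarith)), integral_rpow (Or.inl (by linarith)),
      integral_rpow (Or.inl (by linarith))]
    simp only [Real.one_rpow]
    have e1 : a + 1 + 1 = a + 2 := by ring
    have e2 : a - 1 + 1 = a := by ring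
    rw [e1, e2]
  have hsplit : (∫ y in (0:ℝ)..1, y ^ (a-1) * (max (y - t) 0)^2)
      = (∫ y in (0:ℝ)..t, y ^ (a-1) * (max (y - t) 0)^2)
        + ∫ y in t..(1:ℝ), y ^ (a-1) * (max (y - t) 0)^2 := by
    rw [intervalIntegral.integral_add_adjacent_intervals]
    · exact (intervalIntegrable_rpow' (by linarith)).mul_continuousOn (by fun_prop)
    · exact (intervalIntegrable_rpow' (by linarith)).mul_continuousOn (by fun_prop)
  rw [hsplit, h1, h2, II]
  rcases lt_or_eq_of_le ht0 with h | h
  · have e1 : t^(a+2) = t^a * t^2 := by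
      nth_rewrite 1 [show a + 2 = a + (2:ℝ) by ring]
      rw [Real.rpow_add h, show ((2:ℝ)) = ((2:ℕ):ℝ) by norm_num, Real.rpow_natCast]
    have e2 : t^(a+1) = t^a * t := by
      nth_rewrite 1 [show a + 1 = a + (1:ℝ) by ring]
      rw [Real.rpow_add h, Real.rpow_one]
    rw [e1, e2]
    field_simp
    ring
  · rw [← h]
    rw [Real.zero_rpow (by linarith : a + 2 ≠ 0), Real.zero_rpow (by linarith : a + 1 ≠ 0),
      Real.zero_rpow (by linarith : a ≠ 0)]
    field_simp
    ring

lemma intNonpos {f : ℝ → ℝ} {u v : ℝ} (huv : u ≤ v) (h : ∀ s ∈ Set.Icc u v, f s ≤ 0) :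
    (∫ s in u..v, f s) ≤ 0 := by
  have h2 := intervalIntegral.integral_nonneg (μ := volume) (f := fun s => -f s) huv
    (fun s hs => neg_nonneg.mpr (h s hs))
  rw [intervalIntegral.integral_neg] at h2; linarith

lemma hasDerivAt_II {a : ℝ} (ha : 0 < a) (t : ℝ) : HasDerivAt (II a) (Ider a t) t := by
  have h1 : HasDerivAt (fun t : ℝ => t ^ (a+2)) ((a+2) * t ^ (a+1)) t := by
    have := Real.hasDerivAt_rpow_const (x := t) (p := a+2) (Or.inr (by linarith))
    convert this using 2
    ring
  unfold II Ider
  have h := (((((hasDerivAt_const t (a/(a+2))).fun_sub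
      (((hasDerivAt_id t).const_mul (2*a)).div_const (a+1)))).fun_add
      ((hasDerivAt_id t).fun_pow 2)).fun_sub ((h1.const_mul 2).div_const ((a+1)*(a+2))))
  refine h.congr_deriv ?_
  have ha1 : a + 1 ≠ 0 := by linarith
  have ha2 : a + 2 ≠ 0 := by linarith
  simp only [id]
  field_simp
  ring

lemma Ider_nonpos {a : ℝ} (ha : 0 < a) {t : ℝ} (ht : t ∈ Set.Icc (0:ℝ) 1) : Ider a t ≤ 0 := by
  have hber := one_add_mul_self_le_rpow_one_add (s := t - 1) (by linarith [ht.1])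
    (p := a + 1) (by linarith)
  rw [show (1:ℝ) + (t - 1) = t by ring] at hber
  have ha1 : (0:ℝ) < a + 1 := by linarith
  have key : -2*a + 2*t*(a+1) - 2*t^(a+1) ≤ 0 := by nlinarith [hber]
  have e : Ider a t = (-2*a + 2*t*(a+1) - 2*t^(a+1))/(a+1) := by
    unfold Ider; field_simp
  rw [e]
  exact div_nonpos_of_nonpos_of_nonneg key ha1.le

lemma II_one {a : ℝ} (ha : 0 < a) : II a 1 = 0 := by
  unfold II
  rw [Real.one_rpow]
  have ha1 : a + 1 ≠ 0 := by linarith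
  have ha2 : a + 2 ≠ 0 := by linarith
  field_simp
  ring

lemma contOn_rpow {a : ℝ} (ha : 0 < a) (s : Set ℝ) :
    ContinuousOn (fun t : ℝ => t ^ a) s :=
  continuousOn_id.rpow_const (fun _ _ => Or.inr ha.le)

lemma contOn_Ider {a : ℝ} (ha : 0 < a) (s : Set ℝ) : ContinuousOn (Ider a) s := by
  unfold Ider
  exact (continuousOn_const.add (continuousOn_const.mul continuousOn_id)).sub
    ((continuousOn_const.mul (contOn_rpow (by linarith : (0:ℝ) < a + 1) s)).div_const (a+1))

lemma II_nonneg {a : ℝ} (ha : 0 < a) {t : ℝ} (ht : t ∈ Set.Icc (0:ℝ) 1) : 0 ≤ II a t := by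
  have hftc : (∫ s in t..1, Ider a s) = II a 1 - II a t :=
    intervalIntegral.integral_eq_sub_of_hasDerivAt
      (fun s _ => hasDerivAt_II ha s)
      ((contOn_Ider ha _).intervalIntegrable)
  have hle : (∫ s in t..1, Ider a s) ≤ 0 := by
    apply intNonpos ht.2
    intro s hs
    exact Ider_nonpos ha ⟨ht.1.trans hs.1, hs.2⟩
  rw [II_one ha] at hftc
  linarith

lemma hasDerivAt_phi {a : ℝ} (ha : 0 < a) (t : ℝ) : HasDerivAt (phi a) (phi' a t) t := by
  unfold phi phi'
  have h1 : HasDerivAt (fun t : ℝ => ((a+1)/(a+2) - t)^2) (-(2*((a+1)/(a+2) - t))) t := by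
    have h0 : HasDerivAt (fun t : ℝ => (a+1)/(a+2) - t) (-1) t := by
      simpa using (hasDerivAt_const t ((a+1)/(a+2))).fun_sub (hasDerivAt_id t)
    have := h0.fun_pow 2
    refine this.congr_deriv ?_
    ring
  have h := (hasDerivAt_II ha t).fun_sub (h1.const_mul (a*(a+2)/(a+1)^2))
  refine h.congr_deriv ?_
  ring

lemma hasDerivAt_phi' {a : ℝ} (ha : 0 < a) (t : ℝ) : HasDerivAt (phi' a) (phi'' a t) t := by
  unfold phi' phi''
  have h1 : HasDerivAt (fun t : ℝ => t ^ (a+1)) ((a+1) * t ^ a) t := by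
    have := Real.hasDerivAt_rpow_const (x := t) (p := a+1) (Or.inr (by linarith))
    convert this using 2
    ring
  unfold Ider
  have h := (((hasDerivAt_const t (-2*a/(a+1))).fun_add ((hasDerivAt_id t).const_mul 2)).fun_sub
      ((h1.const_mul 2).div_const (a+1))).fun_add
      (((hasDerivAt_const t ((a+1)/(a+2))).fun_sub (hasDerivAt_id t)).const_mul
        (2*(a*(a+2)/(a+1)^2)))
  refine h.congr_deriv ?_
  have ha1 : a + 1 ≠ 0 := by linarith
  field_simp
  ring

lemma phi_zero {a : ℝ} (ha : 0 < a) : phi a 0 = 0 := by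
  unfold phi II
  rw [Real.zero_rpow (by linarith : a + 2 ≠ 0)]
  have ha1 : a + 1 ≠ 0 := by linarith
  have ha2 : a + 2 ≠ 0 := by linarith
  field_simp
  ring

lemma phi'_zero {a : ℝ} (ha : 0 < a) : phi' a 0 = 0 := by
  unfold phi' Ider
  rw [Real.zero_rpow (by linarith : a + 1 ≠ 0)]
  have ha1 : a + 1 ≠ 0 := by linarith
  have ha2 : a + 2 ≠ 0 := by linarith
  field_simp
  ring

lemma ftc_phi' {a : ℝ} (ha : 0 < a) (u v : ℝ) :
    (∫ s in u..v, phi'' a s) = phi' a v - phi' a u := by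
  apply intervalIntegral.integral_eq_sub_of_hasDerivAt (fun s _ => hasDerivAt_phi' ha s)
  apply ContinuousOn.intervalIntegrable
  unfold phi''
  exact (continuousOn_const.sub (continuousOn_const.mul (contOn_rpow ha _))).sub continuousOn_const

lemma ftc_phi {a : ℝ} (ha : 0 < a) (u v : ℝ) :
    (∫ s in u..v, phi' a s) = phi a v - phi a u := by
  apply intervalIntegral.integral_eq_sub_of_hasDerivAt (fun s _ => hasDerivAt_phi ha s)
  apply ContinuousOn.intervalIntegrable
  unfold phi'
  exact (contOn_Ider ha _).add (by fun_prop)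


lemma phi_nonneg {a : ℝ} (ha : 0 < a) {t : ℝ} (ht0 : 0 ≤ t) (hty : t ≤ (a+1)/(a+2)) :
    0 ≤ phi a t := by
  have ha1 : (0:ℝ) < a + 1 := by linarith
  have ha2 : (0:ℝ) < a + 2 := by linarith
  have hy10 : (0:ℝ) < (a+1)/(a+2) := by positivity
  have hy11 : (a+1)/(a+2) ≤ 1 := by rw [div_le_one ha2]; linarith
  set c := (1:ℝ)/(a+1)^2 with hc
  have hcpos : 0 < c := by positivity
  set ts := c ^ (a⁻¹ : ℝ) with hts
  have hts_pos : 0 < ts := Real.rpow_pos_of_pos hcpos _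
  have hts_pow : ts ^ a = c := by
    rw [hts, ← Real.rpow_mul hcpos.le, inv_mul_cancel₀ ha.ne', Real.rpow_one]
  have hphi''_eq : ∀ s : ℝ, phi'' a s = 2*(c - s^a) := by
    intro s; unfold phi''; rw [hc]; field_simp; ring
  have hpp_nonneg : ∀ s, 0 ≤ s → s ≤ ts → 0 ≤ phi'' a s := by
    intro s h1 h2
    rw [hphi''_eq]
    have h3 := Real.rpow_le_rpow h1 h2 ha.le
    rw [hts_pow] at h3; linarith
  have hpp_nonpos : ∀ s, ts ≤ s → phi'' a s ≤ 0 := by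
    intro s h2
    rw [hphi''_eq]
    have h3 := Real.rpow_le_rpow hts_pos.le h2 ha.le
    rw [hts_pow] at h3; linarith
  set s0 := min ts ((a+1)/(a+2)) with hs0
  have hs0_pos : 0 < s0 := lt_min hts_pos hy10
  have hphi'A : ∀ u, 0 ≤ u → u ≤ s0 → 0 ≤ phi' a u := by
    intro u h1 h2
    have hftc := ftc_phi' ha 0 u
    rw [phi'_zero ha] at hftc
    have hpos : 0 ≤ ∫ s in (0:ℝ)..u, phi'' a s :=
      intervalIntegral.integral_nonneg h1
        (fun s hs => hpp_nonneg s hs.1 (hs.2.trans (h2.trans (min_le_left _ _))))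
    linarith
  have hphiA : ∀ u, 0 ≤ u → u ≤ s0 → 0 ≤ phi a u := by
    intro u h1 h2
    have h3 := ftc_phi ha 0 u
    rw [phi_zero ha] at h3
    have hpos : 0 ≤ ∫ s in (0:ℝ)..u, phi' a s :=
      intervalIntegral.integral_nonneg h1 (fun s hs => hphi'A s hs.1 (hs.2.trans h2))
    linarith
  rcases le_or_gt t s0 with hcase | hcase
  · exact hphiA t ht0 hcase
  · have hts_le_y1 : ts ≤ (a+1)/(a+2) := by
      by_contra h
      push_neg at h
      have he : s0 = (a+1)/(a+2) := min_eq_right h.le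
      rw [he] at hcase; linarith
    have hs0_eq : s0 = ts := min_eq_left hts_le_y1
    have hts_le : ts ≤ t := by rw [← hs0_eq]; exact hcase.le
    rcases le_or_gt 0 (phi' a t) with hsign | hsign
    · have hphi'B : ∀ u ∈ Set.Icc s0 t, 0 ≤ phi' a u := by
        intro u hu
        have hftc := ftc_phi' ha u t
        have hle : (∫ s in u..t, phi'' a s) ≤ 0 := by
          apply intNonpos hu.2
          intro s hs
          exact hpp_nonpos s (le_trans (hs0_eq ▸ hu.1) hs.1)
        linarith
      have hftc := ftc_phi ha s0 t
      have hpos : 0 ≤ ∫ s in s0..t, phi' a s :=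
        intervalIntegral.integral_nonneg hcase.le (fun s hs => hphi'B s hs)
      have hbase := hphiA s0 hs0_pos.le le_rfl
      linarith
    · have hphi'C : ∀ u ∈ Set.Icc t ((a+1)/(a+2)), phi' a u ≤ 0 := by
        intro u hu
        have hftc := ftc_phi' ha t u
        have hle : (∫ s in t..u, phi'' a s) ≤ 0 :=
          intNonpos hu.1 (fun s hs => hpp_nonpos s (hts_le.trans hs.1))
        linarith
      have h1 := ftc_phi ha t ((a+1)/(a+2))
      have h2 : (∫ s in t..((a+1)/(a+2)), phi' a s) ≤ 0 := intNonpos hty hphi'C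
      have h3 : phi a ((a+1)/(a+2)) = II a ((a+1)/(a+2)) := by
        unfold phi; simp
      have h4 := II_nonneg ha ⟨hy10.le, hy11⟩
      linarith

lemma ker_nonneg {a : ℝ} (ha : 0 < a) {t : ℝ} (ht : t ∈ Set.Icc (0:ℝ) 1) :
    0 ≤ II a t - (a*(a+2)/(a+1)^2) * (max ((a+1)/(a+2) - t) 0)^2 := by
  rcases le_or_gt t ((a+1)/(a+2)) with h | h
  · rw [max_eq_left (by linarith)]
    have h2 := phi_nonneg ha ht.1 h
    unfold phi at h2
    exact h2
  · rw [max_eq_right (by linarith)]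
    simpa using II_nonneg ha ht

lemma fubini_step {a b x : ℝ} (ha : 0 < a) (hx0 : 0 < x) (hx1 : x < 1) :
    a * (∫ y in (0:ℝ)..1, y^(a-1) * (∫ t in (0:ℝ)..1, K3 b x t * (max (y-t) 0)^2 / 2))
      = ∫ t in (0:ℝ)..1, K3 b x t * II a t / 2 := by
  set s : Set ℝ := Set.Ioc (0:ℝ) 1 with hs
  have hmeas_s : MeasurableSet s := measurableSet_Ioc
  set F : ℝ × ℝ → ℝ := fun p => p.1^(a-1) * (K3 b x p.2 * (max (p.1-p.2) 0)^2 / 2) with hF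
  have hupos : ∀ t ∈ s, (0:ℝ) < 1 - x*t := by
    intro t ht
    nlinarith [ht.1, ht.2]
  have hFc : ContinuousOn F (s ×ˢ s) := by
    apply ContinuousOn.mul
    · apply ContinuousOn.rpow_const (continuous_fst.continuousOn)
      intro p hp
      exact Or.inl (ne_of_gt hp.1.1)
    · apply ContinuousOn.div_const
      apply ContinuousOn.mul
      · apply ContinuousOn.mul continuousOn_const
        apply ContinuousOn.rpow_const
        · exact (continuous_const.sub (continuous_const.mul continuous_snd)).continuousOn
        · intro p hp
          exact Or.inl (ne_of_gt (hupos p.2 hp.2))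
      · exact (((continuous_fst.sub continuous_snd).max continuous_const).pow 2).continuousOn
  have hF_ae : AEStronglyMeasurable F ((volume.restrict s).prod (volume.restrict s)) := by
    rw [Measure.prod_restrict]
    exact hFc.aestronglyMeasurable (hmeas_s.prod hmeas_s)
  set C : ℝ := |x^3*(b-1)*(b-2)*(b-3)| * max ((1-x)^(b-4)) 1 + 1 with hC
  have hmax_nonneg : (0:ℝ) ≤ max ((1-x)^(b-4)) 1 := le_trans zero_le_one (le_max_right _ _)
  have hC1 : 1 ≤ C := by
    rw [hC]
    nlinarith [abs_nonneg (x^3*(b-1)*(b-2)*(b-3)), hmax_nonneg,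
      mul_nonneg (abs_nonneg (x^3*(b-1)*(b-2)*(b-3))) hmax_nonneg]
  have hK3 : ∀ t ∈ s, |K3 b x t| ≤ C := by
    intro t ht
    have h1 := hupos t ht
    have h2 : 1 - x ≤ 1 - x*t := by nlinarith [ht.2]
    have h3 : 1 - x*t ≤ 1 := by nlinarith [ht.1.le]
    have hbase : (1-x*t)^(b-4) ≤ max ((1-x)^(b-4)) 1 := by
      rcases le_or_gt 0 (b-4) with hcb | hcb
      · exact le_max_of_le_right (Real.rpow_le_one h1.le h3 hcb)
      · exact le_max_of_le_left (Real.rpow_le_rpow_of_nonpos (by linarith) h2 hcb.le)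
    have hpos : 0 < (1-x*t)^(b-4) := Real.rpow_pos_of_pos h1 _
    rw [K3, abs_mul, abs_neg, abs_of_pos hpos]
    calc |x^3*(b-1)*(b-2)*(b-3)| * (1-x*t)^(b-4)
        ≤ |x^3*(b-1)*(b-2)*(b-3)| * max ((1-x)^(b-4)) 1 :=
          mul_le_mul_of_nonneg_left hbase (abs_nonneg _)
      _ ≤ C := by rw [hC]; linarith
  haveI hfin : IsFiniteMeasure (volume.restrict s) := by
    constructor
    rw [Measure.restrict_apply_univ]
    simp [hs]
  have hbound : Integrable (fun p : ℝ×ℝ => p.1^(a-1) * C)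
      ((volume.restrict s).prod (volume.restrict s)) := by
    exact Integrable.mul_prod (f := fun y : ℝ => y^(a-1)) (g := fun _ : ℝ => C)
      (intervalIntegrable_rpow' (by linarith : (-1:ℝ) < a - 1)).1 (integrable_const C)
  have hFint : Integrable F ((volume.restrict s).prod (volume.restrict s)) := by
    apply hbound.mono' hF_ae
    rw [Measure.prod_restrict]
    filter_upwards [ae_restrict_mem (hmeas_s.prod hmeas_s)]
    intro p hp
    obtain ⟨hp1, hp2⟩ := hp
    have hy_nonneg : (0:ℝ) ≤ p.1^(a-1) := Real.rpow_nonneg hp1.1.le _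
    have hm1 : max (p.1 - p.2) 0 ≤ 1 := by
      apply max_le _ zero_le_one
      linarith [hp1.2, hp2.1]
    have hm0 : (0:ℝ) ≤ max (p.1 - p.2) 0 := le_max_right _ _
    have hmle : (max (p.1 - p.2) 0)^2 ≤ 1 := by nlinarith
    rw [hF, Real.norm_eq_abs, abs_mul, abs_of_nonneg hy_nonneg]
    apply mul_le_mul_of_nonneg_left _ hy_nonneg
    rw [abs_div, abs_mul, abs_of_nonneg (by positivity : (0:ℝ) ≤ (max (p.1-p.2) 0)^2)]
    calc |K3 b x p.2| * (max (p.1-p.2) 0)^2 / |2|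
        ≤ C * 1 / 2 := by
          rw [abs_two]
          apply div_le_div_of_nonneg_right ?_ (by norm_num)
          · exact mul_le_mul (hK3 p.2 hp2) hmle (by positivity) (by linarith)
      _ ≤ C := by linarith
  have hswap := MeasureTheory.integral_integral_swap (f := fun y t => F (y, t))
    (μ := volume.restrict s) (ν := volume.restrict s) hFint
  -- convert LHS
  have hlhs : (∫ y in (0:ℝ)..1, y^(a-1) * (∫ t in (0:ℝ)..1, K3 b x t * (max (y-t) 0)^2 / 2))
      = ∫ y in s, ∫ t in s, F (y, t) := by
    rw [intervalIntegral.integral_of_le zero_le_one]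
    apply setIntegral_congr_fun hmeas_s
    intro y _
    simp only
    rw [intervalIntegral.integral_of_le zero_le_one, ← MeasureTheory.integral_const_mul]
  have hrhs : (∫ t in s, ∫ y in s, F (y, t))
      = ∫ t in s, (K3 b x t / 2) * ∫ y in (0:ℝ)..1, y^(a-1) * (max (y-t) 0)^2 := by
    apply setIntegral_congr_fun hmeas_s
    intro t _
    simp only
    rw [intervalIntegral.integral_of_le zero_le_one, ← MeasureTheory.integral_const_mul]
    apply setIntegral_congr_fun hmeas_s
    intro y _
    simp only [hF]
    ring
  rw [hlhs, hswap, hrhs, ← MeasureTheory.integral_const_mul]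
  rw [← intervalIntegral.integral_of_le zero_le_one
    (f := fun t => a * (K3 b x t / 2 * ∫ y in (0:ℝ)..1, y^(a-1) * (max (y-t) 0)^2))]
  apply intervalIntegral.integral_congr
  intro t ht
  rw [Set.uIcc_of_le zero_le_one] at ht
  simp only
  rw [← kerInt ha ht]
  ring


lemma contOn_K3 {b x : ℝ} (hx0 : 0 < x) (hx1 : x < 1) {S : Set ℝ}
    (hS : S ⊆ Set.Icc (0:ℝ) 1) : ContinuousOn (K3 b x) S := by
  unfold K3
  apply ContinuousOn.mul continuousOn_const
  apply ContinuousOn.rpow_const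
  · exact (continuous_const.sub (continuous_const.mul continuous_id)).continuousOn
  · intro t ht
    obtain ⟨h1, h2⟩ := hS ht
    refine Or.inl (ne_of_gt ?_)
    nlinarith

lemma contOn_II {a : ℝ} (ha : 0 < a) (S : Set ℝ) : ContinuousOn (II a) S := by
  unfold II
  have h1 : ContinuousOn (fun t : ℝ => 2*t^(a+2)/((a+1)*(a+2))) S :=
    (continuousOn_const.mul (contOn_rpow (by linarith : (0:ℝ) < a + 2) S)).div_const _
  have h2 : ContinuousOn (fun t : ℝ => a/(a+2) - 2*a*t/(a+1) + t^2) S := by fun_prop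
  exact h2.sub h1

lemma Rsplit {b x : ℝ} (hx0 : 0 < x) (hx1 : x < 1) {y : ℝ} (hy : y ∈ Set.Icc (0:ℝ) 1) :
    (∫ t in (0:ℝ)..y, K3 b x t * (y-t)^2/2)
      = ∫ t in (0:ℝ)..1, K3 b x t * (max (y-t) 0)^2/2 := by
  have hsub1 : Set.uIcc (0:ℝ) y ⊆ Set.Icc (0:ℝ) 1 := by
    rw [Set.uIcc_of_le hy.1]
    exact Set.Icc_subset_Icc le_rfl hy.2
  have hsub2 : Set.uIcc y (1:ℝ) ⊆ Set.Icc (0:ℝ) 1 := by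
    rw [Set.uIcc_of_le hy.2]
    exact Set.Icc_subset_Icc hy.1 le_rfl
  have hcont1 : IntervalIntegrable (fun t => K3 b x t * (max (y-t) 0)^2/2) volume 0 y := by
    apply ContinuousOn.intervalIntegrable
    exact ((contOn_K3 hx0 hx1 hsub1).mul (by fun_prop)).div_const 2
  have hcont2 : IntervalIntegrable (fun t => K3 b x t * (max (y-t) 0)^2/2) volume y 1 := by
    apply ContinuousOn.intervalIntegrable
    exact ((contOn_K3 hx0 hx1 hsub2).mul (by fun_prop)).div_const 2
  have hsplit := intervalIntegral.integral_add_adjacent_intervals hcont1 hcont2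
  have h2 : (∫ t in y..(1:ℝ), K3 b x t * (max (y-t) 0)^2/2) = 0 := by
    have hEq : Set.EqOn (fun t => K3 b x t * (max (y-t) 0)^2/2) (fun _ => (0:ℝ))
        (Set.uIcc y 1) := by
      intro t ht
      rw [Set.uIcc_of_le hy.2] at ht
      simp only
      rw [max_eq_right (by linarith [ht.1])]
      simp
    rw [intervalIntegral.integral_congr hEq]
    simp
  have h1 : (∫ t in (0:ℝ)..y, K3 b x t * (max (y-t) 0)^2/2)
      = ∫ t in (0:ℝ)..y, K3 b x t * (y-t)^2/2 := by
    apply intervalIntegral.integral_congr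
    intro t ht
    rw [Set.uIcc_of_le hy.1] at ht
    simp only
    rw [max_eq_left (by linarith [ht.2])]
  rw [← hsplit, h1, h2, add_zero]

lemma err_eq {a b x : ℝ} (ha : 0 < a) (hx : x ∈ Set.Ioo (0:ℝ) 1) :
    Q a b x - (1/(a+1)^2 + a*(a+2)/(a+1)^2 * (1 - x*((a+1)/(a+2)))^(b-1))
      = ∫ t in (0:ℝ)..1, K3 b x t
          * (II a t - (a*(a+2)/(a+1)^2) * (max ((a+1)/(a+2) - t) 0)^2) / 2 := by
  obtain ⟨hx0, hx1⟩ := hx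
  have ha1 : (0:ℝ) < a + 1 := by linarith
  have ha2 : (0:ℝ) < a + 2 := by linarith
  set c1 : ℝ := -(x*(b-1)) with hc1
  set c2 : ℝ := x^2*(b-1)*(b-2) with hc2
  set y1 : ℝ := (a+1)/(a+2) with hy1
  have hy1mem : y1 ∈ Set.Icc (0:ℝ) 1 := by
    constructor
    · positivity
    · rw [hy1, div_le_one ha2]; linarith
  have hupos : ∀ y ∈ Set.uIcc (0:ℝ) 1, (0:ℝ) < 1 - x*y := by
    intro y hy
    rw [Set.uIcc_of_le zero_le_one] at hy
    nlinarith [hy.1, hy.2]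
  have hcont_g : ContinuousOn (fun y : ℝ => (1-x*y)^(b-1)) (Set.uIcc (0:ℝ) 1) := by
    apply ContinuousOn.rpow_const
    · exact (continuous_const.sub (continuous_const.mul continuous_id)).continuousOn
    · exact fun y hy => Or.inl (ne_of_gt (hupos y hy))
  have hg_int : IntervalIntegrable (fun y : ℝ => y^(a-1) * (1-x*y)^(b-1)) volume 0 1 :=
    (intervalIntegrable_rpow' (by linarith)).mul_continuousOn hcont_g
  have hq_int : IntervalIntegrable (fun y : ℝ => y^(a-1) * (1 + c1*y + c2*y^2/2)) volume 0 1 :=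
    (intervalIntegrable_rpow' (by linarith)).mul_continuousOn (by fun_prop)
  -- moment integral
  have hmom : (∫ y in (0:ℝ)..1, y^(a-1) * (1 + c1*y + c2*y^2/2))
      = 1/a + c1*(1/(a+1)) + c2/2*(1/(a+2)) := by
    have hEq : Set.EqOn (fun y : ℝ => y^(a-1) * (1 + c1*y + c2*y^2/2))
        (fun y : ℝ => y^(a-1) + c1*(y^(a-1)*y^(1:ℕ)) + (c2/2)*(y^(a-1)*y^(2:ℕ)))
        (Set.uIcc (0:ℝ) 1) := by
      intro y _
      simp only [pow_one]
      ring
    rw [intervalIntegral.integral_congr hEq]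
    have i0 : IntervalIntegrable (fun y : ℝ => y^(a-1)) volume 0 1 :=
      intervalIntegrable_rpow' (by linarith)
    have i1 : IntervalIntegrable (fun y : ℝ => c1*(y^(a-1)*y^(1:ℕ))) volume 0 1 :=
      ((intervalIntegrable_rpow' (by linarith)).mul_continuousOn (by fun_prop)).const_mul _
    have i2 : IntervalIntegrable (fun y : ℝ => (c2/2)*(y^(a-1)*y^(2:ℕ))) volume 0 1 :=
      ((intervalIntegrable_rpow' (by linarith)).mul_continuousOn (by fun_prop)).const_mul _
    rw [intervalIntegral.integral_add (i0.add i1) i2, intervalIntegral.integral_add i0 i1,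
      intervalIntegral.integral_const_mul, intervalIntegral.integral_const_mul,
      mom0 ha, mom_gen ha 1 one_pos, mom_gen ha 2 two_pos]
    push_cast
    ring
  -- Taylor rewrite of the remainder integrand
  have htay : Set.EqOn
      (fun y : ℝ => y^(a-1) * (1-x*y)^(b-1) - y^(a-1) * (1 + c1*y + c2*y^2/2))
      (fun y : ℝ => y^(a-1) * ∫ t in (0:ℝ)..1, K3 b x t * (max (y-t) 0)^2/2)
      (Set.uIcc (0:ℝ) 1) := by
    intro y hy
    rw [Set.uIcc_of_le zero_le_one] at hy
    have h1 := taylor_id (b := b) ⟨hx0, hx1⟩ hy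
    have h2 := Rsplit (b := b) hx0 hx1 hy
    simp only
    rw [← mul_sub, hc1, hc2, h1]
    rw [show (∫ t in (0:ℝ)..y, -(x ^ 3 * (b - 1) * (b - 2) * (b - 3)) * (1 - x * t) ^ (b - 4) * (y - t) ^ 2 / 2)
        = ∫ t in (0:ℝ)..y, K3 b x t * (y-t)^2/2 from rfl, h2]
  have hsub : (∫ y in (0:ℝ)..1, (y^(a-1) * (1-x*y)^(b-1) - y^(a-1) * (1 + c1*y + c2*y^2/2)))
      = (∫ y in (0:ℝ)..1, y^(a-1) * (1-x*y)^(b-1))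
        - ∫ y in (0:ℝ)..1, y^(a-1) * (1 + c1*y + c2*y^2/2) :=
    intervalIntegral.integral_sub hg_int hq_int
  have hRint : (∫ y in (0:ℝ)..1, y^(a-1) * ∫ t in (0:ℝ)..1, K3 b x t * (max (y-t) 0)^2/2)
      = (∫ y in (0:ℝ)..1, y^(a-1) * (1-x*y)^(b-1))
        - ∫ y in (0:ℝ)..1, y^(a-1) * (1 + c1*y + c2*y^2/2) := by
    rw [← hsub]
    exact (intervalIntegral.integral_congr htay).symm
  -- Taylor at y1
  have htay1 : (1 - x*y1)^(b-1)
      = (1 + c1*y1 + c2*y1^2/2) + ∫ t in (0:ℝ)..1, K3 b x t * (max (y1-t) 0)^2/2 := by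
    have h1 := taylor_id (b := b) ⟨hx0, hx1⟩ hy1mem
    have h2 := Rsplit (b := b) hx0 hx1 hy1mem
    rw [show (∫ t in (0:ℝ)..y1, -(x ^ 3 * (b - 1) * (b - 2) * (b - 3)) * (1 - x * t) ^ (b - 4) * (y1 - t) ^ 2 / 2)
        = ∫ t in (0:ℝ)..y1, K3 b x t * (y1-t)^2/2 from rfl, h2] at h1
    rw [hc1, hc2]
    linarith [h1]
  -- assemble
  have hfub := fubini_step (b := b) ha hx0 hx1
  have hQ : Q a b x = a * ((1/a + c1*(1/(a+1)) + c2/2*(1/(a+2)))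
      + ∫ y in (0:ℝ)..1, y^(a-1) * ∫ t in (0:ℝ)..1, K3 b x t * (max (y-t) 0)^2/2) := by
    rw [Q, hRint, ← hmom]
    ring
  rw [hQ, htay1]
  -- now pure algebra plus combining the two t-integrals
  have hker_int1 : IntervalIntegrable (fun t => K3 b x t * II a t / 2) volume 0 1 := by
    apply ContinuousOn.intervalIntegrable
    rw [Set.uIcc_of_le zero_le_one]
    exact ((contOn_K3 hx0 hx1 (le_refl _)).mul (contOn_II ha _)).div_const 2
  have hker_int2 : IntervalIntegrable
      (fun t => (a*(a+2)/(a+1)^2) * (K3 b x t * (max (y1-t) 0)^2/2)) volume 0 1 := by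
    apply ContinuousOn.intervalIntegrable
    rw [Set.uIcc_of_le zero_le_one]
    exact (continuousOn_const.mul (((contOn_K3 hx0 hx1 (le_refl _)).mul
      (by fun_prop)).div_const 2))
  have hsplit2 : (∫ t in (0:ℝ)..1, K3 b x t * II a t / 2)
      - (a*(a+2)/(a+1)^2) * (∫ t in (0:ℝ)..1, K3 b x t * (max (y1-t) 0)^2/2)
      = ∫ t in (0:ℝ)..1, K3 b x t
          * (II a t - (a*(a+2)/(a+1)^2) * (max (y1 - t) 0)^2) / 2 := by
    rw [← intervalIntegral.integral_const_mul]
    rw [← intervalIntegral.integral_sub hker_int1 hker_int2]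
    apply intervalIntegral.integral_congr
    intro t _
    simp only
    ring
  rw [← hsplit2]
  have halg : a * (1/a + c1*(1/(a+1)) + c2/2*(1/(a+2)))
      - (1/(a+1)^2 + a*(a+2)/(a+1)^2 * (1 + c1*y1 + c2*y1^2/2)) = 0 := by
    rw [hy1]
    field_simp
    ring
  have hexp : a * ((1/a + c1*(1/(a+1)) + c2/2*(1/(a+2)))
        + ∫ y in (0:ℝ)..1, y^(a-1) * ∫ t in (0:ℝ)..1, K3 b x t * (max (y-t) 0)^2/2)
      = a * (1/a + c1*(1/(a+1)) + c2/2*(1/(a+2)))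
        + a * ∫ y in (0:ℝ)..1, y^(a-1) * ∫ t in (0:ℝ)..1, K3 b x t * (max (y-t) 0)^2/2 := by
    ring
  rw [hexp, hfub]
  linarith [halg]

end BetaQ3

open BetaQ3 in
theorem beta_Q3_bounds (a b : ℝ) (ha : 0 < a) (hb : 0 < b)
    (x : ℝ) (hx : x ∈ Set.Ioo (0:ℝ) 1) :
    ((b ≤ 1 ∨ (2 ≤ b ∧ b ≤ 3)) →
      1 / (a + 1) ^ 2
        + a * (a + 2) / (a + 1) ^ 2 * (1 - (a + 1) * x / (a + 2)) ^ (b - 1) ≤ Q a b x) ∧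
    (((1 ≤ b ∧ b ≤ 2) ∨ 3 ≤ b) →
      Q a b x ≤ 1 / (a + 1) ^ 2
        + a * (a + 2) / (a + 1) ^ 2 * (1 - (a + 1) * x / (a + 2)) ^ (b - 1)) := by
  obtain ⟨hx0, hx1⟩ := hx
  have herr := err_eq (b := b) ha ⟨hx0, hx1⟩
  have hform : (1 - (a + 1) * x / (a + 2)) = (1 - x*((a+1)/(a+2))) := by ring
  have hker : ∀ t ∈ Set.Icc (0:ℝ) 1,
      0 ≤ II a t - (a*(a+2)/(a+1)^2) * (max ((a+1)/(a+2) - t) 0)^2 :=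
    fun t ht => ker_nonneg ha ht
  constructor
  · intro hcase
    have hsign : (b-1)*(b-2)*(b-3) ≤ 0 := by
      rcases hcase with h | ⟨h1, h2⟩
      · have h23 : 0 ≤ (b-2)*(b-3) := by nlinarith
        nlinarith [mul_nonneg h23 (by linarith : (0:ℝ) ≤ 1 - b)]
      · have h12 : 0 ≤ (b-1)*(b-2) := mul_nonneg (by linarith) (by linarith)
        nlinarith [mul_nonneg h12 (by linarith : (0:ℝ) ≤ 3 - b)]
    have hnonneg : 0 ≤ ∫ t in (0:ℝ)..1, K3 b x t
        * (II a t - (a*(a+2)/(a+1)^2) * (max ((a+1)/(a+2) - t) 0)^2) / 2 := by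
      apply intervalIntegral.integral_nonneg zero_le_one
      intro t ht
      have hK3pos : 0 ≤ K3 b x t := by
        rw [K3]
        have hup : (0:ℝ) < 1 - x*t := by nlinarith [ht.1, ht.2]
        have hrp := Real.rpow_pos_of_pos hup (b-4)
        have hx3 : (0:ℝ) < x^3 := by positivity
        have hs : x^3*(b-1)*(b-2)*(b-3) ≤ 0 := by
          nlinarith [mul_nonpos_of_nonneg_of_nonpos hx3.le hsign]
        exact mul_nonneg (by linarith) hrp.le
      have := hker t ht
      positivity
    rw [hform]
    linarith [herr, hnonneg]
  · intro hcase
    have hsign : 0 ≤ (b-1)*(b-2)*(b-3) := by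
      rcases hcase with ⟨h1, h2⟩ | h
      · have h23 : 0 ≤ (2-b)*(3-b) := mul_nonneg (by linarith) (by linarith)
        nlinarith [mul_nonneg (by linarith : (0:ℝ) ≤ b-1) h23]
      · exact mul_nonneg (mul_nonneg (by linarith) (by linarith)) (by linarith)
    have hnonpos : (∫ t in (0:ℝ)..1, K3 b x t
        * (II a t - (a*(a+2)/(a+1)^2) * (max ((a+1)/(a+2) - t) 0)^2) / 2) ≤ 0 := by
      apply intNonpos zero_le_one
      intro t ht
      have hK3neg : K3 b x t ≤ 0 := by
        rw [K3]
        have hup : (0:ℝ) < 1 - x*t := by nlinarith [ht.1, ht.2]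
        have hrp := Real.rpow_pos_of_pos hup (b-4)
        have hx3 : (0:ℝ) < x^3 := by positivity
        have hs : 0 ≤ x^3*(b-1)*(b-2)*(b-3) := by
          nlinarith [mul_nonneg hx3.le hsign]
        exact mul_nonpos_of_nonpos_of_nonneg (by linarith) hrp.le
      have hk := hker t ht
      have : K3 b x t * (II a t - (a*(a+2)/(a+1)^2) * (max ((a+1)/(a+2) - t) 0)^2) ≤ 0 :=
        mul_nonpos_of_nonpos_of_nonneg hK3neg hk
      linarith
    rw [hform]
    linarith [herr, hnonpos]
end

section
/- Let a, b > 0 and define Q_{a,b}^{[5]}(x) := (a(1−x)^{b−1} + 1)/(a+1) − a(b−1)(b−2)x² (a + 5 + 2(a+2)(1−x)^{b−3}) / (6(a+1)(a+2)(a+3)) for x ∈ (0,1). Then for all x ∈ (0,1): if b ∈ (0,1] ∪ [2,3] ∪ [4,∞) then Q_{a,b}(x) ≥ Q_{a,b}^{[5]}(x), and if b ∈ [1,2] ∪ [3,4] then Q_{a,b}(x) ≤ Q_{a,b}^{[5]}(x). -/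
open MeasureTheory Set


lemma convexOn_rpow_nonpos {p : ℝ} (hp : p ≤ 0) :
    ConvexOn ℝ (Set.Ioi (0:ℝ)) fun u : ℝ => u ^ p := by
  apply convexOn_of_hasDerivWithinAt2_nonneg (f' := fun u => p * u ^ (p - 1))
    (f'' := fun u => p * ((p - 1) * u ^ (p - 1 - 1))) (convex_Ioi 0)
  · intro u hu
    exact (Real.continuousAt_rpow_const u p (Or.inl (ne_of_gt hu))).continuousWithinAt
  · intro u hu
    rw [interior_Ioi] at hu
    exact (Real.hasDerivAt_rpow_const (Or.inl (ne_of_gt hu))).hasDerivWithinAt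
  · intro u hu
    rw [interior_Ioi] at hu
    exact ((Real.hasDerivAt_rpow_const (p := p - 1)
      (Or.inl (ne_of_gt hu))).const_mul p).hasDerivWithinAt
  · intro u hu
    rw [interior_Ioi] at hu
    have hc : (0:ℝ) ≤ u ^ (p - 1 - 1) := Real.rpow_nonneg (le_of_lt hu) _
    nlinarith [mul_nonneg (mul_nonneg (neg_nonneg.2 hp) (by linarith : (0:ℝ) ≤ 1 - p)) hc]

lemma interp_le {p x y : ℝ} (hp : p ≤ 0 ∨ 1 ≤ p) (hx0 : 0 < x) (hx1 : x < 1)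
    (hy0 : 0 ≤ y) (hy1 : y ≤ 1) : (1 - x * y) ^ p ≤ (1 - y) + y * (1 - x) ^ p := by
  have hcv : ConvexOn ℝ (Set.Ioi (0:ℝ)) fun u : ℝ => u ^ p := by
    rcases hp with hp | hp
    · exact convexOn_rpow_nonpos hp
    · exact (convexOn_rpow hp).subset (fun u hu => mem_Ici.2 (le_of_lt hu)) (convex_Ioi 0)
  have h := hcv.2 (show (1:ℝ) ∈ Ioi 0 by norm_num)
    (show (1 - x) ∈ Ioi (0:ℝ) by simp only [mem_Ioi]; linarith)
    (by linarith : (0:ℝ) ≤ 1 - y) hy0 (by ring)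
  simp only [smul_eq_mul, mul_one, Real.one_rpow] at h
  calc (1 - x * y) ^ p = ((1 - y) + y * (1 - x)) ^ p := by ring_nf
    _ ≤ (1 - y) + y * (1 - x) ^ p := h

lemma interp_ge {p x y : ℝ} (hp0 : 0 ≤ p) (hp1 : p ≤ 1) (hx0 : 0 < x) (hx1 : x < 1)
    (hy0 : 0 ≤ y) (hy1 : y ≤ 1) : (1 - y) + y * (1 - x) ^ p ≤ (1 - x * y) ^ p := by
  have hcc := Real.concaveOn_rpow hp0 hp1
  have h := hcc.2 (show (1:ℝ) ∈ Ici 0 by norm_num)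
    (show (1 - x) ∈ Ici (0:ℝ) by simp only [mem_Ici]; linarith)
    (by linarith : (0:ℝ) ≤ 1 - y) hy0 (by ring)
  simp only [smul_eq_mul, mul_one, Real.one_rpow] at h
  calc (1 - y) + y * (1 - x) ^ p ≤ ((1 - y) + y * (1 - x)) ^ p := h
    _ = (1 - x * y) ^ p := by ring_nf


noncomputable def Ff (b x y : ℝ) : ℝ :=
  (1 - x * y) ^ (b - 1) - ((1 - y) + y * (1 - x) ^ (b - 1))
    + x ^ 2 * (b - 1) * (b - 2) *
        (2 * y - 3 * y ^ 2 + y ^ 3 + (1 - x) ^ (b - 3) * (y - y ^ 3)) / 6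

noncomputable def Ff' (b x y : ℝ) : ℝ :=
  -x * ((b - 1) * (1 - x * y) ^ (b - 2)) + (1 - (1 - x) ^ (b - 1))
    + x ^ 2 * (b - 1) * (b - 2) *
        (2 - 6 * y + 3 * y ^ 2 + (1 - x) ^ (b - 3) * (1 - 3 * y ^ 2)) / 6

noncomputable def Ff'' (b x y : ℝ) : ℝ :=
  x ^ 2 * (b - 1) * (b - 2) * ((1 - x * y) ^ (b - 3) - ((1 - y) + y * (1 - x) ^ (b - 3)))

lemma hda_rpoly (p x A c0 c1 c2 c3 : ℝ) (y : ℝ) (h : 1 - x * y ≠ 0) :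
    HasDerivAt (fun y : ℝ => A * (1 - x * y) ^ p + (c0 + c1 * y + c2 * y ^ 2 + c3 * y ^ 3))
      (A * (-x * p * (1 - x * y) ^ (p - 1)) + (c1 + 2 * c2 * y + 3 * c3 * y ^ 2)) y := by
  have hlin : HasDerivAt (fun y : ℝ => 1 - x * y) (-x) y := by
    simpa using ((hasDerivAt_id y).const_mul x).const_sub 1
  have h2 := (hlin.rpow_const (p := p) (Or.inl h)).const_mul A
  have i1 : HasDerivAt (fun y : ℝ => y) 1 y := hasDerivAt_id y
  have i2 : HasDerivAt (fun y : ℝ => y ^ 2) (2 * y) y := by simpa using hasDerivAt_pow 2 y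
  have i3 : HasDerivAt (fun y : ℝ => y ^ 3) (3 * y ^ 2) y := by
    have := hasDerivAt_pow 3 y
    norm_num at this
    exact this
  have h3 := (((i1.const_mul c1).add (i2.const_mul c2)).add (i3.const_mul c3)).const_add c0
  have h4 := h2.add h3
  have hfun : (fun y : ℝ => A * (1 - x * y) ^ p + (c0 + (c1 * y + c2 * y ^ 2 + c3 * y ^ 3)))
      = (fun y : ℝ => A * (1 - x * y) ^ p + (c0 + c1 * y + c2 * y ^ 2 + c3 * y ^ 3)) := by
    funext y; ring
  replace h4 : HasDerivAt (fun y : ℝ => A * (1 - x * y) ^ p + (c0 + (c1 * y + c2 * y ^ 2 + c3 * y ^ 3))) _ y := h4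
  rw [hfun] at h4
  convert h4 using 1
  ring

lemma hdFf (b x : ℝ) (y : ℝ) (h : 1 - x * y ≠ 0) :
    HasDerivAt (Ff b x) (Ff' b x y) y := by
  have key := hda_rpoly (b - 1) x 1 0 (1 - (1 - x) ^ (b - 1)
      + x ^ 2 * (b - 1) * (b - 2) * (2 + (1 - x) ^ (b - 3)) / 6)
    (x ^ 2 * (b - 1) * (b - 2) * (-3) / 6)
    (x ^ 2 * (b - 1) * (b - 2) * (1 - (1 - x) ^ (b - 3)) / 6) y h
  have hfun : Ff b x = (fun y : ℝ => 1 * (1 - x * y) ^ (b - 1)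
      + (0 + (1 - (1 - x) ^ (b - 1)
          + x ^ 2 * (b - 1) * (b - 2) * (2 + (1 - x) ^ (b - 3)) / 6) * y
        + x ^ 2 * (b - 1) * (b - 2) * (-3) / 6 * y ^ 2
        + x ^ 2 * (b - 1) * (b - 2) * (1 - (1 - x) ^ (b - 3)) / 6 * y ^ 3) + (-1)) := by
    funext y; simp only [Ff]; ring
  have key2 := key.add_const (-1)
  rw [← hfun] at key2
  convert key2 using 1
  · rfl
  · rfl
  simp only [Ff']
  rw [show b - 1 - 1 = b - 2 by ring]
  ring

lemma hdFf' (b x : ℝ) (y : ℝ) (h : 1 - x * y ≠ 0) :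
    HasDerivAt (Ff' b x) (Ff'' b x y) y := by
  have key := hda_rpoly (b - 2) x (-(x * (b - 1))) (1 - (1 - x) ^ (b - 1)
      + x ^ 2 * (b - 1) * (b - 2) * (2 + (1 - x) ^ (b - 3)) / 6)
    (x ^ 2 * (b - 1) * (b - 2) * (-6) / 6)
    (x ^ 2 * (b - 1) * (b - 2) * (3 + (1 - x) ^ (b - 3) * (-3)) / 6) 0 y h
  have hfun : Ff' b x = (fun y : ℝ => -(x * (b - 1)) * (1 - x * y) ^ (b - 2)
      + (1 - (1 - x) ^ (b - 1) + x ^ 2 * (b - 1) * (b - 2) * (2 + (1 - x) ^ (b - 3)) / 6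
        + x ^ 2 * (b - 1) * (b - 2) * (-6) / 6 * y
        + x ^ 2 * (b - 1) * (b - 2) * (3 + (1 - x) ^ (b - 3) * (-3)) / 6 * y ^ 2
        + 0 * y ^ 3)) := by
    funext y; simp only [Ff']; ring
  rw [← hfun] at key
  convert key using 1
  simp only [Ff'']
  rw [show b - 2 - 1 = b - 3 by ring]
  ring

lemma Ff_zero (b x : ℝ) : Ff b x 0 = 0 := by
  simp [Ff]

lemma Ff_one (b x : ℝ) : Ff b x 1 = 0 := by
  simp only [Ff]; ring_nf

lemma Ff_cont (b x : ℝ) (hx0 : 0 < x) (hx1 : x < 1) :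
    ContinuousOn (Ff b x) (Icc (0:ℝ) 1) := by
  have hbase : ∀ y ∈ Icc (0:ℝ) 1, 1 - x * y ≠ 0 := by
    intro y hy
    have : x * y ≤ x := by nlinarith [hy.1, hy.2]
    have : 0 < 1 - x * y := by linarith
    exact ne_of_gt this
  apply ContinuousOn.add
  apply ContinuousOn.sub
  · exact ContinuousOn.rpow_const (by fun_prop) (fun y hy => Or.inl (hbase y hy))
  · fun_prop
  · fun_prop

lemma hnz (x : ℝ) (hx0 : 0 < x) (hx1 : x < 1) :
    ∀ y ∈ Icc (0:ℝ) 1, 1 - x * y ≠ 0 := by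
  intro y hy
  have : x * y ≤ x := by nlinarith [hy.1, hy.2]
  have : 0 < 1 - x * y := by linarith
  exact ne_of_gt this

/-- If `Ff''` is nonpositive on the interior, `Ff ≥ 0` on `[0,1]`. -/
lemma Ff_nonneg_of (b x : ℝ) (hx0 : 0 < x) (hx1 : x < 1)
    (h2 : ∀ y ∈ Ioo (0:ℝ) 1, Ff'' b x y ≤ 0) :
    ∀ y ∈ Icc (0:ℝ) 1, 0 ≤ Ff b x y := by
  have hconc : ConcaveOn ℝ (Icc (0:ℝ) 1) (Ff b x) := by
    apply concaveOn_of_hasDerivWithinAt2_nonpos (f' := Ff' b x) (f'' := Ff'' b x)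
      (convex_Icc 0 1) (Ff_cont b x hx0 hx1)
    · intro y hy
      rw [interior_Icc] at hy
      exact (hdFf b x y (hnz x hx0 hx1 y (Ioo_subset_Icc_self hy))).hasDerivWithinAt
    · intro y hy
      rw [interior_Icc] at hy
      exact (hdFf' b x y (hnz x hx0 hx1 y (Ioo_subset_Icc_self hy))).hasDerivWithinAt
    · intro y hy
      rw [interior_Icc] at hy
      exact h2 y hy
  intro y hy
  have h := hconc.2 (left_mem_Icc.2 zero_le_one) (right_mem_Icc.2 zero_le_one)
    (by linarith [hy.2] : (0:ℝ) ≤ 1 - y) hy.1 (by ring)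
  simp only [smul_eq_mul, mul_zero, mul_one, zero_add, Ff_zero, Ff_one] at h
  simpa using h

lemma Ff_nonpos_of (b x : ℝ) (hx0 : 0 < x) (hx1 : x < 1)
    (h2 : ∀ y ∈ Ioo (0:ℝ) 1, 0 ≤ Ff'' b x y) :
    ∀ y ∈ Icc (0:ℝ) 1, Ff b x y ≤ 0 := by
  have hconv : ConvexOn ℝ (Icc (0:ℝ) 1) (Ff b x) := by
    apply convexOn_of_hasDerivWithinAt2_nonneg (f' := Ff' b x) (f'' := Ff'' b x)
      (convex_Icc 0 1) (Ff_cont b x hx0 hx1)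
    · intro y hy
      rw [interior_Icc] at hy
      exact (hdFf b x y (hnz x hx0 hx1 y (Ioo_subset_Icc_self hy))).hasDerivWithinAt
    · intro y hy
      rw [interior_Icc] at hy
      exact (hdFf' b x y (hnz x hx0 hx1 y (Ioo_subset_Icc_self hy))).hasDerivWithinAt
    · intro y hy
      rw [interior_Icc] at hy
      exact h2 y hy
  intro y hy
  have h := hconv.2 (left_mem_Icc.2 zero_le_one) (right_mem_Icc.2 zero_le_one)
    (by linarith [hy.2] : (0:ℝ) ≤ 1 - y) hy.1 (by ring)
  simp only [smul_eq_mul, mul_zero, mul_one, zero_add, Ff_zero, Ff_one] at h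
  simpa using h


lemma mono_int (a : ℝ) (ha : 0 < a) (k : ℕ) :
    ∫ y in (0:ℝ)..1, y ^ (a - 1) * (y : ℝ) ^ k = 1 / (a + k) := by
  have h1 : EqOn (fun y : ℝ => y ^ (a - 1) * (y : ℝ) ^ k)
      (fun y : ℝ => y ^ (a - 1 + k)) (Set.uIcc (0:ℝ) 1) := by
    intro y hy
    rw [Set.uIcc_of_le zero_le_one] at hy
    rcases eq_or_lt_of_le hy.1 with h | h
    · rw [← h]
      rcases Nat.eq_zero_or_pos k with hk | hk
      · subst hk; norm_num
      · have hk1 : (1:ℝ) ≤ k := by exact_mod_cast hk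
        simp only []
        rw [Real.zero_rpow (by linarith : a - 1 + (k:ℝ) ≠ 0), zero_pow hk.ne', mul_zero]
    · simp only []
      rw [← Real.rpow_natCast y k, ← Real.rpow_add h]
  rw [intervalIntegral.integral_congr h1,
    integral_rpow (Or.inl (by have := Nat.cast_nonneg (α := ℝ) k; linarith : (-1:ℝ) < a - 1 + k))]
  have h2 : a - 1 + (k:ℝ) + 1 = a + k := by ring
  rw [h2, Real.one_rpow, Real.zero_rpow (by have := Nat.cast_nonneg (α := ℝ) k; positivity : a + (k:ℝ) ≠ 0)]
  norm_num

lemma int_comb (a : ℝ) (ha : 0 < a) (A B C D : ℝ) :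
    ∫ y in (0:ℝ)..1, y ^ (a - 1) * (A + B * y + C * y ^ 2 + D * y ^ 3)
      = A / a + B / (a + 1) + C / (a + 2) + D / (a + 3) := by
  have hi : ∀ k : ℕ, IntervalIntegrable (fun y : ℝ => y ^ (a - 1) * (y : ℝ) ^ k)
      volume 0 1 := fun k =>
    (intervalIntegral.intervalIntegrable_rpow' (by linarith)).mul_continuousOn
      (Continuous.continuousOn (by continuity))
  have hfe : (fun y : ℝ => y ^ (a - 1) * (A + B * y + C * y ^ 2 + D * y ^ 3))
      = fun y : ℝ => A * (y ^ (a - 1) * (y : ℝ) ^ (0:ℕ))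
        + (B * (y ^ (a - 1) * (y : ℝ) ^ (1:ℕ))
        + (C * (y ^ (a - 1) * (y : ℝ) ^ (2:ℕ)) + D * (y ^ (a - 1) * (y : ℝ) ^ (3:ℕ)))) := by
    funext y; ring
  rw [hfe]
  rw [intervalIntegral.integral_add ((hi 0).const_mul A)
    (((hi 1).const_mul B).add (((hi 2).const_mul C).add ((hi 3).const_mul D)))]
  rw [intervalIntegral.integral_add ((hi 1).const_mul B)
    (((hi 2).const_mul C).add ((hi 3).const_mul D))]
  rw [intervalIntegral.integral_add ((hi 2).const_mul C) ((hi 3).const_mul D)]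
  simp only [intervalIntegral.integral_const_mul]
  rw [mono_int a ha 0, mono_int a ha 1, mono_int a ha 2, mono_int a ha 3]
  push_cast
  ring

lemma Qsplit (a b x : ℝ) (ha : 0 < a) (hx0 : 0 < x) (hx1 : x < 1) :
    Q a b x = (a * (1 - x) ^ (b - 1) + 1) / (a + 1)
        - a * (b - 1) * (b - 2) * x ^ 2 * (a + 5 + 2 * (a + 2) * (1 - x) ^ (b - 3))
          / (6 * (a + 1) * (a + 2) * (a + 3))
      + a * ∫ y in (0:ℝ)..1, y ^ (a - 1) * Ff b x y := by
  have hnz' := hnz x hx0 hx1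
  have hcont_g : ContinuousOn (fun y : ℝ => (1 - x * y) ^ (b - 1)) (Set.uIcc (0:ℝ) 1) :=
    ContinuousOn.rpow_const (by fun_prop)
      (fun y hy => Or.inl (hnz' y (by rwa [Set.uIcc_of_le zero_le_one] at hy)))
  have hg_int : IntervalIntegrable
      (fun y : ℝ => y ^ (a - 1) * (1 - x * y) ^ (b - 1)) volume 0 1 :=
    (intervalIntegral.intervalIntegrable_rpow' (r := a - 1) (by linarith)).mul_continuousOn
      hcont_g
  have hpoly_int : IntervalIntegrable
      (fun y : ℝ => y ^ (a - 1) * ((1:ℝ)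
        + ((1 - x) ^ (b - 1) - 1 - x ^ 2 * (b - 1) * (b - 2) * (2 + (1 - x) ^ (b - 3)) / 6) * y
        + (x ^ 2 * (b - 1) * (b - 2) / 2) * y ^ 2
        + (-(x ^ 2 * (b - 1) * (b - 2) * (1 - (1 - x) ^ (b - 3)) / 6)) * y ^ 3)) volume 0 1 :=
    (intervalIntegral.intervalIntegrable_rpow' (r := a - 1) (by linarith)).mul_continuousOn
      (Continuous.continuousOn (by continuity))
  have hfe : ∀ y : ℝ, y ^ (a - 1) * Ff b x y
      = y ^ (a - 1) * (1 - x * y) ^ (b - 1) - y ^ (a - 1) * ((1:ℝ)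
        + ((1 - x) ^ (b - 1) - 1 - x ^ 2 * (b - 1) * (b - 2) * (2 + (1 - x) ^ (b - 3)) / 6) * y
        + (x ^ 2 * (b - 1) * (b - 2) / 2) * y ^ 2
        + (-(x ^ 2 * (b - 1) * (b - 2) * (1 - (1 - x) ^ (b - 3)) / 6)) * y ^ 3) := by
    intro y; simp only [Ff]; ring
  simp only [hfe]
  rw [intervalIntegral.integral_sub hg_int hpoly_int, int_comb a ha]
  rw [Q]
  have h1 : a + 1 ≠ 0 := by linarith
  have h2 : a + 2 ≠ 0 := by linarith
  have h3 : a + 3 ≠ 0 := by linarith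
  have h0 : a ≠ 0 := ne_of_gt ha
  field_simp
  ring

theorem beta_Q5_bounds (a b : ℝ) (ha : 0 < a) (hb : 0 < b)
    (x : ℝ) (hx : x ∈ Set.Ioo (0:ℝ) 1) :
    ((b ≤ 1 ∨ (2 ≤ b ∧ b ≤ 3) ∨ 4 ≤ b) →
      (a * (1 - x) ^ (b - 1) + 1) / (a + 1)
        - a * (b - 1) * (b - 2) * x ^ 2 * (a + 5 + 2 * (a + 2) * (1 - x) ^ (b - 3))
          / (6 * (a + 1) * (a + 2) * (a + 3)) ≤ Q a b x) ∧
    (((1 ≤ b ∧ b ≤ 2) ∨ (3 ≤ b ∧ b ≤ 4)) →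
      Q a b x ≤ (a * (1 - x) ^ (b - 1) + 1) / (a + 1)
        - a * (b - 1) * (b - 2) * x ^ 2 * (a + 5 + 2 * (a + 2) * (1 - x) ^ (b - 3))
          / (6 * (a + 1) * (a + 2) * (a + 3))) := by
  obtain ⟨hx0, hx1⟩ := hx
  rw [Qsplit a b x ha hx0 hx1]
  constructor
  · intro hcase
    have hF : ∀ y ∈ Icc (0:ℝ) 1, 0 ≤ Ff b x y := by
      apply Ff_nonneg_of b x hx0 hx1
      intro y hy
      have hK : 0 ≤ x ^ 2 * (b - 1) * (b - 2) := by
        have hx2 := sq_nonneg x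
        rcases hcase with h | h | h
        · nlinarith [mul_nonneg hx2 (mul_nonneg (neg_nonneg.2 (by linarith : b - 1 ≤ 0))
            (neg_nonneg.2 (by linarith : b - 2 ≤ 0)))]
        · nlinarith [mul_nonneg hx2 (mul_nonneg (by linarith : (0:ℝ) ≤ b - 1)
            (by linarith : (0:ℝ) ≤ b - 2))]
        · nlinarith [mul_nonneg hx2 (mul_nonneg (by linarith : (0:ℝ) ≤ b - 1)
            (by linarith : (0:ℝ) ≤ b - 2))]
      have hle : (1 - x * y) ^ (b - 3) ≤ (1 - y) + y * (1 - x) ^ (b - 3) := by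
        apply interp_le _ hx0 hx1 hy.1.le hy.2.le
        rcases hcase with h | h | h
        · left; linarith
        · left; linarith
        · right; linarith
      simp only [Ff'']
      nlinarith [mul_nonneg hK (neg_nonneg.2 (sub_nonpos.2 hle))]
    have : 0 ≤ a * ∫ y in (0:ℝ)..1, y ^ (a - 1) * Ff b x y := by
      apply mul_nonneg ha.le
      apply intervalIntegral.integral_nonneg zero_le_one
      intro u hu
      exact mul_nonneg (Real.rpow_nonneg hu.1 _) (hF u hu)
    linarith
  · intro hcase
    have hF : ∀ y ∈ Icc (0:ℝ) 1, Ff b x y ≤ 0 := by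
      apply Ff_nonpos_of b x hx0 hx1
      intro y hy
      simp only [Ff'']
      rcases hcase with ⟨hb1, hb2⟩ | ⟨hb1, hb2⟩
      · have hK : x ^ 2 * (b - 1) * (b - 2) ≤ 0 := by
          nlinarith [mul_nonneg (sq_nonneg x) (mul_nonneg (by linarith : (0:ℝ) ≤ b - 1)
            (by linarith : (0:ℝ) ≤ 2 - b))]
        have hle : (1 - x * y) ^ (b - 3) ≤ (1 - y) + y * (1 - x) ^ (b - 3) :=
          interp_le (Or.inl (by linarith)) hx0 hx1 hy.1.le hy.2.le
        nlinarith [mul_nonneg (neg_nonneg.2 hK) (neg_nonneg.2 (sub_nonpos.2 hle))]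
      · have hK : 0 ≤ x ^ 2 * (b - 1) * (b - 2) := by
          nlinarith [mul_nonneg (sq_nonneg x) (mul_nonneg (by linarith : (0:ℝ) ≤ b - 1)
            (by linarith : (0:ℝ) ≤ b - 2))]
        have hge : (1 - y) + y * (1 - x) ^ (b - 3) ≤ (1 - x * y) ^ (b - 3) :=
          interp_ge (by linarith) (by linarith) hx0 hx1 hy.1.le hy.2.le
        nlinarith [mul_nonneg hK (sub_nonneg.2 hge)]
    have hInt : (∫ y in (0:ℝ)..1, y ^ (a - 1) * Ff b x y) ≤ 0 := by
      have hneg : 0 ≤ ∫ y in (0:ℝ)..1, -(y ^ (a - 1) * Ff b x y) := by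
        apply intervalIntegral.integral_nonneg zero_le_one
        intro u hu
        have := mul_nonneg (Real.rpow_nonneg hu.1 (a - 1)) (neg_nonneg.2 (hF u hu))
        nlinarith
      rw [intervalIntegral.integral_neg] at hneg
      linarith
    nlinarith [mul_nonneg ha.le (neg_nonneg.2 hInt)]
end

section
/- Let a > 0 and for x > 0 define Q_a^{[1]}(x) := e^{−ax/(a+1)}, Q_a^{[2]}(x) := e^{−x} + (x/(a+1)) e^{−(a+1)x/(a+2)}, Q_a^{[3]}(x) := 1/(a+1)² + (a(a+2)/(a+1)²) e^{−(a+1)x/(a+2)}, Q_a^{[4]}(x) := (a e^{−x} + 1)/(a+1) − (a x²/(2(a+1)(a+2))) e^{−2(a+2)x/(3(a+3))}, Q_a^{[5]}(x) := (a e^{−x} + 1)/(a+1) − a x² (a + 5 + 2(a+2) e^{−x})/(6(a+1)(a+2)(a+3)). Then for all x > 0: (a Γ(a)/x^a) G_a(x) ≥ max{Q_a^{[1]}(x), Q_a^{[2]}(x), Q_a^{[5]}(x)}, (a Γ(a)/x^a) G_a(x) ≤ min{Q_a^{[3]}(x), Q_a^{[4]}(x)}, and, if additionally x < a+1, (a Γ(a)/x^a)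 G_a(x) ≤ (a+1) e^{−x}/(a+1−x). -/
set_option maxHeartbeats 1000000

open MeasureTheory

/-- Distribution function of the gamma distribution with shape `a` and scale 1:
`G_a(x) = Γ(a)⁻¹ ∫₀ˣ t^{a-1} e^{-t} dt`. -/
noncomputable def gammaCDF (a x : ℝ) : ℝ :=
  (Real.Gamma a)⁻¹ * ∫ t in (0:ℝ)..x, t ^ (a - 1) * Real.exp (-t)

namespace GammaBoundsAux

open Set intervalIntegral Real


/-- continuity of rpow with nonneg exponent -/
lemma cont_rpow {p : ℝ} (hp : 0 ≤ p) : Continuous fun s : ℝ => s ^ p :=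
  continuous_iff_continuousAt.2 fun s => Real.continuousAt_rpow_const s p (Or.inr hp)

lemma intg {p : ℝ} (hp : -1 < p) {g : ℝ → ℝ} (hg : Continuous g) :
    IntervalIntegrable (fun s => s ^ p * g s) volume 0 1 :=
  (intervalIntegral.intervalIntegrable_rpow' hp).mul_continuousOn hg.continuousOn

lemma mom {p : ℝ} (hp : -1 < p) : ∫ s in (0:ℝ)..1, s ^ p = 1 / (p + 1) := by
  rw [integral_rpow (Or.inl hp)]
  rw [Real.one_rpow, Real.zero_rpow (by linarith)]
  ring

lemma int_pow_linear {p : ℝ} (hp : -1 < p) (A B : ℝ) :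
    ∫ s in (0:ℝ)..1, s ^ p * (A + B * s) = A / (p + 1) + B / (p + 2) := by
  have h1 : EqOn (fun s : ℝ => s ^ p * (A + B * s))
      (fun s : ℝ => A * s ^ p + B * s ^ (p + 1)) (Set.uIcc (0:ℝ) 1) := by
    intro s hs
    rw [Set.uIcc_of_le (by norm_num : (0:ℝ) ≤ 1)] at hs
    rcases eq_or_lt_of_le hs.1 with h | h
    · subst h
      simp only
      rw [Real.zero_rpow (by linarith : p + 1 ≠ 0)]
      by_cases hp0 : p = 0 <;> simp [hp0, Real.zero_rpow]
    · simp only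
      rw [Real.rpow_add h, Real.rpow_one]
      ring
  rw [intervalIntegral.integral_congr h1,
    intervalIntegral.integral_add
      ((intervalIntegral.intervalIntegrable_rpow' hp).const_mul A)
      ((intervalIntegral.intervalIntegrable_rpow' (by linarith)).const_mul B),
    intervalIntegral.integral_const_mul, intervalIntegral.integral_const_mul,
    mom hp, mom (by linarith : (-1:ℝ) < p + 1)]
  ring

lemma int_pow_quad {p : ℝ} (hp : -1 < p) (A B C : ℝ) :
    ∫ s in (0:ℝ)..1, s ^ p * (A + B * s + C * s ^ (2:ℕ))
      = A / (p + 1) + B / (p + 2) + C / (p + 3) := by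
  have h1 : EqOn (fun s : ℝ => s ^ p * (A + B * s + C * s ^ (2:ℕ)))
      (fun s : ℝ => s ^ p * (A + B * s) + C * s ^ (p + 2)) (Set.uIcc (0:ℝ) 1) := by
    intro s hs
    rw [Set.uIcc_of_le (by norm_num : (0:ℝ) ≤ 1)] at hs
    rcases eq_or_lt_of_le hs.1 with h | h
    · subst h
      simp only
      rw [Real.zero_rpow (by linarith : p + 2 ≠ 0)]
      by_cases hp0 : p = 0 <;> simp [hp0, Real.zero_rpow]
    · simp only
      have : s ^ (p + 2) = s ^ p * s ^ (2:ℕ) := by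
        rw [← Real.rpow_natCast s 2, ← Real.rpow_add h]
        norm_num
      rw [this]; ring
  rw [intervalIntegral.integral_congr h1,
    intervalIntegral.integral_add
      (intg hp (by continuity))
      ((intervalIntegral.intervalIntegrable_rpow' (by linarith)).const_mul C),
    int_pow_linear hp, intervalIntegral.integral_const_mul,
    mom (by linarith : (-1:ℝ) < p + 2)]
  ring



lemma jensen {b : ℝ} (hb : 0 < b) (x : ℝ) :
    Real.exp (-(b * x) / (b + 1)) ≤ b * ∫ s in (0:ℝ)..1, s ^ (b - 1) * Real.exp (-(x * s)) := by
  have hb1 : (0:ℝ) < b + 1 := by linarith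
  set m : ℝ := b / (b + 1) with hm
  set A : ℝ := Real.exp (-(m * x)) * (1 + x * m) with hA
  set B : ℝ := Real.exp (-(m * x)) * (-x) with hB
  have hmono : ∫ s in (0:ℝ)..1, s ^ (b - 1) * (A + B * s)
      ≤ ∫ s in (0:ℝ)..1, s ^ (b - 1) * Real.exp (-(x * s)) := by
    apply intervalIntegral.integral_mono_on (by norm_num)
      (intg (by linarith) (by continuity)) (intg (by linarith) (by continuity))
    intro s hs
    have h1 : (0:ℝ) ≤ s ^ (b - 1) := Real.rpow_nonneg hs.1 _
    have h2 : A + B * s ≤ Real.exp (-(x * s)) := by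
      have h3 := mul_le_mul_of_nonneg_left (Real.add_one_le_exp (-(x * s) + m * x))
        (Real.exp_pos (-(m * x))).le
      rw [← Real.exp_add] at h3
      have h4 : -(m * x) + (-(x * s) + m * x) = -(x * s) := by ring
      rw [h4] at h3
      have h5 : A + B * s = Real.exp (-(m * x)) * (-(x * s) + m * x + 1) := by
        rw [hA, hB]; ring
      linarith [h3]
    exact mul_le_mul_of_nonneg_left h2 h1
  rw [int_pow_linear (by linarith : (-1:ℝ) < b - 1)] at hmono
  have e1 : b - 1 + 1 = b := by ring
  have e2 : b - 1 + 2 = b + 1 := by ring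
  rw [e1, e2] at hmono
  have hfin : Real.exp (-(b * x) / (b + 1)) = b * (A / b + B / (b + 1)) := by
    have h6 : -(b * x) / (b + 1) = -(m * x) := by rw [hm]; ring
    rw [h6, hA, hB, hm]
    field_simp
    ring
  rw [hfin]
  exact mul_le_mul_of_nonneg_left hmono hb.le

lemma chord_exp {x s : ℝ} (hs : s ∈ Icc (0:ℝ) 1) :
    Real.exp (-(x * s)) ≤ 1 + (Real.exp (-x) - 1) * s := by
  have h := convexOn_exp.2 (Set.mem_univ (0:ℝ)) (Set.mem_univ (-x))
    (by linarith [hs.2] : (0:ℝ) ≤ 1 - s) hs.1 (by ring)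
  simp only [smul_eq_mul] at h
  have h2 : (1 - s) * 0 + s * -x = -(x * s) := by ring
  rw [h2] at h
  rw [Real.exp_zero] at h
  nlinarith [h]

lemma chord {b : ℝ} (hb : 0 < b) (x : ℝ) :
    b * ∫ s in (0:ℝ)..1, s ^ (b - 1) * Real.exp (-(x * s))
      ≤ (b * Real.exp (-x) + 1) / (b + 1) := by
  have hb1 : (0:ℝ) < b + 1 := by linarith
  have hmono : ∫ s in (0:ℝ)..1, s ^ (b - 1) * Real.exp (-(x * s))
      ≤ ∫ s in (0:ℝ)..1, s ^ (b - 1) * (1 + (Real.exp (-x) - 1) * s) := by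
    apply intervalIntegral.integral_mono_on (by norm_num)
      (intg (by linarith) (by continuity)) (intg (by linarith) (by continuity))
    intro s hs
    exact mul_le_mul_of_nonneg_left (chord_exp hs) (Real.rpow_nonneg hs.1 _)
  rw [int_pow_linear (by linarith : (-1:ℝ) < b - 1)] at hmono
  have e1 : b - 1 + 1 = b := by ring
  have e2 : b - 1 + 2 = b + 1 := by ring
  rw [e1, e2] at hmono
  have h2 := mul_le_mul_of_nonneg_left hmono hb.le
  apply h2.trans_eq
  field_simp
  ring



lemma contE (x : ℝ) : Continuous fun s : ℝ => Real.exp (-(x * s)) :=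
  Real.continuous_exp.comp ((continuous_const.mul continuous_id).neg)

lemma intgE {p : ℝ} (hp : -1 < p) (x : ℝ) :
    IntervalIntegrable (fun s => s ^ p * Real.exp (-(x * s))) volume 0 1 :=
  intg hp (contE x)

lemma derivE (x s : ℝ) : HasDerivAt (fun s : ℝ => Real.exp (-(x * s)))
    (Real.exp (-(x * s)) * (-x)) s := by
  have h1 : HasDerivAt (fun s : ℝ => -(x * s)) (-x) s := by
    have h0 := ((hasDerivAt_id s).const_mul x).neg
    rw [mul_one] at h0
    exact h0
  exact h1.exp

/-- recursion: `a J(a-1) = e^{-x} + x J(a)` -/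
lemma recur {a : ℝ} (ha : 0 < a) (x : ℝ) :
    a * ∫ s in (0:ℝ)..1, s ^ (a - 1) * Real.exp (-(x * s))
      = Real.exp (-x) + x * ∫ s in (0:ℝ)..1, s ^ a * Real.exp (-(x * s)) := by
  have key : ∫ s in (0:ℝ)..1,
      (a * (s ^ (a - 1) * Real.exp (-(x * s))) - x * (s ^ a * Real.exp (-(x * s))))
      = Real.exp (-x) := by
    have := intervalIntegral.integral_eq_sub_of_hasDeriv_right_of_le (f := fun s => s ^ a * Real.exp (-(x * s)))
      (f' := fun s => a * (s ^ (a - 1) * Real.exp (-(x * s))) - x * (s ^ a * Real.exp (-(x * s))))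
      (by norm_num : (0:ℝ) ≤ 1)
      (((cont_rpow ha.le).mul (by continuity)).continuousOn)
      (fun s hs => by
        have h1 : HasDerivAt (fun s : ℝ => s ^ a) (a * s ^ (a - 1)) s :=
          Real.hasDerivAt_rpow_const (Or.inl hs.1.ne')
        have h2 := (h1.mul (derivE x s))
        have h3 : a * s ^ (a - 1) * Real.exp (-(x * s)) + s ^ a * (Real.exp (-(x * s)) * (-x))
            = a * (s ^ (a - 1) * Real.exp (-(x * s))) - x * (s ^ a * Real.exp (-(x * s))) := by
          ring
        rw [h3] at h2
        exact h2.hasDerivWithinAt)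
      (((intg (by linarith) (by continuity)).const_mul a).sub
        ((intg (by linarith) (by continuity)).const_mul x))
    rw [this]
    rw [Real.one_rpow, Real.zero_rpow ha.ne', mul_zero, zero_mul]
    simp
  rw [intervalIntegral.integral_sub
      ((intg (by linarith) (by continuity)).const_mul a)
      ((intg (by linarith) (by continuity)).const_mul x),
    intervalIntegral.integral_const_mul, intervalIntegral.integral_const_mul] at key
  linarith [key]




/-- `a J(a-1) - (a+1) J(a) = x (J(a) - J(a+1))` packaged as monotonicity for `x ≥ 0`. -/
lemma monoJ {a : ℝ} (ha : 0 < a) {x : ℝ} (hx : 0 ≤ x) :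
    (a + 1) * ∫ s in (0:ℝ)..1, s ^ a * Real.exp (-(x * s))
      ≤ a * ∫ s in (0:ℝ)..1, s ^ (a - 1) * Real.exp (-(x * s)) := by
  have key : ∫ s in (0:ℝ)..1,
      (a * (s ^ (a - 1) * Real.exp (-(x * s))) - (a + 1) * (s ^ a * Real.exp (-(x * s)))
        - x * (s ^ a * Real.exp (-(x * s))) + x * (s ^ (a + 1) * Real.exp (-(x * s)))) = 0 := by
    have := intervalIntegral.integral_eq_sub_of_hasDeriv_right_of_le
      (f := fun s => (s ^ a - s ^ (a + 1)) * Real.exp (-(x * s)))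
      (f' := fun s => a * (s ^ (a - 1) * Real.exp (-(x * s)))
        - (a + 1) * (s ^ a * Real.exp (-(x * s)))
        - x * (s ^ a * Real.exp (-(x * s))) + x * (s ^ (a + 1) * Real.exp (-(x * s))))
      (by norm_num : (0:ℝ) ≤ 1)
      ((((cont_rpow ha.le).sub (cont_rpow (by linarith))).mul (contE x)).continuousOn)
      (fun s hs => by
        have h1 : HasDerivAt (fun s : ℝ => s ^ a) (a * s ^ (a - 1)) s :=
          Real.hasDerivAt_rpow_const (Or.inl hs.1.ne')
        have h1' : HasDerivAt (fun s : ℝ => s ^ (a + 1)) ((a + 1) * s ^ (a + 1 - 1)) s :=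
          Real.hasDerivAt_rpow_const (Or.inl hs.1.ne')
        rw [show a + 1 - 1 = a by ring] at h1'
        have h2 := ((h1.sub h1').mul (derivE x s))
        have h3 : (a * s ^ (a - 1) - (a + 1) * s ^ a) * Real.exp (-(x * s))
              + (s ^ a - s ^ (a + 1)) * (Real.exp (-(x * s)) * (-x))
            = a * (s ^ (a - 1) * Real.exp (-(x * s)))
              - (a + 1) * (s ^ a * Real.exp (-(x * s)))
              - x * (s ^ a * Real.exp (-(x * s))) + x * (s ^ (a + 1) * Real.exp (-(x * s))) := by
          ring
        simp only [Pi.sub_apply] at h2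
        rw [h3] at h2
        exact h2.hasDerivWithinAt)
      (((((intgE (by linarith) x).const_mul a).sub
          ((intgE (by linarith) x).const_mul (a+1))).sub
          ((intgE (by linarith) x).const_mul x)).add
          ((intgE (by linarith) x).const_mul x))
    rw [this]
    rw [Real.one_rpow, Real.zero_rpow ha.ne', Real.zero_rpow (by linarith : a + 1 ≠ 0)]
    simp
  rw [intervalIntegral.integral_add (by
        exact (((intgE (by linarith) x).const_mul a).sub
          ((intgE (by linarith) x).const_mul (a+1))).sub
          ((intgE (by linarith) x).const_mul x))
      ((intgE (by linarith) x).const_mul x),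
    intervalIntegral.integral_sub (by
        exact ((intgE (by linarith) x).const_mul a).sub
          ((intgE (by linarith) x).const_mul (a+1)))
      ((intgE (by linarith) x).const_mul x),
    intervalIntegral.integral_sub ((intgE (by linarith) x).const_mul a)
      ((intgE (by linarith) x).const_mul (a+1)),
    intervalIntegral.integral_const_mul, intervalIntegral.integral_const_mul,
    intervalIntegral.integral_const_mul, intervalIntegral.integral_const_mul] at key
  have hle : ∫ s in (0:ℝ)..1, s ^ (a + 1) * Real.exp (-(x * s))
      ≤ ∫ s in (0:ℝ)..1, s ^ a * Real.exp (-(x * s)) := by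
    apply intervalIntegral.integral_mono_on (by norm_num)
      (intgE (by linarith) x) (intgE (by linarith) x)
    intro s hs
    rcases eq_or_lt_of_le hs.1 with h | h
    · subst h
      simp [Real.zero_rpow ha.ne', Real.zero_rpow (show a + 1 ≠ 0 by linarith)]
    · exact mul_le_mul_of_nonneg_right
        (Real.rpow_le_rpow_of_exponent_ge h hs.2 (by linarith)) (Real.exp_pos _).le
  nlinarith [key, hle]




lemma keyW {a : ℝ} (ha : 0 < a) (x : ℝ) :
    x ^ 2 * ∫ s in (0:ℝ)..1, (s - s ^ (a + 1)) * Real.exp (-(x * s))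
      = a * Real.exp (-x) + 1
        - a * (a + 1) * ∫ s in (0:ℝ)..1, s ^ (a - 1) * Real.exp (-(x * s)) := by
  have hc1 : Continuous fun s : ℝ => (1 - (a + 1) * s ^ a) * Real.exp (-(x * s)) :=
    ((continuous_const.sub (continuous_const.mul (cont_rpow ha.le))).mul (contE x))
  have hc2 : Continuous fun s : ℝ => (s - s ^ (a + 1)) * Real.exp (-(x * s)) :=
    ((continuous_id.sub (cont_rpow (by linarith))).mul (contE x))
  -- step 1
  have K1 : ∫ s in (0:ℝ)..1, (1 - (a + 1) * s ^ a) * Real.exp (-(x * s))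
      = x * ∫ s in (0:ℝ)..1, (s - s ^ (a + 1)) * Real.exp (-(x * s)) := by
    have key := intervalIntegral.integral_eq_sub_of_hasDerivAt (a := (0:ℝ)) (b := 1)
      (f := fun s => (s - s ^ (a + 1)) * Real.exp (-(x * s)))
      (f' := fun s => (1 - (a + 1) * s ^ a) * Real.exp (-(x * s))
        - x * ((s - s ^ (a + 1)) * Real.exp (-(x * s))))
      (fun s _ => by
        have h1' : HasDerivAt (fun s : ℝ => s ^ (a + 1)) ((a + 1) * s ^ (a + 1 - 1)) s :=
          Real.hasDerivAt_rpow_const (Or.inr (by linarith))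
        rw [show a + 1 - 1 = a by ring] at h1'
        have h2 := ((hasDerivAt_id s).sub h1').mul (derivE x s)
        have h3 : (1 - (a + 1) * s ^ a) * Real.exp (-(x * s))
              + (s - s ^ (a + 1)) * (Real.exp (-(x * s)) * (-x))
            = (1 - (a + 1) * s ^ a) * Real.exp (-(x * s))
              - x * ((s - s ^ (a + 1)) * Real.exp (-(x * s))) := by ring
        simp only [Pi.sub_apply, id_eq] at h2
        rw [h3] at h2
        exact h2)
      ((hc1.sub (continuous_const.mul hc2)).intervalIntegrable 0 1)
    rw [intervalIntegral.integral_sub (hc1.intervalIntegrable 0 1)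
      ((hc2.intervalIntegrable 0 1).const_mul x),
      intervalIntegral.integral_const_mul] at key
    rw [Real.one_rpow, Real.zero_rpow (show a + 1 ≠ 0 by linarith)] at key
    simp at key
    linarith [key]
  -- step 2
  have K2 : x * ∫ s in (0:ℝ)..1, (1 - (a + 1) * s ^ a) * Real.exp (-(x * s))
      = a * Real.exp (-x) + 1
        - a * (a + 1) * ∫ s in (0:ℝ)..1, s ^ (a - 1) * Real.exp (-(x * s)) := by
    have key := intervalIntegral.integral_eq_sub_of_hasDeriv_right_of_le
      (f := fun s => (1 - (a + 1) * s ^ a) * Real.exp (-(x * s)))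
      (f' := fun s => (-(a * (a + 1))) * (s ^ (a - 1) * Real.exp (-(x * s)))
        - x * ((1 - (a + 1) * s ^ a) * Real.exp (-(x * s))))
      (by norm_num : (0:ℝ) ≤ 1) hc1.continuousOn
      (fun s hs => by
        have h1 : HasDerivAt (fun s : ℝ => s ^ a) (a * s ^ (a - 1)) s :=
          Real.hasDerivAt_rpow_const (Or.inl hs.1.ne')
        have h2 := ((hasDerivAt_const s (1:ℝ)).sub (h1.const_mul (a + 1))).mul (derivE x s)
        have h3 : (0 - (a + 1) * (a * s ^ (a - 1))) * Real.exp (-(x * s))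
              + (1 - (a + 1) * s ^ a) * (Real.exp (-(x * s)) * (-x))
            = (-(a * (a + 1))) * (s ^ (a - 1) * Real.exp (-(x * s)))
              - x * ((1 - (a + 1) * s ^ a) * Real.exp (-(x * s))) := by ring
        simp only [Pi.sub_apply] at h2
        rw [h3] at h2
        exact h2.hasDerivWithinAt)
      (((intgE (by linarith) x).const_mul _).sub
        ((hc1.intervalIntegrable 0 1).const_mul x))
    rw [intervalIntegral.integral_sub ((intgE (by linarith) x).const_mul _)
      ((hc1.intervalIntegrable 0 1).const_mul x),
      intervalIntegral.integral_const_mul, intervalIntegral.integral_const_mul] at key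
    rw [Real.one_rpow, Real.zero_rpow ha.ne'] at key
    simp at key
    linarith [key]
  calc x ^ 2 * ∫ s in (0:ℝ)..1, (s - s ^ (a + 1)) * Real.exp (-(x * s))
      = x * (x * ∫ s in (0:ℝ)..1, (s - s ^ (a + 1)) * Real.exp (-(x * s))) := by ring
    _ = x * ∫ s in (0:ℝ)..1, (1 - (a + 1) * s ^ a) * Real.exp (-(x * s)) := by rw [K1]
    _ = _ := K2

lemma taylor2 {t : ℝ} (ht : t ≠ 0) :
    ∫ r in (0:ℝ)..1, (1 - r) * Real.exp (t * r) = (Real.exp t - 1 - t) / t ^ 2 := by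
  have key := intervalIntegral.integral_eq_sub_of_hasDerivAt (a := (0:ℝ)) (b := 1)
    (f := fun r => Real.exp (t * r) * ((1 - r) / t + 1 / t ^ 2))
    (f' := fun r => (1 - r) * Real.exp (t * r))
    (fun r _ => by
      have h0 : HasDerivAt (fun r : ℝ => t * r) t r := by
        simpa using (hasDerivAt_id r).const_mul t
      have h1 := h0.exp
      have h2 : HasDerivAt (fun r : ℝ => (1 - r) / t + 1 / t ^ 2) ((0 - 1) / t) r :=
        (((hasDerivAt_const r (1:ℝ)).sub (hasDerivAt_id r)).div_const t).add_const _
      have h3 := h1.mul h2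
      have h4 : Real.exp (t * r) * t * ((1 - r) / t + 1 / t ^ 2)
          + Real.exp (t * r) * ((0 - 1) / t) = (1 - r) * Real.exp (t * r) := by
        field_simp
        ring
      rw [h4] at h3
      exact h3)
    (((continuous_const.sub continuous_id).mul
      (Real.continuous_exp.comp (continuous_const.mul continuous_id))).intervalIntegrable 0 1)
  rw [key]
  simp only [mul_one, mul_zero, Real.exp_zero]
  field_simp
  ring

lemma P3 {u d : ℝ} (hd : 0 < d) (hu : -d ≤ u) :
    Real.exp (-u) ≤ 1 - u + u ^ 2 * ((Real.exp d - 1 - d) / d ^ 2) := by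
  rcases eq_or_ne u 0 with rfl | hu0
  · simp
  · have hT1 := taylor2 (neg_ne_zero.mpr hu0)
    have hT2 := taylor2 hd.ne'
    have hmono : ∫ r in (0:ℝ)..1, (1 - r) * Real.exp (-u * r)
        ≤ ∫ r in (0:ℝ)..1, (1 - r) * Real.exp (d * r) := by
      apply intervalIntegral.integral_mono_on (by norm_num)
        (((continuous_const.sub continuous_id).mul
          (Real.continuous_exp.comp (continuous_const.mul continuous_id))).intervalIntegrable 0 1)
        (((continuous_const.sub continuous_id).mul
          (Real.continuous_exp.comp (continuous_const.mul continuous_id))).intervalIntegrable 0 1)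
      intro r hr
      have h1 : (0:ℝ) ≤ 1 - r := by linarith [hr.2]
      have h2 : Real.exp (-u * r) ≤ Real.exp (d * r) :=
        Real.exp_le_exp.2 (mul_le_mul_of_nonneg_right (by linarith : -u ≤ d) hr.1)
      exact mul_le_mul_of_nonneg_left h2 h1
    rw [hT1, hT2] at hmono
    have hu2 : (0:ℝ) < u ^ 2 := by positivity
    have := mul_le_mul_of_nonneg_left hmono hu2.le
    have hexp : u ^ 2 * ((Real.exp (-u) - 1 - -u) / (-u) ^ 2) = Real.exp (-u) - 1 + u := by
      rw [neg_sq]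
      field_simp
      ring
    rw [hexp] at this
    linarith [this]



lemma q3 {a x : ℝ} (ha : 0 < a) (hx : 0 < x) :
    a * ∫ s in (0:ℝ)..1, s ^ (a - 1) * Real.exp (-(x * s))
      ≤ 1 / (a + 1) ^ 2 + a * (a + 2) / (a + 1) ^ 2 * Real.exp (-((a + 1) * x) / (a + 2)) := by
  have ha1 : (0:ℝ) < a + 1 := by linarith
  have ha2 : (0:ℝ) < a + 2 := by linarith
  set d : ℝ := (a + 1) * x / (a + 2) with hdd
  have hd : 0 < d := by positivity
  set K : ℝ := (Real.exp d - 1 - d) / d ^ 2 with hK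
  set A : ℝ := Real.exp (-d) * (1 + d + d ^ 2 * K) with hA
  set B : ℝ := Real.exp (-d) * (-x - 2 * d * K * x) with hB
  set C : ℝ := Real.exp (-d) * (K * x ^ 2) with hC
  have hmono : ∫ s in (0:ℝ)..1, s ^ (a - 1) * Real.exp (-(x * s))
      ≤ ∫ s in (0:ℝ)..1, s ^ (a - 1) * (A + B * s + C * s ^ (2:ℕ)) := by
    apply intervalIntegral.integral_mono_on (by norm_num)
      (intg (by linarith) (by continuity)) (intg (by linarith) (by continuity))
    intro s hs
    apply mul_le_mul_of_nonneg_left _ (Real.rpow_nonneg hs.1 _)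
    have hu : -d ≤ x * s - d := by nlinarith [mul_nonneg hx.le hs.1]
    have h1 := P3 hd hu
    have h2 : Real.exp (-(x * s)) = Real.exp (-d) * Real.exp (-(x * s - d)) := by
      rw [← Real.exp_add]; ring_nf
    have h3 := mul_le_mul_of_nonneg_left h1 (Real.exp_pos (-d)).le
    rw [← h2] at h3
    have h4 : Real.exp (-d) * (1 - (x * s - d) + (x * s - d) ^ 2 * K)
        = A + B * s + C * s ^ (2:ℕ) := by
      rw [hA, hB, hC]; ring
    rw [← hK, h4] at h3
    exact h3
  rw [int_pow_quad (by linarith : (-1:ℝ) < a - 1)] at hmono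
  rw [show a - 1 + 1 = a by ring, show a - 1 + 2 = a + 1 by ring,
    show a - 1 + 3 = a + 2 by ring] at hmono
  have harg : -((a + 1) * x) / (a + 2) = -d := by rw [hdd]; try ring
  rw [harg]
  have hval : a * (A / a + B / (a + 1) + C / (a + 2))
      = 1 / (a + 1) ^ 2 + a * (a + 2) / (a + 1) ^ 2 * Real.exp (-d) := by
    have hxd : x = d * (a + 2) / (a + 1) := by rw [hdd]; field_simp
    rw [hA, hB, hC, hK, hxd, Real.exp_neg]
    field_simp
    ring
  calc a * ∫ s in (0:ℝ)..1, s ^ (a - 1) * Real.exp (-(x * s))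
      ≤ a * (A / a + B / (a + 1) + C / (a + 2)) := by
        exact mul_le_mul_of_nonneg_left hmono ha.le
    _ = _ := hval



lemma int_phi_linear {a : ℝ} (ha : 0 < a) (A B : ℝ) :
    ∫ s in (0:ℝ)..1, (s - s ^ (a + 1)) * (A + B * s)
      = A / 2 + B / 3 - (A / (a + 2) + B / (a + 3)) := by
  have h1 : EqOn (fun s : ℝ => (s - s ^ (a + 1)) * (A + B * s))
      (fun s : ℝ => s ^ (1:ℝ) * (A + B * s) - s ^ (a + 1) * (A + B * s))
      (Set.uIcc (0:ℝ) 1) := by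
    intro s _
    simp only [Real.rpow_one]
    ring
  rw [intervalIntegral.integral_congr h1,
    intervalIntegral.integral_sub (intg (by norm_num) (by continuity))
      (intg (by linarith) (by continuity)),
    int_pow_linear (by norm_num : (-1:ℝ) < 1),
    int_pow_linear (by linarith : (-1:ℝ) < a + 1)]
  rw [show a + 1 + 1 = a + 2 by ring, show a + 1 + 2 = a + 3 by ring]
  norm_num

/-- tangent line bound for exp -/
lemma tangent (y z : ℝ) : Real.exp z * (1 + (y - z)) ≤ Real.exp y := by
  have h := mul_le_mul_of_nonneg_left (Real.add_one_le_exp (y - z)) (Real.exp_pos z).le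
  rw [← Real.exp_add] at h
  rw [show z + (y - z) = y by ring] at h
  linarith [h]

lemma phi_nonneg {a s : ℝ} (ha : 0 < a) (hs : s ∈ Icc (0:ℝ) 1) :
    0 ≤ s - s ^ (a + 1) := by
  rcases eq_or_lt_of_le hs.1 with h | h
  · subst h
    simp [Real.zero_rpow (show a + 1 ≠ 0 by linarith)]
  · have h2 : s ^ (a + 1) ≤ s ^ (1:ℝ) :=
      Real.rpow_le_rpow_of_exponent_ge h hs.2 (by linarith)
    rw [Real.rpow_one] at h2
    linarith

lemma q4aux {a x : ℝ} (ha : 0 < a) (hx : 0 < x) :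
    a / (2 * (a + 2)) * Real.exp (-(2 * (a + 2) * x) / (3 * (a + 3)))
      ≤ ∫ s in (0:ℝ)..1, (s - s ^ (a + 1)) * Real.exp (-(x * s)) := by
  have ha2 : (0:ℝ) < a + 2 := by linarith
  have ha3 : (0:ℝ) < a + 3 := by linarith
  set β : ℝ := 2 * (a + 2) / (3 * (a + 3)) with hβ
  set A : ℝ := Real.exp (-(β * x)) * (1 + x * β) with hA
  set B : ℝ := Real.exp (-(β * x)) * (-x) with hB
  have hmono : ∫ s in (0:ℝ)..1, (s - s ^ (a + 1)) * (A + B * s)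
      ≤ ∫ s in (0:ℝ)..1, (s - s ^ (a + 1)) * Real.exp (-(x * s)) := by
    apply intervalIntegral.integral_mono_on (by norm_num)
      (((continuous_id.sub (cont_rpow (by linarith))).mul (by continuity)).intervalIntegrable 0 1)
      (((continuous_id.sub (cont_rpow (by linarith))).mul (by continuity)).intervalIntegrable 0 1)
    intro s hs
    apply mul_le_mul_of_nonneg_left _ (phi_nonneg ha hs)
    have h := tangent (-(x * s)) (-(β * x))
    have h2 : A + B * s = Real.exp (-(β * x)) * (1 + (-(x * s) - -(β * x))) := by
      rw [hA, hB]; ring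
    show A + B * s ≤ Real.exp (-(x * s))
    rw [h2]
    exact h
  rw [int_phi_linear ha] at hmono
  apply le_trans _ hmono
  have harg : -(2 * (a + 2) * x) / (3 * (a + 3)) = -(β * x) := by rw [hβ]; ring
  rw [harg, hA, hB, hβ]
  apply le_of_eq
  field_simp
  ring

lemma q5aux {a x : ℝ} (ha : 0 < a) (hx : 0 < x) :
    ∫ s in (0:ℝ)..1, (s - s ^ (a + 1)) * Real.exp (-(x * s))
      ≤ a / (2 * (a + 2)) + (Real.exp (-x) - 1) * (a / (3 * (a + 3))) := by
  have hmono : ∫ s in (0:ℝ)..1, (s - s ^ (a + 1)) * Real.exp (-(x * s))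
      ≤ ∫ s in (0:ℝ)..1, (s - s ^ (a + 1)) * (1 + (Real.exp (-x) - 1) * s) := by
    apply intervalIntegral.integral_mono_on (by norm_num)
      (((continuous_id.sub (cont_rpow (by linarith))).mul (by continuity)).intervalIntegrable 0 1)
      (((continuous_id.sub (cont_rpow (by linarith))).mul (by continuity)).intervalIntegrable 0 1)
    intro s hs
    apply mul_le_mul_of_nonneg_left _ (phi_nonneg ha hs)
    -- chord bound
    have h := convexOn_exp.2 (Set.mem_univ (0:ℝ)) (Set.mem_univ (-x))
      (by linarith [hs.2] : (0:ℝ) ≤ 1 - s) hs.1 (by ring)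
    simp only [smul_eq_mul] at h
    rw [show (1 - s) * 0 + s * -x = -(x * s) by ring, Real.exp_zero] at h
    nlinarith [h]
  rw [int_phi_linear ha] at hmono
  apply hmono.trans_eq
  have ha2 : (a:ℝ) + 2 ≠ 0 := by linarith
  have ha3 : (a:ℝ) + 3 ≠ 0 := by linarith
  field_simp
  ring



lemma relF {a x : ℝ} (ha : 0 < a) (hx : 0 < x) :
    a * Real.Gamma a / x ^ a * gammaCDF a x
      = a * ∫ s in (0:ℝ)..1, s ^ (a - 1) * Real.exp (-(x * s)) := by
  have hsub : (x * ∫ s in (0:ℝ)..1, (x * s) ^ (a - 1) * Real.exp (-(x * s)))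
      = ∫ t in (0:ℝ)..x, t ^ (a - 1) * Real.exp (-t) := by
    have := intervalIntegral.mul_integral_comp_mul_left
      (a := (0:ℝ)) (b := 1) (c := x) (f := fun t => t ^ (a - 1) * Real.exp (-t))
    simpa using this
  have hcongr : ∫ s in (0:ℝ)..1, (x * s) ^ (a - 1) * Real.exp (-(x * s))
      = x ^ (a - 1) * ∫ s in (0:ℝ)..1, s ^ (a - 1) * Real.exp (-(x * s)) := by
    rw [← intervalIntegral.integral_const_mul]
    apply intervalIntegral.integral_congr
    intro s hs
    rw [Set.uIcc_of_le (by norm_num : (0:ℝ) ≤ 1)] at hs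
    simp only
    rw [Real.mul_rpow hx.le hs.1]
    ring
  have hpow : x * x ^ (a - 1) = x ^ a := by
    have h := (Real.rpow_add hx 1 (a - 1)).symm
    rw [Real.rpow_one, show (1:ℝ) + (a - 1) = a by ring] at h
    exact h
  have hint : ∫ t in (0:ℝ)..x, t ^ (a - 1) * Real.exp (-t)
      = x ^ a * ∫ s in (0:ℝ)..1, s ^ (a - 1) * Real.exp (-(x * s)) := by
    rw [← hsub, hcongr, ← mul_assoc, hpow]
  rw [gammaCDF, hint]
  have hG : Real.Gamma a ≠ 0 := (Real.Gamma_pos_of_pos ha).ne'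
  have hxa : x ^ a ≠ 0 := (Real.rpow_pos_of_pos hx a).ne'
  field_simp


end GammaBoundsAux

open GammaBoundsAux in
theorem gamma_lower_upper_bounds (a : ℝ) (ha : 0 < a) (x : ℝ) (hx : 0 < x) :
    (max (Real.exp (-(a * x) / (a + 1)))
        (max (Real.exp (-x) + x / (a + 1) * Real.exp (-((a + 1) * x) / (a + 2)))
          ((a * Real.exp (-x) + 1) / (a + 1)
            - a * x ^ 2 * (a + 5 + 2 * (a + 2) * Real.exp (-x))
              / (6 * (a + 1) * (a + 2) * (a + 3))))
      ≤ a * Real.Gamma a / x ^ a * gammaCDF a x) ∧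
    (a * Real.Gamma a / x ^ a * gammaCDF a x
      ≤ min (1 / (a + 1) ^ 2 + a * (a + 2) / (a + 1) ^ 2 * Real.exp (-((a + 1) * x) / (a + 2)))
          ((a * Real.exp (-x) + 1) / (a + 1)
            - a * x ^ 2 / (2 * (a + 1) * (a + 2))
              * Real.exp (-(2 * (a + 2) * x) / (3 * (a + 3))))) ∧
    (x < a + 1 →
      a * Real.Gamma a / x ^ a * gammaCDF a x ≤ (a + 1) * Real.exp (-x) / (a + 1 - x)) := by
  have ha1 : (0:ℝ) < a + 1 := by linarith
  have ha2 : (0:ℝ) < a + 2 := by linarith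
  have ha3 : (0:ℝ) < a + 3 := by linarith
  have hrel := relF ha hx
  rw [hrel]
  set J1 : ℝ := ∫ s in (0:ℝ)..1, s ^ (a - 1) * Real.exp (-(x * s)) with hJ1
  set J0 : ℝ := ∫ s in (0:ℝ)..1, s ^ a * Real.exp (-(x * s)) with hJ0
  set W : ℝ := ∫ s in (0:ℝ)..1, (s - s ^ (a + 1)) * Real.exp (-(x * s)) with hW
  have hrec := recur ha x
  have hkey := keyW ha x
  rw [← hJ1, ← hJ0] at hrec
  rw [← hJ1, ← hW] at hkey
  refine ⟨?_, ?_, ?_⟩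
  · apply max_le
    · exact jensen ha x
    · apply max_le
      · -- Q2
        have hj := jensen (show (0:ℝ) < a + 1 by linarith) x
        rw [show a + 1 - 1 = a by ring, show a + 1 + 1 = a + 2 by ring, ← hJ0] at hj
        have hx1 : (0:ℝ) ≤ x / (a + 1) := by positivity
        have h2 := mul_le_mul_of_nonneg_left hj hx1
        have h3 : x / (a + 1) * ((a + 1) * J0) = x * J0 := by
          field_simp
        rw [h3] at h2
        linarith
      · -- Q5
        have h5 := q5aux ha hx (a := a) (x := x)
        rw [← hW] at h5
        have h6 := mul_le_mul_of_nonneg_left h5 (sq_nonneg x)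
        have hQ : (a + 1) * ((a * Real.exp (-x) + 1) / (a + 1)
              - a * x ^ 2 * (a + 5 + 2 * (a + 2) * Real.exp (-x))
                / (6 * (a + 1) * (a + 2) * (a + 3)))
            = a * Real.exp (-x) + 1
              - x ^ 2 * (a / (2 * (a + 2)) + (Real.exp (-x) - 1) * (a / (3 * (a + 3)))) := by
          field_simp
          ring
        have h7 : (a + 1) * ((a * Real.exp (-x) + 1) / (a + 1)
              - a * x ^ 2 * (a + 5 + 2 * (a + 2) * Real.exp (-x))
                / (6 * (a + 1) * (a + 2) * (a + 3)))
            ≤ (a + 1) * (a * J1) := by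
          have h8 : a * (a + 1) * J1 = (a + 1) * (a * J1) := by ring
          linarith
        exact le_of_mul_le_mul_left h7 ha1
  · apply le_min
    · exact q3 ha hx
    · -- Q4
      have h4 := q4aux ha hx (a := a) (x := x)
      rw [← hW] at h4
      have h6 := mul_le_mul_of_nonneg_left h4 (sq_nonneg x)
      have hQ : (a + 1) * ((a * Real.exp (-x) + 1) / (a + 1)
            - a * x ^ 2 / (2 * (a + 1) * (a + 2))
              * Real.exp (-(2 * (a + 2) * x) / (3 * (a + 3))))
          = a * Real.exp (-x) + 1
            - x ^ 2 * (a / (2 * (a + 2))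
              * Real.exp (-(2 * (a + 2) * x) / (3 * (a + 3)))) := by
        field_simp
      have h7 : (a + 1) * (a * J1)
          ≤ (a + 1) * ((a * Real.exp (-x) + 1) / (a + 1)
            - a * x ^ 2 / (2 * (a + 1) * (a + 2))
              * Real.exp (-(2 * (a + 2) * x) / (3 * (a + 3)))) := by
        have h8 : a * (a + 1) * J1 = (a + 1) * (a * J1) := by ring
        linarith
      exact le_of_mul_le_mul_left h7 ha1
  · intro hxa
    have hm := monoJ ha hx.le
    rw [le_div_iff₀ (by linarith : (0:ℝ) < a + 1 - x)]
    have h9 := mul_le_mul_of_nonneg_left hm hx.le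
    nlinarith [h9, hrec]
end

section
/- Let a > 0 and for x > 0 define Q̄_a^{[S]}(x) := a^a if x ≤ a and Q̄_a^{[S]}(x) := x^a/(x−a+1) if x > a; Q̄_a^{[1]}(x) := (x+1)^{a−1}; Q̄_a^{[2]}(x) := x^{a−1} + (a−1)(x+1)^{a−2}. Then for all x > 0: if a ∈ (0,1] ∪ [2,3] then Γ(a) e^x Ḡ_a(x) ≥ Q̄_a^{[1]}(x); if a ∈ [1,2] then Γ(a) e^x Ḡ_a(x) ≤ Q̄_a^{[1]}(x); if a ∈ (0,1] ∪ [2,3] then Γ(a) e^x Ḡ_a(x) ≤ Q̄_a^{[2]}(x); if a ∈ [1,2] ∪ [3,∞) then Γ(a) e^x Ḡ_a(x) ≥ Q̄_a^{[2]}(x); and if a ∈ [3,∞) then Γ(a) e^x Ḡ_a(x) ≤ Q̄_a^{[S]}(x). -/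
open MeasureTheory

/-- Survival function of the gamma distribution with shape `a` and scale 1. -/
noncomputable def gammaSurv (a x : ℝ) : ℝ := 1 - gammaCDF a x

section GSBAux
open Set Filter
namespace GSB


noncomputable def I (c x : ℝ) : ℝ := ∫ t in Ioi x, t ^ c * Real.exp (-t)
noncomputable def J (c x : ℝ) : ℝ := ∫ s in Ioi (0:ℝ), (x + s) ^ c * Real.exp (-s)

lemma intOn (c : ℝ) {x : ℝ} (hx : 0 < x) :
    IntegrableOn (fun t : ℝ => t ^ c * Real.exp (-t)) (Ioi x) := by
  refine integrable_of_isBigO_exp_neg one_half_pos ?_ ?_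
  · refine (ContinuousOn.rpow_const (continuousOn_id) fun t ht => Or.inl ?_).mul
      (Real.continuous_exp.comp continuous_neg).continuousOn
    exact (hx.trans_le ht).ne'
  · have h := (Real.Gamma_integrand_isLittleO c).isBigO
    have e : (fun t : ℝ => t ^ c * Real.exp (-t)) = fun t => Real.exp (-t) * t ^ c := by
      funext t; ring
    rw [e]; exact h

lemma I_eq (c x : ℝ) : I c x = Real.exp (-x) * J c x := by
  have hpre : (fun s : ℝ => s + x) ⁻¹' Ioi x = Ioi 0 := by
    ext s; simp [lt_add_iff_pos_left]
  have h := (measurePreserving_add_right (volume : Measure ℝ) x).setIntegral_preimage_emb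
    (MeasurableEquiv.addRight x).measurableEmbedding
    (fun t => t ^ c * Real.exp (-t)) (Ioi x)
  rw [hpre] at h
  rw [I, ← h, J, ← integral_const_mul]
  refine setIntegral_congr_fun measurableSet_Ioi fun s _ => ?_
  rw [add_comm x s, neg_add, Real.exp_add, Real.exp_neg x]
  field_simp

lemma J_eq (c x : ℝ) : J c x = Real.exp x * I c x := by
  rw [I_eq, ← mul_assoc, ← Real.exp_add, add_neg_cancel, Real.exp_zero, one_mul]

lemma J_intOn (c : ℝ) {x : ℝ} (hx : 0 < x) :
    IntegrableOn (fun s : ℝ => (x + s) ^ c * Real.exp (-s)) (Ioi (0:ℝ)) := by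
  have h := intOn c hx
  have h2 := ((measurePreserving_add_right (volume : Measure ℝ) x).integrableOn_comp_preimage
    (MeasurableEquiv.addRight x).measurableEmbedding
    (f := fun t : ℝ => t ^ c * Real.exp (-t)) (s := Ioi x)).mpr h
  have hpre : (fun s : ℝ => s + x) ⁻¹' Ioi x = Ioi 0 := by
    ext s; simp [lt_add_iff_pos_left]
  rw [hpre] at h2
  have h3 := h2.const_mul (Real.exp x)
  refine IntegrableOn.congr_fun h3 (fun s _ => ?_) measurableSet_Ioi
  simp only [Function.comp]
  rw [add_comm x s, neg_add, Real.exp_add, Real.exp_neg x]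
  field_simp

lemma int_exp : ∫ s in Ioi (0:ℝ), Real.exp (-s) = 1 := integral_exp_neg_Ioi_zero

lemma int_s_exp : ∫ s in Ioi (0:ℝ), s * Real.exp (-s) = 1 := by
  have h := Real.Gamma_eq_integral (by norm_num : (0:ℝ) < 2)
  rw [Real.Gamma_two] at h
  refine Eq.trans ?_ h.symm
  refine setIntegral_congr_fun measurableSet_Ioi fun s _ => ?_
  rw [show (2:ℝ) - 1 = 1 by norm_num, Real.rpow_one]; ring

lemma intOn_exp : IntegrableOn (fun s : ℝ => Real.exp (-s)) (Ioi (0:ℝ)) := by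
  have := exp_neg_integrableOn_Ioi 0 (one_pos)
  simpa using this

lemma intOn_s_exp : IntegrableOn (fun s : ℝ => s * Real.exp (-s)) (Ioi (0:ℝ)) := by
  have h := Real.GammaIntegral_convergent (by norm_num : (0:ℝ) < 2)
  refine IntegrableOn.congr_fun h (fun s _ => ?_) measurableSet_Ioi
  rw [show (2:ℝ) - 1 = 1 by norm_num, Real.rpow_one]; ring

/-- Bernoulli's inequality for nonpositive exponents. -/
lemma bernoulli_nonpos {u : ℝ} (hu : -1 < u) {p : ℝ} (hp : p ≤ 0) :
    1 + p * u ≤ (1 + u) ^ p := by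
  have ht : (0:ℝ) < 1 + u := by linarith
  rcases le_or_gt (1 + p * u) 0 with h | h
  · exact h.trans (Real.rpow_pos_of_pos ht p).le
  set q : ℝ := -p with hq
  have hq0 : 0 ≤ q := by simp [hq]; linarith
  have hq1 : (0:ℝ) < q + 1 := by linarith
  have amgm := Real.geom_mean_le_arith_mean2_weighted
    (div_nonneg hq0 hq1.le) (div_nonneg zero_le_one hq1.le) ht.le h.le
    (by field_simp)
  have hsum : q / (q + 1) * (1 + u) + 1 / (q + 1) * (1 + p * u) = 1 := by
    have : q * (1 + u) + (1 + p * u) = q + 1 := by rw [hq]; ring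
    field_simp
    linarith [this]
  rw [hsum] at amgm
  have key : (1 + u) ^ q * (1 + p * u) ≤ 1 := by
    have h2 := Real.rpow_le_rpow (by positivity) amgm hq1.le
    rw [Real.one_rpow, Real.mul_rpow (by positivity) (by positivity)] at h2
    rw [← Real.rpow_mul ht.le, ← Real.rpow_mul h.le] at h2
    rw [div_mul_cancel₀ _ hq1.ne', one_div_mul_cancel hq1.ne', Real.rpow_one] at h2
    exact h2
  have hpow : (0:ℝ) < (1 + u) ^ q := Real.rpow_pos_of_pos ht q
  have : 1 + p * u ≤ ((1 + u) ^ q)⁻¹ := by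
    rw [← one_div]
    exact (le_div_iff₀ hpow).mpr (by nlinarith [key])
  rwa [← Real.rpow_neg ht.le, hq, neg_neg] at this

section tangent
variable {c x s : ℝ}

lemma setup (hx : 0 < x) (hs : 0 ≤ s) :
    (x + s) ^ c = (x + 1) ^ c * (1 + (s - 1) / (x + 1)) ^ c ∧
    (x + 1) ^ c * (1 + c * ((s - 1) / (x + 1))) =
      (x + 1) ^ c + c * (x + 1) ^ (c - 1) * (s - 1) ∧
    -1 < (s - 1) / (x + 1) := by
  have hy : (0:ℝ) < x + 1 := by linarith
  refine ⟨?_, ?_, ?_⟩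
  · have h0 : 1 + (s - 1) / (x + 1) = (x + s) / (x + 1) := by field_simp; ring
    rw [← Real.mul_rpow hy.le (by rw [h0]; exact div_nonneg (by linarith) hy.le)]
    congr 1
    field_simp
    ring
  · have h1 : (x + 1) ^ (c - 1) = (x + 1) ^ c / (x + 1) := by
      rw [Real.rpow_sub hy, Real.rpow_one]
    rw [h1]; field_simp
  · rw [lt_div_iff₀ hy]; linarith

lemma tangent_ge (hx : 0 < x) (hs : 0 ≤ s) (hc : c ≤ 0 ∨ 1 ≤ c) :
    (x + 1) ^ c + c * (x + 1) ^ (c - 1) * (s - 1) ≤ (x + s) ^ c := by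
  obtain ⟨e1, e2, hu⟩ := setup (c := c) hx hs
  rw [e1, ← e2]
  refine mul_le_mul_of_nonneg_left ?_ (Real.rpow_nonneg (by linarith) c)
  rcases hc with hc | hc
  · exact bernoulli_nonpos hu hc
  · exact one_add_mul_self_le_rpow_one_add hu.le hc

lemma tangent_le (hx : 0 < x) (hs : 0 ≤ s) (hc0 : 0 ≤ c) (hc1 : c ≤ 1) :
    (x + s) ^ c ≤ (x + 1) ^ c + c * (x + 1) ^ (c - 1) * (s - 1) := by
  obtain ⟨e1, e2, hu⟩ := setup (c := c) hx hs
  rw [e1, ← e2]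
  refine mul_le_mul_of_nonneg_left ?_ (Real.rpow_nonneg (by linarith) c)
  exact rpow_one_add_le_one_add_mul_self hu.le hc0 hc1

end tangent

section linear
variable (c x : ℝ)

lemma lin_eq : (fun s : ℝ => ((x + 1) ^ c + c * (x + 1) ^ (c - 1) * (s - 1)) * Real.exp (-s)) =
    fun s : ℝ => ((x + 1) ^ c - c * (x + 1) ^ (c - 1)) * Real.exp (-s) +
      c * (x + 1) ^ (c - 1) * (s * Real.exp (-s)) := by
  funext s; ring

lemma lin_intOn : IntegrableOn
    (fun s : ℝ => ((x + 1) ^ c + c * (x + 1) ^ (c - 1) * (s - 1)) * Real.exp (-s)) (Ioi (0:ℝ)) := by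
  rw [lin_eq]
  exact (intOn_exp.const_mul _).add (intOn_s_exp.const_mul _)

lemma lin_integral : ∫ s in Ioi (0:ℝ),
    ((x + 1) ^ c + c * (x + 1) ^ (c - 1) * (s - 1)) * Real.exp (-s) = (x + 1) ^ c := by
  rw [lin_eq, integral_add (intOn_exp.const_mul _) (intOn_s_exp.const_mul _),
    integral_const_mul, integral_const_mul, int_exp, int_s_exp]
  ring

end linear

lemma J_ge {c x : ℝ} (hx : 0 < x) (hc : c ≤ 0 ∨ 1 ≤ c) : (x + 1) ^ c ≤ J c x := by
  rw [← lin_integral c x]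
  exact setIntegral_mono_on (lin_intOn c x) (J_intOn c hx) measurableSet_Ioi
    fun s hs => mul_le_mul_of_nonneg_right (tangent_ge hx (le_of_lt hs) hc) (Real.exp_pos _).le

lemma J_le {c x : ℝ} (hx : 0 < x) (hc0 : 0 ≤ c) (hc1 : c ≤ 1) : J c x ≤ (x + 1) ^ c := by
  rw [← lin_integral c x]
  exact setIntegral_mono_on (J_intOn c hx) (lin_intOn c x) measurableSet_Ioi
    fun s hs => mul_le_mul_of_nonneg_right (tangent_le hx (le_of_lt hs) hc0 hc1) (Real.exp_pos _).le

lemma J_mono {c : ℝ} (hc : 0 ≤ c) {x y : ℝ} (hx : 0 < x) (hxy : x ≤ y) : J c x ≤ J c y :=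
  setIntegral_mono_on (J_intOn c hx) (J_intOn c (hx.trans_le hxy)) measurableSet_Ioi
    fun s hs => mul_le_mul_of_nonneg_right
      (Real.rpow_le_rpow (by linarith [le_of_lt (mem_Ioi.mp hs)]) (by linarith) hc) (Real.exp_pos _).le

lemma I_rec (c : ℝ) {x : ℝ} (hx : 0 < x) :
    I (c + 1) x = x ^ (c + 1) * Real.exp (-x) + (c + 1) * I c x := by
  have key : ∫ t in Ioi x, (t ^ (c + 1) * Real.exp (-t) - (c + 1) * (t ^ c * Real.exp (-t)))
      = 0 - -(x ^ (c + 1) * Real.exp (-x)) := by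
    refine integral_Ioi_of_hasDerivAt_of_tendsto' (f := fun t => -(t ^ (c + 1) * Real.exp (-t)))
      (fun t ht => ?_) ((intOn (c + 1) hx).sub ((intOn c hx).const_mul (c + 1))) ?_
    · have ht0 : (0:ℝ) < t := hx.trans_le ht
      have hd := ((Real.hasDerivAt_rpow_const (p := c + 1) (Or.inl ht0.ne')).mul
        ((hasDerivAt_neg t).exp)).neg
      refine hd.congr_deriv ?_
      rw [add_sub_cancel_right]
      ring
    · have h := (tendsto_rpow_mul_exp_neg_mul_atTop_nhds_zero (c + 1) 1 one_pos).neg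
      rw [neg_zero] at h
      refine h.congr fun t => by rw [neg_one_mul]
  rw [integral_sub (intOn (c + 1) hx) ((intOn c hx).const_mul (c + 1)),
    integral_const_mul] at key
  have : I (c + 1) x - (c + 1) * I c x = x ^ (c + 1) * Real.exp (-x) := by
    rw [I, I]; linarith [key]
  linarith [this]

lemma J_rec (c : ℝ) {x : ℝ} (hx : 0 < x) :
    J (c + 1) x = x ^ (c + 1) + (c + 1) * J c x := by
  have h := I_rec c hx
  rw [I_eq, I_eq] at h
  have hE : Real.exp (-x) ≠ 0 := (Real.exp_pos _).ne'
  have h2 : Real.exp (-x) * J (c + 1) x =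
      Real.exp (-x) * (x ^ (c + 1) + (c + 1) * J c x) := by
    rw [h]; ring
  exact mul_left_cancel₀ hE h2

/-- The key upper bound `I (a-1) x ≤ x^a e^{-x}/(x-a+1)` for `1 ≤ a ≤ x`. -/
lemma I_S {a x : ℝ} (ha : 1 ≤ a) (hax : a ≤ x) :
    I (a - 1) x ≤ x ^ a * Real.exp (-x) / (x - a + 1) := by
  have hx : 0 < x := lt_of_lt_of_le (by linarith) hax
  set P : ℝ → ℝ := fun t =>
    Real.exp (-t) * (t ^ a - (a * t ^ (a - 1) - t ^ a) * (t - a + 1)) / (t - a + 1) ^ 2 with hP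
  have hDpos : ∀ t : ℝ, x ≤ t → (0:ℝ) < t - a + 1 := fun t ht => by linarith
  have hderiv : ∀ t ∈ Ici x, HasDerivAt (fun t => -(t ^ a * Real.exp (-t) / (t - a + 1))) (P t) t := by
    intro t ht
    have ht0 : (0:ℝ) < t := hx.trans_le ht
    have hD := hDpos t ht
    have hnum : HasDerivAt (fun t : ℝ => t ^ a * Real.exp (-t))
        (a * t ^ (a - 1) * Real.exp (-t) + t ^ a * (Real.exp (-t) * -1)) t :=
      (Real.hasDerivAt_rpow_const (p := a) (Or.inl ht0.ne')).mul ((hasDerivAt_neg t).exp)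
    have hden : HasDerivAt (fun t : ℝ => t - a + 1) 1 t := by
      simpa using ((hasDerivAt_id t).sub_const a).add_const 1
    have h := (hnum.div hden hD.ne').neg
    refine h.congr_deriv ?_
    rw [hP]
    field_simp
    ring
  have hPge : ∀ t ∈ Ioi x, t ^ (a - 1) * Real.exp (-t) ≤ P t := by
    intro t ht
    have ht' : x ≤ t := le_of_lt ht
    have ht0 : (0:ℝ) < t := hx.trans ht
    have hD := hDpos t ht'
    have hsplit : t ^ a = t ^ (a - 1) * t := by
      rw [← Real.rpow_add_one ht0.ne' (a - 1), sub_add_cancel]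
    have hnn : (0:ℝ) ≤ t ^ (a - 1) := Real.rpow_nonneg ht0.le _
    simp only [hP]
    rw [le_div_iff₀ (by positivity)]
    have hkey : t ^ (a - 1) * (t - a + 1) ^ 2 ≤ t ^ a - (a * t ^ (a - 1) - t ^ a) * (t - a + 1) := by
      rw [hsplit]
      nlinarith [mul_nonneg hnn (by linarith : (0:ℝ) ≤ a - 1)]
    nlinarith [mul_le_mul_of_nonneg_left hkey (Real.exp_pos (-t)).le]
  have hPpos : ∀ t ∈ Ioi x, 0 ≤ P t := fun t ht =>
    le_trans (mul_nonneg (Real.rpow_nonneg (hx.trans ht).le _) (Real.exp_pos _).le) (hPge t ht)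
  have htend : Tendsto (fun t : ℝ => -(t ^ a * Real.exp (-t) / (t - a + 1))) atTop (nhds 0) := by
    have h1 : Tendsto (fun t : ℝ => t ^ a * Real.exp (-t)) atTop (nhds 0) := by
      have := tendsto_rpow_mul_exp_neg_mul_atTop_nhds_zero a 1 one_pos
      refine this.congr fun t => by rw [neg_one_mul]
    have h2 : Tendsto (fun t : ℝ => (t - a + 1)⁻¹) atTop (nhds 0) := by
      refine Tendsto.inv_tendsto_atTop ?_
      have hl := tendsto_atTop_add_const_right atTop (1 - a) tendsto_id
      exact hl.congr fun t => by simp only [id_eq]; ring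
    have := (h1.mul h2).neg
    rw [zero_mul, neg_zero] at this
    refine this.congr fun t => by rw [div_eq_mul_inv]
  have hint : ∫ t in Ioi x, P t = 0 - -(x ^ a * Real.exp (-x) / (x - a + 1)) :=
    integral_Ioi_of_hasDerivAt_of_nonneg' hderiv hPpos htend
  have hPint : IntegrableOn P (Ioi x) :=
    integrableOn_Ioi_deriv_of_nonneg' hderiv hPpos htend
  have hmono := setIntegral_mono_on (intOn (a - 1) hx) hPint measurableSet_Ioi hPge
  rw [hint] at hmono
  rw [I]
  calc (∫ t in Ioi x, t ^ (a - 1) * Real.exp (-t)) ≤ _ := hmono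
  _ = x ^ a * Real.exp (-x) / (x - a + 1) := by ring


lemma gamma_surv_eq {a x : ℝ} (ha : 0 < a) (hx : 0 < x) :
    Real.Gamma a * gammaSurv a x = I (a - 1) x := by
  have hGint : IntegrableOn (fun t : ℝ => t ^ (a - 1) * Real.exp (-t)) (Ioi (0:ℝ)) :=
    IntegrableOn.congr_fun (Real.GammaIntegral_convergent ha) (fun t _ => by ring)
      measurableSet_Ioi
  have hG : Real.Gamma a = ∫ t in Ioi (0:ℝ), t ^ (a - 1) * Real.exp (-t) := by
    rw [Real.Gamma_eq_integral ha]
    exact setIntegral_congr_fun measurableSet_Ioi fun t _ => by ring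
  have hsplit : (∫ t in Ioi (0:ℝ), t ^ (a - 1) * Real.exp (-t)) =
      (∫ t in Ioc (0:ℝ) x, t ^ (a - 1) * Real.exp (-t)) +
        ∫ t in Ioi x, t ^ (a - 1) * Real.exp (-t) := by
    rw [← setIntegral_union (Ioc_disjoint_Ioi le_rfl) measurableSet_Ioi
      (hGint.mono_set Ioc_subset_Ioi_self) (hGint.mono_set (Ioi_subset_Ioi hx.le)),
      Ioc_union_Ioi_eq_Ioi hx.le]
  have hcdf : gammaCDF a x =
      (Real.Gamma a)⁻¹ * ∫ t in Ioc (0:ℝ) x, t ^ (a - 1) * Real.exp (-t) := by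
    rw [gammaCDF, intervalIntegral.integral_of_le hx.le]
  have hGne : Real.Gamma a ≠ 0 := (Real.Gamma_pos_of_pos ha).ne'
  rw [gammaSurv, hcdf, I, mul_sub, mul_one, ← mul_assoc, mul_inv_cancel₀ hGne, one_mul,
    hG, hsplit]
  ring

end GSB
end GSBAux

theorem gamma_survival_bounds (a : ℝ) (ha : 0 < a) (x : ℝ) (hx : 0 < x) :
    ((a ≤ 1 ∨ (2 ≤ a ∧ a ≤ 3)) →
      (x + 1) ^ (a - 1) ≤ Real.Gamma a * Real.exp x * gammaSurv a x) ∧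
    ((1 ≤ a ∧ a ≤ 2) →
      Real.Gamma a * Real.exp x * gammaSurv a x ≤ (x + 1) ^ (a - 1)) ∧
    ((a ≤ 1 ∨ (2 ≤ a ∧ a ≤ 3)) →
      Real.Gamma a * Real.exp x * gammaSurv a x
        ≤ x ^ (a - 1) + (a - 1) * (x + 1) ^ (a - 2)) ∧
    (((1 ≤ a ∧ a ≤ 2) ∨ 3 ≤ a) →
      x ^ (a - 1) + (a - 1) * (x + 1) ^ (a - 2)
        ≤ Real.Gamma a * Real.exp x * gammaSurv a x) ∧
    (3 ≤ a →
      Real.Gamma a * Real.exp x * gammaSurv a x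
        ≤ if x ≤ a then a ^ a else x ^ a / (x - a + 1)) := by
  have key : Real.Gamma a * Real.exp x * gammaSurv a x = GSB.J (a - 1) x := by
    rw [mul_comm (Real.Gamma a) (Real.exp x), mul_assoc, GSB.gamma_surv_eq ha hx, ← GSB.J_eq]
  have hrec : GSB.J (a - 1) x = x ^ (a - 1) + (a - 1) * GSB.J (a - 2) x := by
    have h := GSB.J_rec (a - 2) hx
    rw [show a - 2 + 1 = a - 1 by ring] at h
    exact h
  refine ⟨?_, ?_, ?_, ?_, ?_⟩
  · intro hcase
    rw [key]
    refine GSB.J_ge hx ?_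
    rcases hcase with h | h
    · exact Or.inl (by linarith)
    · exact Or.inr (by linarith [h.1])
  · rintro ⟨h1, h2⟩
    rw [key]; exact GSB.J_le hx (by linarith) (by linarith)
  · intro hcase
    rw [key, hrec]
    have hb : (a - 1) * GSB.J (a - 2) x ≤ (a - 1) * (x + 1) ^ (a - 2) := by
      rcases hcase with h | ⟨h2, h3⟩
      · exact mul_le_mul_of_nonpos_left (GSB.J_ge hx (Or.inl (by linarith))) (by linarith)
      · exact mul_le_mul_of_nonneg_left (GSB.J_le hx (by linarith) (by linarith)) (by linarith)
    linarith
  · intro hcase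
    rw [key, hrec]
    have hb : (a - 1) * (x + 1) ^ (a - 2) ≤ (a - 1) * GSB.J (a - 2) x := by
      rcases hcase with ⟨h1, h2⟩ | h
      · exact mul_le_mul_of_nonneg_left (GSB.J_ge hx (Or.inl (by linarith))) (by linarith)
      · exact mul_le_mul_of_nonneg_left (GSB.J_ge hx (Or.inr (by linarith))) (by linarith)
    linarith
  · intro h3
    rw [key]
    split_ifs with hxa
    · calc GSB.J (a - 1) x ≤ GSB.J (a - 1) a := GSB.J_mono (by linarith) hx hxa
        _ = Real.exp a * GSB.I (a - 1) a := GSB.J_eq _ _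
        _ ≤ Real.exp a * (a ^ a * Real.exp (-a) / (a - a + 1)) :=
            mul_le_mul_of_nonneg_left (GSB.I_S (by linarith) le_rfl) (Real.exp_pos _).le
        _ = a ^ a := by
            rw [show a - a + 1 = (1:ℝ) by ring, div_one, Real.exp_neg]
            field_simp
    · push_neg at hxa
      calc GSB.J (a - 1) x = Real.exp x * GSB.I (a - 1) x := GSB.J_eq _ _
        _ ≤ Real.exp x * (x ^ a * Real.exp (-x) / (x - a + 1)) :=
            mul_le_mul_of_nonneg_left (GSB.I_S (by linarith) hxa.le) (Real.exp_pos _).le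
        _ = x ^ a / (x - a + 1) := by
            rw [Real.exp_neg]
            field_simp
end

section
/- Let a, b > 0 and q ∈ (0,1). Then for all x ∈ [0,q], B_{a,b}(x) ≤ B_{a,b}(q) (x/q)^a ((1−x)/(1−q))^{c_ℓ} with c_ℓ := a·max(b−1,0)/(a+1); and for all x ∈ [q,1], B̄_{a,b}(x) ≤ B̄_{a,b}(q) (x/q)^{c_r} ((1−x)/(1−q))^b with c_r := b·max(a−1,0)/(b+1). -/
open MeasureTheory

/-- The Beta function `B(a,b) = ∫₀¹ t^{a-1} (1-t)^{b-1} dt`. -/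
noncomputable def betaFn (a b : ℝ) : ℝ :=
  ∫ t in (0:ℝ)..1, t ^ (a - 1) * (1 - t) ^ (b - 1)

/-- Density of the Beta(a,b) distribution. -/
noncomputable def betaPDF (a b t : ℝ) : ℝ :=
  if 0 < t ∧ t < 1 then (betaFn a b)⁻¹ * t ^ (a - 1) * (1 - t) ^ (b - 1) else 0

/-- Distribution function of the Beta(a,b) distribution. -/
noncomputable def betaCDF (a b x : ℝ) : ℝ := ∫ t in Set.Iic x, betaPDF a b t


open Set

lemma integrand_integrableOn {a b : ℝ} (ha : 0 < a) (hb : 0 < b) :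
    IntegrableOn (fun t : ℝ => t ^ (a-1) * (1-t) ^ (b-1)) (Ioo 0 1) := by
  have h := (Complex.betaIntegral_convergent (u := (a:ℂ)) (v := (b:ℂ))
    (by simpa using ha) (by simpa using hb)).norm
  rw [intervalIntegrable_iff_integrableOn_Ioc_of_le (by norm_num),
    integrableOn_Ioc_iff_integrableOn_Ioo] at h
  refine h.congr_fun (fun t ht => ?_) measurableSet_Ioo
  obtain ⟨ht0, ht1⟩ := ht
  beta_reduce
  rw [norm_mul, Complex.norm_cpow_eq_rpow_re_of_pos ht0]
  have h1 : (1 - (t:ℂ)) = ((1 - t : ℝ) : ℂ) := by push_cast; ring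
  rw [h1, Complex.norm_cpow_eq_rpow_re_of_pos (by linarith)]
  norm_num
  
lemma integrand_intervalIntegrable {a b : ℝ} (ha : 0 < a) (hb : 0 < b) :
    IntervalIntegrable (fun t : ℝ => t ^ (a-1) * (1-t) ^ (b-1)) volume 0 1 := by
  rw [intervalIntegrable_iff_integrableOn_Ioc_of_le (by norm_num),
    integrableOn_Ioc_iff_integrableOn_Ioo]
  exact integrand_integrableOn ha hb

lemma betaFn_pos {a b : ℝ} (ha : 0 < a) (hb : 0 < b) : 0 < betaFn a b := by
  apply intervalIntegral.intervalIntegral_pos_of_pos_on (integrand_intervalIntegrable ha hb)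
  · intro x hx
    have h1 := hx.1; have h2 := hx.2
    have h3 : (0:ℝ) < 1 - x := by linarith
    positivity
  · norm_num

lemma measurable_betaPDF (a b : ℝ) : Measurable (betaPDF a b) := by
  unfold betaPDF
  have hs : MeasurableSet {t : ℝ | 0 < t ∧ t < 1} := by
    have : {t : ℝ | 0 < t ∧ t < 1} = Ioo 0 1 := rfl
    rw [this]; exact measurableSet_Ioo
  exact Measurable.ite hs (by fun_prop) measurable_const

lemma betaPDF_nonneg {a b : ℝ} (ha : 0 < a) (hb : 0 < b) (t : ℝ) : 0 ≤ betaPDF a b t := by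
  unfold betaPDF
  split
  · next h =>
    obtain ⟨h1, h2⟩ := h
    have h3 : (0:ℝ) < 1 - t := by linarith
    have h4 : (0:ℝ) ≤ (betaFn a b)⁻¹ := by
      have := betaFn_pos ha hb; positivity
    positivity
  · exact le_refl 0

lemma integrable_betaPDF {a b : ℝ} (ha : 0 < a) (hb : 0 < b) : Integrable (betaPDF a b) := by
  have h2 := integrand_integrableOn ha hb
  have h5 : IntegrableOn (fun t : ℝ => (betaFn a b)⁻¹ * (t ^ (a-1) * (1-t) ^ (b-1)))
      (Ioo 0 1) volume := h2.const_mul _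
  have h3 : IntegrableOn (betaPDF a b) (Ioo 0 1) := by
    refine h5.congr_fun (fun t ht => ?_) measurableSet_Ioo
    simp only [betaPDF, if_pos (show 0 < t ∧ t < 1 from ⟨ht.1, ht.2⟩)]
    ring
  have h4 : betaPDF a b = (Ioo (0:ℝ) 1).indicator (betaPDF a b) := by
    funext t
    by_cases h : t ∈ Ioo (0:ℝ) 1
    · rw [Set.indicator_of_mem h]
    · rw [Set.indicator_of_notMem h]
      simp only [betaPDF, mem_Ioo, not_and_or, not_lt] at h ⊢
      rw [if_neg]; rintro ⟨h1, h2⟩; rcases h with h|h <;> linarith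
  rw [h4]
  exact h3.integrable_indicator measurableSet_Ioo

lemma betaCDF_eq {a b : ℝ} (ha : 0 < a) (hb : 0 < b) (x : ℝ) :
    betaCDF a b x = ∫ t in (0:ℝ)..x, betaPDF a b t := by
  have hzero : ∀ t ≤ (0:ℝ), betaPDF a b t = 0 := by
    intro t ht
    simp only [betaPDF]
    rw [if_neg]; rintro ⟨h1, h2⟩; linarith
  rcases le_or_gt 0 x with hx | hx
  · rw [intervalIntegral.integral_of_le hx]
    unfold betaCDF
    have h0 : ∫ t in Iic (0:ℝ), betaPDF a b t = 0 :=
      setIntegral_eq_zero_of_forall_eq_zero (fun t ht => hzero t ht)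
    rw [← Set.Iic_union_Ioc_eq_Iic hx,
      setIntegral_union (Set.Iic_disjoint_Ioc le_rfl) measurableSet_Ioc
        ((integrable_betaPDF ha hb).integrableOn) ((integrable_betaPDF ha hb).integrableOn),
      h0, zero_add]
  · rw [intervalIntegral.integral_of_ge hx.le]
    unfold betaCDF
    have h0 : ∫ t in Iic x, betaPDF a b t = 0 :=
      setIntegral_eq_zero_of_forall_eq_zero (fun t ht => hzero t (le_trans ht hx.le))
    have h0' : ∫ t in Ioc x 0, betaPDF a b t = 0 :=
      setIntegral_eq_zero_of_forall_eq_zero (fun t ht => hzero t ht.2)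
    rw [h0, h0']
    simp

lemma continuous_betaCDF {a b : ℝ} (ha : 0 < a) (hb : 0 < b) : Continuous (betaCDF a b) := by
  have : betaCDF a b = fun x => ∫ t in (0:ℝ)..x, betaPDF a b t := funext (betaCDF_eq ha hb)
  rw [this]
  exact intervalIntegral.continuous_primitive
    (fun a' b' => (integrable_betaPDF ha hb).intervalIntegrable) 0

lemma betaCDF_zero {a b : ℝ} (ha : 0 < a) (hb : 0 < b) : betaCDF a b 0 = 0 := by
  rw [betaCDF_eq ha hb, intervalIntegral.integral_same]

lemma hasDerivAt_betaCDF {a b : ℝ} (ha : 0 < a) (hb : 0 < b) {x : ℝ} (hx : x ∈ Ioo (0:ℝ) 1) :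
    HasDerivAt (betaCDF a b) (betaPDF a b x) x := by
  have : betaCDF a b = fun u => ∫ t in (0:ℝ)..u, betaPDF a b t := funext (betaCDF_eq ha hb)
  rw [this]
  refine intervalIntegral.integral_hasDerivAt_right
    ((integrable_betaPDF ha hb).intervalIntegrable)
    ((measurable_betaPDF a b).stronglyMeasurable.stronglyMeasurableAtFilter) ?_
  -- ContinuousAt (betaPDF a b) x
  have hev : ∀ᶠ t in nhds x, betaPDF a b t
      = (betaFn a b)⁻¹ * t ^ (a-1) * (1-t) ^ (b-1) := by
    filter_upwards [Ioo_mem_nhds hx.1 hx.2] with t ht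
    simp only [betaPDF, if_pos (show 0 < t ∧ t < 1 from ⟨ht.1, ht.2⟩)]
  refine ContinuousAt.congr ?_ (Filter.EventuallyEq.symm hev)
  have c1 : ContinuousAt (fun t : ℝ => t ^ (a-1)) x :=
    Real.continuousAt_rpow_const _ _ (Or.inl hx.1.ne')
  have c2 : ContinuousAt (fun t : ℝ => (1-t) ^ (b-1)) x := by
    have : ContinuousAt (fun t : ℝ => (1:ℝ) - t) x := (continuous_const.sub continuous_id).continuousAt
    exact (Real.continuousAt_rpow_const _ _ (Or.inl (by simp; linarith [hx.2]))).comp this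
  exact (continuousAt_const.mul c1).mul c2

lemma betaCDF_one {a b : ℝ} (ha : 0 < a) (hb : 0 < b) : betaCDF a b 1 = 1 := by
  rw [betaCDF_eq ha hb, intervalIntegral.integral_of_le (by norm_num : (0:ℝ) ≤ 1),
    integral_Ioc_eq_integral_Ioo]
  have h1 : ∀ t ∈ Ioo (0:ℝ) 1, betaPDF a b t
      = (betaFn a b)⁻¹ * (t ^ (a-1) * (1-t) ^ (b-1)) := by
    intro t ht
    simp only [betaPDF, if_pos (show 0 < t ∧ t < 1 from ⟨ht.1, ht.2⟩)]
    ring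
  rw [setIntegral_congr_fun measurableSet_Ioo h1, integral_const_mul]
  have h2 : ∫ t in Ioo (0:ℝ) 1, t ^ (a-1) * (1-t) ^ (b-1) = betaFn a b := by
    rw [betaFn, intervalIntegral.integral_of_le (by norm_num : (0:ℝ) ≤ 1),
      integral_Ioc_eq_integral_Ioo]
  rw [h2, inv_mul_cancel₀ (betaFn_pos ha hb).ne']

lemma betaFn_symm (a b : ℝ) : betaFn b a = betaFn a b := by
  have := intervalIntegral.integral_comp_sub_left
    (a := 0) (b := 1) (fun t : ℝ => t ^ (a-1) * (1-t) ^ (b-1)) 1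
  simp only [sub_self, sub_zero] at this
  rw [betaFn, betaFn, ← this]
  congr 1
  funext t
  rw [sub_sub_cancel]
  ring

lemma betaPDF_symm (a b t : ℝ) : betaPDF b a (1 - t) = betaPDF a b t := by
  simp only [betaPDF, betaFn_symm a b]
  have hiff : (0 < 1 - t ∧ 1 - t < 1) ↔ (0 < t ∧ t < 1) := by constructor <;> (rintro ⟨h1,h2⟩; constructor <;> linarith)
  by_cases h : 0 < t ∧ t < 1
  · rw [if_pos (hiff.mpr h), if_pos h]
    have : (1:ℝ) - (1 - t) = t := by ring
    rw [this]; ring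
  · rw [if_neg (fun hh => h (hiff.mp hh)), if_neg h]

lemma betaCDF_symm {a b : ℝ} (ha : 0 < a) (hb : 0 < b) (x : ℝ) :
    1 - betaCDF a b x = betaCDF b a (1 - x) := by
  have hadd := intervalIntegral.integral_add_adjacent_intervals
    (a := 0) (b := x) (c := 1) (f := betaPDF a b) (μ := volume)
    ((integrable_betaPDF ha hb).intervalIntegrable) ((integrable_betaPDF ha hb).intervalIntegrable)
  have h1 : betaCDF a b x + ∫ t in x..1, betaPDF a b t = 1 := by
    rw [betaCDF_eq ha hb, hadd, ← betaCDF_eq ha hb, betaCDF_one ha hb]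
  have h1' : (1:ℝ) - betaCDF a b x = ∫ t in x..1, betaPDF a b t := by linarith
  rw [h1', betaCDF_eq hb ha]
  have h2 : (fun s : ℝ => betaPDF a b s) = fun s => betaPDF b a (1 - s) := by
    funext s; rw [betaPDF_symm]
  rw [h2, intervalIntegral.integral_comp_sub_left (fun t => betaPDF b a t) 1]
  norm_num

lemma cancel_aux {a C z : ℝ} (ha : a ≠ 0) : a * (C * (z / a)) = C * z := by
  field_simp

lemma cancel_aux2 {a K C z : ℝ} (ha : a ≠ 0) : a * (K * (C * (z / a))) = K * (C * z) := by
  field_simp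

lemma pdf_on_Ioo {a b t : ℝ} (ht : t ∈ Ioo (0:ℝ) 1) :
    betaPDF a b t = (betaFn a b)⁻¹ * t ^ (a-1) * (1-t) ^ (b-1) := by
  simp only [betaPDF, if_pos (show 0 < t ∧ t < 1 from ⟨ht.1, ht.2⟩)]

lemma mul_pdf_eq {a b y : ℝ} (hy : y ∈ Ioo (0:ℝ) 1) :
    y * betaPDF a b y = (betaFn a b)⁻¹ * (1-y) ^ (b-1) * y ^ a := by
  rw [pdf_on_Ioo hy]
  have h : y * y ^ (a-1) = y ^ a := by
    rw [mul_comm, ← Real.rpow_add_one hy.1.ne', sub_add_cancel]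
  calc y * ((betaFn a b)⁻¹ * y ^ (a-1) * (1-y) ^ (b-1))
      = (betaFn a b)⁻¹ * (1-y)^(b-1) * (y * y^(a-1)) := by ring
    _ = (betaFn a b)⁻¹ * (1-y) ^ (b-1) * y ^ a := by rw [h]

lemma aux_integral {a b y : ℝ} (ha : 0 < a) (hy : y ∈ Ioo (0:ℝ) 1) :
    ∫ t in Ioc (0:ℝ) y, (betaFn a b)⁻¹ * (1-y) ^ (b-1) * t ^ (a-1)
      = (betaFn a b)⁻¹ * (1-y) ^ (b-1) * (y ^ a / a) := by
  rw [← intervalIntegral.integral_of_le hy.1.le, intervalIntegral.integral_const_mul,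
    integral_rpow (Or.inl (by linarith))]
  rw [sub_add_cancel, Real.zero_rpow ha.ne', sub_zero]

lemma aux_integrable {a b y : ℝ} (ha : 0 < a) (hy : y ∈ Ioo (0:ℝ) 1) :
    IntegrableOn (fun t : ℝ => (betaFn a b)⁻¹ * (1-y) ^ (b-1) * t ^ (a-1)) (Ioc 0 y) := by
  have h : IntervalIntegrable (fun t : ℝ => t ^ (a-1)) volume 0 y :=
    intervalIntegral.intervalIntegrable_rpow' (by linarith)
  have h2 := h.const_mul ((betaFn a b)⁻¹ * (1-y) ^ (b-1))
  rw [intervalIntegrable_iff_integrableOn_Ioc_of_le hy.1.le] at h2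
  exact h2.congr_fun (fun t _ => by ring) measurableSet_Ioc

lemma cdf_as_setIntegral {a b y : ℝ} (ha : 0 < a) (hb : 0 < b) (hy : 0 ≤ y) :
    betaCDF a b y = ∫ t in Ioc (0:ℝ) y, betaPDF a b t := by
  rw [betaCDF_eq ha hb, intervalIntegral.integral_of_le hy]

lemma key_lower {a b : ℝ} (ha : 0 < a) (hb : 0 < b) (h1b : 1 ≤ b) {y : ℝ}
    (hy : y ∈ Ioo (0:ℝ) 1) : y * betaPDF a b y ≤ a * betaCDF a b y := by
  have hK : (0:ℝ) ≤ (betaFn a b)⁻¹ := by have := betaFn_pos ha hb; positivity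
  have hmono : ∫ t in Ioc (0:ℝ) y, (betaFn a b)⁻¹ * (1-y) ^ (b-1) * t ^ (a-1)
      ≤ ∫ t in Ioc (0:ℝ) y, betaPDF a b t := by
    refine setIntegral_mono_on (aux_integrable ha hy)
      ((integrable_betaPDF ha hb).integrableOn) measurableSet_Ioc (fun t ht => ?_)
    have ht0 := ht.1
    have ht1 : t < 1 := lt_of_le_of_lt ht.2 hy.2
    rw [pdf_on_Ioo ⟨ht0, ht1⟩]
    have hr : (1-y) ^ (b-1) ≤ (1-t) ^ (b-1) :=
      Real.rpow_le_rpow (by linarith [hy.2]) (by linarith [ht.2]) (by linarith)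
    have htp : (0:ℝ) ≤ t ^ (a-1) := Real.rpow_nonneg ht0.le _
    calc (betaFn a b)⁻¹ * (1-y) ^ (b-1) * t ^ (a-1)
        = (betaFn a b)⁻¹ * t ^ (a-1) * (1-y) ^ (b-1) := by ring
      _ ≤ (betaFn a b)⁻¹ * t ^ (a-1) * (1-t) ^ (b-1) := by
          apply mul_le_mul_of_nonneg_left hr (by positivity)
  rw [cdf_as_setIntegral ha hb hy.1.le, mul_pdf_eq hy]
  have := mul_le_mul_of_nonneg_left hmono ha.le
  rw [aux_integral ha hy] at this
  calc (betaFn a b)⁻¹ * (1-y) ^ (b-1) * y ^ a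
      = a * ((betaFn a b)⁻¹ * (1-y) ^ (b-1) * (y ^ a / a)) := by
        rw [mul_assoc ((betaFn a b)⁻¹) _ _, cancel_aux ha.ne', ← mul_assoc]
    _ ≤ a * ∫ t in Ioc (0:ℝ) y, betaPDF a b t := this

lemma key_upper {a b : ℝ} (ha : 0 < a) (hb : 0 < b) (h1b : b ≤ 1) {y : ℝ}
    (hy : y ∈ Ioo (0:ℝ) 1) : a * betaCDF a b y ≤ y * betaPDF a b y := by
  have hK : (0:ℝ) ≤ (betaFn a b)⁻¹ := by have := betaFn_pos ha hb; positivity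
  have hmono : ∫ t in Ioc (0:ℝ) y, betaPDF a b t
      ≤ ∫ t in Ioc (0:ℝ) y, (betaFn a b)⁻¹ * (1-y) ^ (b-1) * t ^ (a-1) := by
    refine setIntegral_mono_on ((integrable_betaPDF ha hb).integrableOn)
      (aux_integrable ha hy) measurableSet_Ioc (fun t ht => ?_)
    have ht0 := ht.1
    have ht1 : t < 1 := lt_of_le_of_lt ht.2 hy.2
    rw [pdf_on_Ioo ⟨ht0, ht1⟩]
    have hr : (1-t) ^ (b-1) ≤ (1-y) ^ (b-1) :=
      Real.rpow_le_rpow_of_nonpos (by linarith [hy.2]) (by linarith [ht.2]) (by linarith)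
    calc (betaFn a b)⁻¹ * t ^ (a-1) * (1-t) ^ (b-1)
        ≤ (betaFn a b)⁻¹ * t ^ (a-1) * (1-y) ^ (b-1) := by
          apply mul_le_mul_of_nonneg_left hr
          have : (0:ℝ) ≤ t ^ (a-1) := Real.rpow_nonneg ht0.le _
          positivity
      _ = (betaFn a b)⁻¹ * (1-y) ^ (b-1) * t ^ (a-1) := by ring
  rw [cdf_as_setIntegral ha hb hy.1.le, mul_pdf_eq hy]
  have := mul_le_mul_of_nonneg_left hmono ha.le
  rw [aux_integral ha hy] at this
  calc a * ∫ t in Ioc (0:ℝ) y, betaPDF a b t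
      ≤ a * ((betaFn a b)⁻¹ * (1-y) ^ (b-1) * (y ^ a / a)) := this
    _ = (betaFn a b)⁻¹ * (1-y) ^ (b-1) * y ^ a := by
        rw [mul_assoc ((betaFn a b)⁻¹) _ _, cancel_aux2 ha.ne', ← mul_assoc]

lemma rpow_split {u p : ℝ} (hu : u ≠ 0) : u ^ p = u ^ (p-1) * u := by
  nth_rewrite 1 [← sub_add_cancel p 1]
  rw [Real.rpow_add_one hu]

lemma mul_mul_pdf_eq {a b u : ℝ} (hu : u ∈ Ioo (0:ℝ) 1) :
    u * (1-u) * betaPDF a b u = (betaFn a b)⁻¹ * (u ^ a * (1-u) ^ b) := by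
  rw [pdf_on_Ioo hu, rpow_split (p := a) hu.1.ne',
    rpow_split (show (1:ℝ) - u ≠ 0 by intro h; have := hu.2; nlinarith) (p := b)]
  ring

lemma G_nonneg {a b : ℝ} (ha : 0 < a) (hb : 0 < b) {y : ℝ} (hy : y ∈ Ioo (0:ℝ) 1) :
    0 ≤ y * (1-y) * betaPDF a b y
      - (a - (a + a * max (b-1) 0 / (a+1)) * y) * betaCDF a b y := by
  set c : ℝ := a * max (b-1) 0 / (a+1) with hc_def
  rcases le_or_gt b 1 with hb1 | hb1
  · -- c = 0
    have hc : c = 0 := by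
      rw [hc_def, max_eq_right (by linarith : b - 1 ≤ 0), mul_zero, zero_div]
    rw [hc]
    have h := key_upper ha hb hb1 hy
    have h1y : (0:ℝ) ≤ 1 - y := by linarith [hy.2]
    nlinarith [betaPDF_nonneg ha hb y, hy.1, hy.2]
  · -- b > 1
    have hb1' : 1 ≤ b := hb1.le
    have hc : c = a * (b-1) / (a+1) := by
      rw [hc_def, max_eq_left (by linarith : (0:ℝ) ≤ b - 1)]
    have ha1 : a + 1 ≠ 0 := by positivity
    set K : ℝ := (betaFn a b)⁻¹ with hK_def
    set G : ℝ → ℝ := fun u => K * (u ^ a * (1-u) ^ b) - (a - (a+c)*u) * betaCDF a b u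
      with hG_def
    have hG0 : G 0 = 0 := by
      simp only [hG_def, betaCDF_zero ha hb, Real.zero_rpow ha.ne']
      ring
    have hderiv : ∀ u ∈ Ioo (0:ℝ) 1,
        HasDerivAt G (((a+b)/(a+1)) * (a * betaCDF a b u - u * betaPDF a b u)) u := by
      intro u hu
      have hu0 : u ≠ 0 := hu.1.ne'
      have hu1 : (1:ℝ) - u ≠ 0 := by intro h; have := hu.2; nlinarith
      have d1 : HasDerivAt (fun u : ℝ => u ^ a) (a * u ^ (a-1)) u :=
        Real.hasDerivAt_rpow_const (Or.inl hu0)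
      have d2 : HasDerivAt (fun u : ℝ => (1-u) ^ b) (-(b * (1-u) ^ (b-1))) u := by
        have h1u : HasDerivAt (fun u : ℝ => 1 - u) (-1) u := by
          simpa using (hasDerivAt_id u).const_sub 1
        have := (Real.hasDerivAt_rpow_const (x := 1-u) (p := b) (Or.inl hu1)).comp u h1u
        exact this.congr_deriv (by ring)
      have d3 : HasDerivAt (fun u : ℝ => K * (u ^ a * (1-u) ^ b))
          (K * (a * u ^ (a-1) * (1-u) ^ b + u ^ a * (-(b * (1-u) ^ (b-1))))) u :=
        (d1.mul d2).const_mul _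
      have d4 : HasDerivAt (fun u : ℝ => a - (a+c)*u) (-(a+c)) u := by
        simpa using ((hasDerivAt_id u).const_mul (a+c)).const_sub a
      have d5 := hasDerivAt_betaCDF ha hb hu
      have d6 := d3.sub (d4.mul d5)
      refine d6.congr_deriv ?_
      rw [pdf_on_Ioo hu, rpow_split (p := a) hu0, rpow_split hu1 (p := b), hc]
      have hBne : betaFn a b ≠ 0 := (betaFn_pos ha hb).ne'
      rw [hK_def]
      field_simp [hK_def]
      ring
    have hcont : ContinuousOn G (Icc 0 y) := by
      apply ContinuousOn.sub
      · exact (continuous_const.mul ((Real.continuous_rpow_const ha.le).mul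
          ((Real.continuous_rpow_const hb.le).comp
            (continuous_const.sub continuous_id)))).continuousOn
      · exact ((continuous_const.sub (continuous_const.mul continuous_id)).mul
          (continuous_betaCDF ha hb)).continuousOn
    have hmono : MonotoneOn G (Icc 0 y) := by
      apply monotoneOn_of_hasDerivWithinAt_nonneg (convex_Icc 0 y) hcont
        (f' := fun u => ((a+b)/(a+1)) * (a * betaCDF a b u - u * betaPDF a b u))
      · intro u hu
        rw [interior_Icc] at hu
        exact (hderiv u ⟨hu.1, lt_trans hu.2 hy.2⟩).hasDerivWithinAt
      · intro u hu
        rw [interior_Icc] at hu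
        have hu' : u ∈ Ioo (0:ℝ) 1 := ⟨hu.1, lt_trans hu.2 hy.2⟩
        have := key_lower ha hb hb1' hu'
        have hq : (0:ℝ) ≤ (a+b)/(a+1) := by positivity
        nlinarith
    have hGy : 0 ≤ G y := by
      rw [← hG0]
      exact hmono (left_mem_Icc.mpr hy.1.le) ⟨hy.1.le, le_refl y⟩ hy.1.le
    rw [hG_def] at hGy
    rw [mul_mul_pdf_eq hy, ← hK_def]
    simpa using hGy

lemma beta_left_bound {a b : ℝ} (ha : 0 < a) (hb : 0 < b) {q : ℝ} (hq : q ∈ Ioo (0:ℝ) 1) :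
    ∀ x ∈ Icc (0:ℝ) q, betaCDF a b x ≤ betaCDF a b q * (x/q) ^ a
      * ((1-x)/(1-q)) ^ (a * max (b-1) 0 / (a+1)) := by
  intro x hx
  have hmax : (0:ℝ) ≤ max (b-1) 0 := le_max_right _ _
  set c : ℝ := a * max (b-1) 0 / (a+1) with hc_def
  have hc0 : (0:ℝ) ≤ c := by positivity
  rcases eq_or_lt_of_le hx.1 with hx0 | hx0
  · rw [← hx0, betaCDF_zero ha hb, zero_div, Real.zero_rpow ha.ne']
    simp
  · have hx1 : x < 1 := lt_of_le_of_lt hx.2 hq.2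
    set h : ℝ → ℝ := fun u => betaCDF a b u * u ^ (-a) * (1-u) ^ (-c) with hh_def
    have hmono : MonotoneOn h (Icc x q) := by
      apply monotoneOn_of_hasDerivWithinAt_nonneg (convex_Icc x q)
        (f' := fun u => u ^ (-a-1) * (1-u) ^ (-c-1)
          * (u * (1-u) * betaPDF a b u - (a - (a + c)*u) * betaCDF a b u))
      · -- continuity
        apply ContinuousOn.mul
        apply ContinuousOn.mul
        · exact (continuous_betaCDF ha hb).continuousOn
        · exact ContinuousOn.rpow_const continuousOn_id
            (fun u hu => Or.inl (ne_of_gt (lt_of_lt_of_le hx0 hu.1)))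
        · exact ContinuousOn.rpow_const (continuous_const.sub continuous_id).continuousOn
            (fun u hu => Or.inl (by
              have : u ≤ q := hu.2
              have : u < 1 := lt_of_le_of_lt this hq.2
              intro hcontra; nlinarith))
      · -- derivative
        intro u hu
        rw [interior_Icc] at hu
        have hu' : u ∈ Ioo (0:ℝ) 1 := ⟨lt_trans hx0 hu.1, lt_trans hu.2 hq.2⟩
        have hu0 : u ≠ 0 := hu'.1.ne'
        have hu1 : (1:ℝ) - u ≠ 0 := by have := hu'.2; intro hcontra; nlinarith
        have d1 : HasDerivAt (fun u : ℝ => u ^ (-a)) (-a * u ^ (-a-1)) u :=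
          Real.hasDerivAt_rpow_const (Or.inl hu0)
        have d2 : HasDerivAt (fun u : ℝ => (1-u) ^ (-c)) (c * (1-u) ^ (-c-1)) u := by
          have h1u : HasDerivAt (fun u : ℝ => 1 - u) (-1) u := by
            simpa using (hasDerivAt_id u).const_sub 1
          have := (Real.hasDerivAt_rpow_const (x := 1-u) (p := -c) (Or.inl hu1)).comp u h1u
          refine this.congr_deriv ?_
          ring
        have d5 := hasDerivAt_betaCDF ha hb hu'
        have dh := (d5.mul d1).mul d2
        refine HasDerivAt.hasDerivWithinAt ?_
        refine dh.congr_deriv ?_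
        simp only [Pi.mul_apply]
        rw [rpow_split (p := -a) hu0, rpow_split (p := -c) hu1]
        ring_nf
      · -- nonneg
        intro u hu
        rw [interior_Icc] at hu
        have hu' : u ∈ Ioo (0:ℝ) 1 := ⟨lt_trans hx0 hu.1, lt_trans hu.2 hq.2⟩
        have h1 : (0:ℝ) ≤ u ^ (-a-1) := Real.rpow_nonneg hu'.1.le _
        have h2 : (0:ℝ) ≤ (1-u) ^ (-c-1) := Real.rpow_nonneg (by linarith [hu'.2]) _
        exact mul_nonneg (mul_nonneg h1 h2) (G_nonneg ha hb hu')
    have hhxq : h x ≤ h q := hmono ⟨le_refl x, hx.2⟩ ⟨hx.2, le_refl q⟩ hx.2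
    -- convert to the target
    have hinv : ∀ u : ℝ, 0 < u → u < 1 → ∀ p : ℝ, u ^ (-p) * u ^ p = 1 := by
      intro u hu0 _ p
      rw [Real.rpow_neg hu0.le]
      exact inv_mul_cancel₀ (Real.rpow_pos_of_pos hu0 p).ne'
    have e1 : betaCDF a b x = h x * (x ^ a * (1-x) ^ c) := by
      rw [hh_def]
      have i1 := hinv x hx0 hx1 a
      have i2 := hinv (1-x) (by linarith) (by linarith) c
      calc betaCDF a b x = betaCDF a b x * (x ^ (-a) * x ^ a) * ((1-x) ^ (-c) * (1-x) ^ c) := by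
            rw [i1, i2]; ring
        _ = betaCDF a b x * x ^ (-a) * (1-x) ^ (-c) * (x ^ a * (1-x) ^ c) := by ring
    have e2 : betaCDF a b q * (x/q) ^ a * ((1-x)/(1-q)) ^ c = h q * (x ^ a * (1-x) ^ c) := by
      rw [hh_def]
      show _ = betaCDF a b q * q ^ (-a) * (1-q) ^ (-c) * (x ^ a * (1-x) ^ c)
      rw [Real.div_rpow hx0.le hq.1.le,
        Real.div_rpow (by linarith : (0:ℝ) ≤ 1-x) (by linarith [hq.2] : (0:ℝ) ≤ 1-q),
        Real.rpow_neg hq.1.le, Real.rpow_neg (by linarith [hq.2] : (0:ℝ) ≤ 1-q)]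
      field_simp
    rw [e1, e2]
    apply mul_le_mul_of_nonneg_right hhxq
    have j1 : (0:ℝ) ≤ x ^ a := Real.rpow_nonneg hx0.le _
    have j2 : (0:ℝ) ≤ (1-x) ^ c := Real.rpow_nonneg (by linarith) _
    positivity

theorem beta_tail_proposition (a b : ℝ) (ha : 0 < a) (hb : 0 < b)
    (q : ℝ) (hq : q ∈ Set.Ioo (0:ℝ) 1) :
    (∀ x ∈ Set.Icc (0:ℝ) q,
      betaCDF a b x ≤ betaCDF a b q * (x / q) ^ a
        * ((1 - x) / (1 - q)) ^ (a * max (b - 1) 0 / (a + 1))) ∧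
    (∀ x ∈ Set.Icc q (1:ℝ),
      1 - betaCDF a b x ≤ (1 - betaCDF a b q) * (x / q) ^ (b * max (a - 1) 0 / (b + 1))
        * ((1 - x) / (1 - q)) ^ b) := by
  constructor
  · exact beta_left_bound ha hb hq
  · intro x hx
    have hq' : 1 - q ∈ Ioo (0:ℝ) 1 := ⟨by linarith [hq.2], by linarith [hq.1]⟩
    have hx' : 1 - x ∈ Icc (0:ℝ) (1-q) := ⟨by linarith [hx.2], by linarith [hx.1]⟩
    have h := beta_left_bound hb ha hq' (1-x) hx'
    rw [sub_sub_cancel, sub_sub_cancel] at h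
    rw [betaCDF_symm ha hb x, betaCDF_symm ha hb q]
    calc betaCDF b a (1-x)
        ≤ betaCDF b a (1-q) * ((1-x)/(1-q)) ^ b * (x/q) ^ (b * max (a-1) 0 / (b+1)) := h
      _ = betaCDF b a (1-q) * (x/q) ^ (b * max (a-1) 0 / (b+1)) * ((1-x)/(1-q)) ^ b := by ring
end
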